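/- arXiv:2604.12045 — 7 statements merged into one kernel-verified Lean document; each statement's English description precedes it below -/
import Mathlib

section
/- Let f : ℝⁿ → ℝ be continuously differentiable, invex (every point where the gradient vanishes is a global minimum), and increasing at infinity (for every x there is a compact set K such that f(z) > f(x) for all z outside K). Then for every c ∈ ℝ, the sublevel set {x : f(x) ≤ c} is connected. -/
open Metric Set Function RealInnerProductSpace

variable {n : ℕ}

local notation "E" => EuclideanSpace ℝ (Fin n)

/-- Cutoff function. -/
noncomputable def cutf (β α t : ℝ) : ℝ := max 0 (min 1 ((t - β) / (α - β)))

lemma cutf_nonneg (β α t : ℝ) : 0 ≤ cutf β α t := le_max_left _ _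
lemma cutf_le_one (β α t : ℝ) : cutf β α t ≤ 1 := max_le (by norm_num) (min_le_left _ _)
lemma cutf_of_le (β α t : ℝ) (h : t ≤ β) (hβα : β < α) : cutf β α t = 0 := by
  have : (t - β) / (α - β) ≤ 0 :=
    div_nonpos_of_nonpos_of_nonneg (by linarith) (by linarith)
  simp [cutf, max_eq_left, min_le_of_right_le this]
lemma cutf_of_ge (β α t : ℝ) (h : α ≤ t) (hβα : β < α) : cutf β α t = 1 := by
  have h1 : (1:ℝ) ≤ (t - β) / (α - β) := (le_div_iff₀ (by linarith)).2 (by linarith)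
  rw [cutf, min_eq_left h1]; norm_num
lemma cutf_pos_imp (β α t : ℝ) (h : 0 < cutf β α t) (hβα : β < α) : β < t := by
  by_contra hc
  rw [cutf_of_le β α t (by linarith) hβα] at h; exact lt_irrefl _ h
lemma cutf_continuous (β α : ℝ) : Continuous (cutf β α) := by
  unfold cutf; fun_prop

/-- Subdivide the segment from `a` to `b` into steps of length at most `δ`. -/
lemma seg_chain {F : Type*} [NormedAddCommGroup F] [NormedSpace ℝ F]
    (a b : F) {δ : ℝ} (hδ : 0 < δ) :
    ∃ (M : ℕ) (p : ℕ → F), p 0 = a ∧ p M = b ∧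
      (∀ i < M, dist (p (i+1)) (p i) ≤ δ) ∧ (∀ i ≤ M, p i ∈ segment ℝ a b) := by
  obtain ⟨M, hM⟩ := exists_nat_gt (‖b - a‖ / δ)
  have hM0 : 0 < M := by
    have h0 : (0:ℝ) ≤ ‖b - a‖ / δ := by positivity
    exact_mod_cast Nat.pos_of_ne_zero (by rintro rfl; simp at hM; linarith)
  have hMR : (0:ℝ) < (M:ℝ) := by exact_mod_cast hM0
  refine ⟨M, fun i => a + (((min i M : ℕ) : ℝ) / (M:ℝ)) • (b - a), by simp, ?_, ?_, ?_⟩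
  · simp [min_self, div_self (ne_of_gt hMR)]
  · intro i hi
    have h1 : min (i+1) M = i + 1 := min_eq_left (by omega)
    have h2 : min i M = i := min_eq_left (by omega)
    rw [dist_eq_norm]
    simp only [h1, h2]
    rw [add_sub_add_left_eq_sub, ← sub_smul, norm_smul]
    have h3 : ((i:ℝ)+1) / (M:ℝ) - (i:ℝ)/(M:ℝ) = 1/(M:ℝ) := by
      field_simp
      ring
    push_cast
    rw [h3]
    have h4 : ‖b - a‖ < M * δ := by
      rw [div_lt_iff₀ hδ] at hM; linarith
    rw [Real.norm_eq_abs, abs_of_pos (by positivity)]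
    rw [div_mul_eq_mul_div, one_mul, div_le_iff₀ hMR]
    linarith
  · intro i _
    rw [segment_eq_image']
    refine ⟨((min i M : ℕ) : ℝ) / (M:ℝ), ⟨by positivity, ?_⟩, rfl⟩
    rw [div_le_one hMR]
    exact_mod_cast min_le_right i M

lemma compact_disjoint_dist {X : Type*} [MetricSpace X] {P Q : Set X}
    (hP : IsCompact P) (hQ : IsCompact Q) (hPne : P.Nonempty) (hQne : Q.Nonempty)
    (hdisj : ∀ x, x ∈ P → x ∈ Q → False) :
    ∃ d > 0, ∀ p ∈ P, ∀ q ∈ Q, d ≤ dist p q := by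
  obtain ⟨a, ha⟩ := hPne
  obtain ⟨b, hb⟩ := hQne
  obtain ⟨⟨p₀,q₀⟩, hpq, hmin⟩ := (hP.prod hQ).exists_isMinOn ⟨(a,b), mk_mem_prod ha hb⟩
    (Continuous.continuousOn (by fun_prop) : ContinuousOn (fun z : X × X => dist z.1 z.2) (P ×ˢ Q))
  refine ⟨dist p₀ q₀, ?_, fun x hx y hy => hmin (mk_mem_prod hx hy)⟩
  rw [gt_iff_lt, dist_pos]
  rintro rfl
  exact hdisj p₀ hpq.1 hpq.2

set_option maxHeartbeats 1000000 in
/-- Chain lemma: if every critical point of `f` has value `≤ c`, and `f a, f b ≤ c`,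
then for any `α > c` and `δ > 0` there is a `δ`-chain from `a` to `b`
inside the sublevel set `{f ≤ α}`. -/
lemma chain_lemma {F : Type*} [NormedAddCommGroup F] [InnerProductSpace ℝ F]
    [CompleteSpace F] [ProperSpace F]
    (f : F → ℝ)
    (hf : ContDiff ℝ 1 f)
    (hinvex : ∀ x, fderiv ℝ f x = 0 → ∀ y, f x ≤ f y)
    (hinc : ∀ x, ∃ K : Set F, IsCompact K ∧ ∀ z ∉ K, f x < f z)
    {a b : F} {c α δ : ℝ}
    (hfa : f a ≤ c) (hfb : f b ≤ c) (hα : c < α) (hδ : 0 < δ) :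
    ∃ (M : ℕ) (p : ℕ → F), p 0 = a ∧ p M = b ∧
      (∀ i < M, dist (p (i+1)) (p i) ≤ δ) ∧ (∀ i ≤ M, f (p i) ≤ α) := by
  have hfc : Continuous f := hf.continuous
  have hfd : Differentiable ℝ f := hf.differentiable one_ne_zero
  -- maximum of f on the segment [a,b]
  have hsegc : IsCompact (segment ℝ a b) := by
    rw [segment_eq_image']
    exact isCompact_Icc.image (by fun_prop)
  obtain ⟨x₀, hx₀seg, hx₀max'⟩ :=
    hsegc.exists_isMaxOn ⟨a, left_mem_segment ℝ a b⟩ hfc.continuousOn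
  obtain ⟨L, hx₀L, hx₀max⟩ : ∃ L : ℝ, f x₀ = L ∧ ∀ z ∈ segment ℝ a b, f z ≤ L :=
    ⟨f x₀, rfl, fun z hz => hx₀max' hz⟩
  have hfaL : f a ≤ L := hx₀max a (left_mem_segment ℝ a b)
  have hfbL : f b ≤ L := hx₀max b (right_mem_segment ℝ a b)
  by_cases hαL : L < α
  · -- the segment already lies below level α
    obtain ⟨M, p, hp0, hpM, hpstep, hpseg⟩ := seg_chain a b hδ
    exact ⟨M, p, hp0, hpM, hpstep, fun i hi => le_of_lt
      (lt_of_le_of_lt (hx₀max _ (hpseg i hi)) hαL)⟩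
  push_neg at hαL
  -- the gradient vector field
  obtain ⟨g, hgcont, hinner⟩ :
      ∃ g : F → F, Continuous g ∧ ∀ x y, fderiv ℝ f x y = (inner ℝ (g x) y : ℝ) :=
    ⟨fun x => (InnerProductSpace.toDual ℝ F).symm (fderiv ℝ f x),
      (InnerProductSpace.toDual ℝ F).symm.continuous.comp (hf.continuous_fderiv one_ne_zero),
      fun x y => (InnerProductSpace.toDual_symm_apply).symm⟩
  have hgne : ∀ x, c < f x → g x ≠ 0 := by
    intro x hx h0
    have hD : fderiv ℝ f x = 0 := by
      ext y
      rw [hinner x y, h0, inner_zero_left, ContinuousLinearMap.zero_apply]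
    exact absurd (le_trans (hinvex x hD a) hfa) (not_le.2 hx)
  have hgsq : ∀ x, fderiv ℝ f x (g x) = ‖g x‖^2 := fun x => by
    rw [hinner x (g x), real_inner_self_eq_norm_sq]
  -- intermediate level β
  obtain ⟨β, hcβ, hβα⟩ : ∃ β : ℝ, c < β ∧ β < α := ⟨(c+α)/2, by linarith, by linarith⟩
  -- compact container
  obtain ⟨K₀, hK₀, hK₀f⟩ := hinc x₀
  have hsubL : {x | f x ≤ L} ⊆ K₀ := by
    intro x hx
    by_contra hxK
    have := hK₀f x hxK
    rw [hx₀L] at this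
    exact absurd hx (not_le.2 this)
  obtain ⟨R, hR0, hRK⟩ : ∃ R : ℝ, 0 ≤ R ∧ K₀ ⊆ closedBall (0:F) R := by
    obtain ⟨R₀, hR₀⟩ := hK₀.isBounded.subset_closedBall 0
    exact ⟨max R₀ 0, le_max_right _ _,
      subset_trans hR₀ (closedBall_subset_closedBall (le_max_left _ _))⟩
  have hFR : {x | f x ≤ L} ⊆ closedBall (0:F) R := subset_trans hsubL hRK
  have hRK1 : closedBall (0:F) R ⊆ closedBall (0:F) (R+1) :=
    closedBall_subset_closedBall (by linarith)
  have hKc : IsCompact (closedBall (0:F) (R+1)) := isCompact_closedBall _ _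
  -- minimum gradient norm ε on the active region
  obtain ⟨ε, hεpos, hεle⟩ :
      ∃ ε : ℝ, 0 < ε ∧ ∀ x, x ∈ closedBall (0:F) (R+1) → β ≤ f x → ε ≤ ‖g x‖ := by
    have hEbc : IsCompact (closedBall (0:F) (R+1) ∩ {x | β ≤ f x}) :=
      hKc.inter_right (isClosed_le continuous_const hfc)
    rcases eq_empty_or_nonempty (closedBall (0:F) (R+1) ∩ {x | β ≤ f x}) with hemp | hne
    · refine ⟨1, one_pos, fun x hx1 hx2 => absurd ?_ (notMem_empty x)⟩
      rw [← hemp]; exact ⟨hx1, hx2⟩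
    · obtain ⟨xε, hxε, hεmin'⟩ := hEbc.exists_isMinOn hne hgcont.norm.continuousOn
      refine ⟨‖g xε‖, ?_, fun x hx1 hx2 => hεmin' (mem_inter hx1 hx2)⟩
      rw [norm_pos_iff]
      exact hgne xε (lt_of_lt_of_le hcβ hxε.2)
  -- maximum gradient norm G on the ball
  obtain ⟨G, hG1, hGbound⟩ :
      ∃ G : ℝ, 1 ≤ G ∧ ∀ x ∈ closedBall (0:F) (R+1), ‖g x‖ ≤ G := by
    obtain ⟨xG, _, hGmax'⟩ := hKc.exists_isMaxOn ⟨0, mem_closedBall_self (by linarith)⟩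
      hgcont.norm.continuousOn
    refine ⟨‖g xG‖ + 1, by linarith [norm_nonneg (g xG)], fun x hx => ?_⟩
    have : ‖g x‖ ≤ ‖g xG‖ := hGmax' hx
    linarith
  have hG0 : (0:ℝ) < G := lt_of_lt_of_le one_pos hG1
  -- uniform continuity modulus of the derivative
  obtain ⟨δ₁, hδ₁pos, hδ₁⟩ :
      ∃ δ₁ : ℝ, 0 < δ₁ ∧ ∀ x ∈ closedBall (0:F) (R+1), ∀ y ∈ closedBall (0:F) (R+1),
        dist x y < δ₁ → ‖fderiv ℝ f x - fderiv ℝ f y‖ ≤ ε/2 := by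
    have hunif : UniformContinuousOn (fderiv ℝ f) (closedBall (0:F) (R+1)) :=
      hKc.uniformContinuousOn_of_continuous (hf.continuous_fderiv one_ne_zero).continuousOn
    rw [Metric.uniformContinuousOn_iff] at hunif
    obtain ⟨δ₁, hδ₁pos, hδ₁⟩ := hunif (ε/2) (by positivity)
    refine ⟨δ₁, hδ₁pos, fun x hx y hy hxy => ?_⟩
    have := hδ₁ x hx y hy hxy
    rw [dist_eq_norm] at this
    exact this.le
  -- step size
  obtain ⟨h, hhpos, hhG1, hhGδ₁⟩ : ∃ h : ℝ, 0 < h ∧ h * G ≤ 1 ∧ h * G < δ₁ := by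
    refine ⟨min (δ₁/(2*G)) (1/G), lt_min (by positivity) (by positivity), ?_, ?_⟩
    · have h1 : min (δ₁/(2*G)) (1/G) ≤ 1/G := min_le_right _ _
      have h2 : min (δ₁/(2*G)) (1/G) * G ≤ (1/G) * G :=
        mul_le_mul_of_nonneg_right h1 hG0.le
      rwa [one_div_mul_cancel (ne_of_gt hG0)] at h2
    · have h1 : min (δ₁/(2*G)) (1/G) ≤ δ₁/(2*G) := min_le_left _ _
      have h2 : min (δ₁/(2*G)) (1/G) * G ≤ (δ₁/(2*G)) * G :=
        mul_le_mul_of_nonneg_right h1 hG0.le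
      have h3 : (δ₁/(2*G)) * G = δ₁/2 := by field_simp
      rw [h3] at h2
      linarith
  -- the descent map
  obtain ⟨T, hTcont, hkey, hTfix⟩ :
      ∃ T : F → F, Continuous T ∧
        (∀ x, f x ≤ L → f (T x) ≤ f x - h * cutf β α (f x) * ‖g x‖ * (ε/2)) ∧
        (∀ z, f z ≤ β → T z = z) := by
    refine ⟨fun x => x + (-(h * cutf β α (f x))) • g x, ?_, ?_, ?_⟩
    · exact continuous_id.add
        (((continuous_const.mul ((cutf_continuous β α).comp hfc)).neg).smul hgcont)
    · intro x hxL
      rcases eq_or_lt_of_le (cutf_nonneg β α (f x)) with hs0 | hs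
      · simp only [← hs0]
        norm_num
      · have hβfx : β < f x := cutf_pos_imp _ _ _ hs hβα
        have hs1 : cutf β α (f x) ≤ 1 := cutf_le_one _ _ _
        have hxR : x ∈ closedBall (0:F) R := hFR hxL
        have hxK : x ∈ closedBall (0:F) (R+1) := hRK1 hxR
        have hgε : ε ≤ ‖g x‖ := hεle x hxK (le_of_lt hβfx)
        have hgG : ‖g x‖ ≤ G := hGbound x hxK
        obtain ⟨s, hsdef, hspos, hsle⟩ : ∃ s : ℝ, cutf β α (f x) = s ∧ 0 < s ∧ s ≤ 1 :=
          ⟨cutf β α (f x), rfl, hs, hs1⟩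
        show f (x + (-(h * cutf β α (f x))) • g x) ≤
          f x - h * cutf β α (f x) * ‖g x‖ * (ε/2)
        rw [hsdef]
        obtain ⟨y, hy⟩ : ∃ y : F, y = x + (-(h * s)) • g x := ⟨_, rfl⟩
        rw [← hy]
        have hyx : y - x = (-(h * s)) • g x := by rw [hy]; abel
        have hnyx : ‖y - x‖ = h * s * ‖g x‖ := by
          rw [hyx, norm_smul, norm_neg, Real.norm_eq_abs, abs_of_pos (by positivity)]
        have hyxG : ‖y - x‖ ≤ h * G := by
          rw [hnyx]
          have h1 : s * ‖g x‖ ≤ 1 * G := mul_le_mul hsle hgG (norm_nonneg _) one_pos.le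
          calc h * s * ‖g x‖ = h * (s * ‖g x‖) := by ring
            _ ≤ h * (1 * G) := mul_le_mul_of_nonneg_left h1 hhpos.le
            _ = h * G := by ring
        have hyxone : ‖y - x‖ ≤ 1 := le_trans hyxG hhG1
        have hsegK : ∀ z ∈ segment ℝ x y,
            z ∈ closedBall (0:F) (R+1) ∧ ‖z - x‖ ≤ ‖y - x‖ := by
          intro z hz
          rw [segment_eq_image'] at hz
          obtain ⟨t, ⟨ht0, ht1⟩, rfl⟩ := hz
          have hxn : ‖x‖ ≤ R := by rwa [mem_closedBall_zero_iff] at hxR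
          have htn : ‖t • (y - x)‖ ≤ ‖y - x‖ := by
            rw [norm_smul, Real.norm_eq_abs, abs_of_nonneg ht0]
            nlinarith [norm_nonneg (y - x)]
          constructor
          · rw [mem_closedBall_zero_iff]
            calc ‖x + t • (y - x)‖ ≤ ‖x‖ + ‖t • (y - x)‖ := norm_add_le _ _
              _ ≤ R + 1 := by linarith
          · rw [add_sub_cancel_left]
            exact htn
        have hder : ∀ z ∈ segment ℝ x y, ‖fderiv ℝ f z - fderiv ℝ f x‖ ≤ ε/2 := by
          intro z hz
          obtain ⟨hzK, hzx⟩ := hsegK z hz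
          refine hδ₁ z hzK x hxK ?_
          rw [dist_eq_norm]
          calc ‖z - x‖ ≤ ‖y - x‖ := hzx
            _ ≤ h * G := hyxG
            _ < δ₁ := hhGδ₁
        have hmvt : ‖f y - f x - (fderiv ℝ f x) (y - x)‖ ≤ ε/2 * ‖y - x‖ :=
          Convex.norm_image_sub_le_of_norm_hasFDerivWithin_le'
            (fun z _ => (hfd z).hasFDerivAt.hasFDerivWithinAt) hder
            (convex_segment x y) (left_mem_segment ℝ x y) (right_mem_segment ℝ x y)
        have hlin : (fderiv ℝ f x) (y - x) = -(h * s) * ‖g x‖^2 := by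
          rw [hyx, map_smul, smul_eq_mul, hgsq]
        have habs : f y - f x - (fderiv ℝ f x) (y - x) ≤ ε/2 * ‖y - x‖ :=
          le_trans (le_abs_self _) (by rwa [Real.norm_eq_abs] at hmvt)
        rw [hlin, hnyx] at habs
        have hfact : 0 ≤ h * s * ‖g x‖ * (‖g x‖ - ε) :=
          mul_nonneg (mul_nonneg (mul_nonneg hhpos.le hspos.le) (norm_nonneg _))
            (sub_nonneg.2 hgε)
        nlinarith [hfact, habs]
    · intro z hz
      have h0 : cutf β α (f z) = 0 := cutf_of_le _ _ _ hz hβα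
      simp [h0]
  have hmono : ∀ x, f x ≤ L → f (T x) ≤ f x := by
    intro x hxL
    have hk := hkey x hxL
    have h0 : 0 ≤ h * cutf β α (f x) * ‖g x‖ * (ε/2) :=
      mul_nonneg (mul_nonneg (mul_nonneg hhpos.le (cutf_nonneg _ _ _)) (norm_nonneg _))
        (by positivity)
    linarith
  obtain ⟨ρ, hρpos, hρdef⟩ : ∃ ρ : ℝ, 0 < ρ ∧ ρ = h * ε * (ε/2) :=
    ⟨h * ε * (ε/2), by positivity, rfl⟩
  have hdec : ∀ x, f x ≤ L → α ≤ f x → f (T x) ≤ f x - ρ := by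
    intro x hxL hxα
    have hcut : cutf β α (f x) = 1 := cutf_of_ge _ _ _ hxα hβα
    have hxK : x ∈ closedBall (0:F) (R+1) := hRK1 (hFR hxL)
    have hgε : ε ≤ ‖g x‖ := hεle x hxK (le_trans hβα.le hxα)
    have hk := hkey x hxL
    rw [hcut] at hk
    have h3 : h * ε ≤ h * ‖g x‖ := mul_le_mul_of_nonneg_left hgε hhpos.le
    have h4 : h * ε * (ε/2) ≤ h * ‖g x‖ * (ε/2) :=
      mul_le_mul_of_nonneg_right h3 (by positivity)
    rw [hρdef]
    have h5 : h * 1 * ‖g x‖ * (ε/2) = h * ‖g x‖ * (ε/2) := by ring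
    rw [h5] at hk
    linarith
  -- number of iterations
  obtain ⟨N, hN⟩ := exists_nat_ge ((L - α)/ρ)
  have hNρ : L - (N:ℝ) * ρ ≤ α := by
    rw [div_le_iff₀ hρpos] at hN
    linarith
  have hiter : ∀ x, f x ≤ L → ∀ k : ℕ, f (T^[k] x) ≤ max α (L - (k:ℝ)*ρ) := by
    intro x hxL k
    induction k with
    | zero => simpa using le_max_of_le_right hxL
    | succ k ih =>
      have hykL : f (T^[k] x) ≤ L := by
        refine le_trans ih (max_le hαL ?_)
        nlinarith [Nat.cast_nonneg (α := ℝ) k]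
      rw [Function.iterate_succ_apply']
      by_cases hyα : α ≤ f (T^[k] x)
      · have hd := hdec _ hykL hyα
        rcases le_total (L - (k:ℝ)*ρ) α with hc1 | hc1
        · have h5 : f (T^[k] x) ≤ α := by rw [max_eq_left hc1] at ih; exact ih
          refine le_max_of_le_left ?_
          linarith
        · have h5 : f (T^[k] x) ≤ L - (k:ℝ)*ρ := by rw [max_eq_right hc1] at ih; exact ih
          refine le_max_of_le_right ?_
          push_cast
          linarith
      · push_neg at hyα
        exact le_max_of_le_left (le_trans (hmono _ hykL) hyα.le)
  have hfinal : ∀ x, f x ≤ L → f (T^[N] x) ≤ α := by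
    intro x hxL
    have := hiter x hxL N
    rwa [max_eq_left (by linarith)] at this
  -- uniform continuity of the iterated map on the compact sublevel set
  have hFsc : IsCompact {x | f x ≤ L} :=
    hK₀.of_isClosed_subset (isClosed_le hfc continuous_const) hsubL
  have hΦcont : Continuous (T^[N]) := hTcont.iterate N
  have hunifΦ : UniformContinuousOn (T^[N]) {x | f x ≤ L} :=
    hFsc.uniformContinuousOn_of_continuous hΦcont.continuousOn
  rw [Metric.uniformContinuousOn_iff] at hunifΦ
  obtain ⟨δ', hδ'pos, hδ'⟩ := hunifΦ δ hδ
  -- initial chain along the segment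
  obtain ⟨M, p, hp0, hpM, hpstep, hpseg⟩ := seg_chain a b (half_pos hδ'pos)
  have hpL : ∀ i ≤ M, f (p i) ≤ L := fun i hi => hx₀max _ (hpseg i hi)
  have hTNfix : ∀ z : F, f z ≤ c → T^[N] z = z :=
    fun z hz => Function.iterate_fixed (hTfix z (le_trans hz hcβ.le)) N
  refine ⟨M, fun i => T^[N] (p i), ?_, ?_, ?_, ?_⟩
  · show T^[N] (p 0) = a
    rw [hp0]; exact hTNfix a hfa
  · show T^[N] (p M) = b
    rw [hpM]; exact hTNfix b hfb
  · intro i hi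
    have h1 : p (i+1) ∈ {x | f x ≤ L} := hpL (i+1) (by omega)
    have h2 : p i ∈ {x | f x ≤ L} := hpL i (by omega)
    have h3 : dist (p (i+1)) (p i) < δ' := lt_of_le_of_lt (hpstep i hi) (by linarith)
    exact (hδ' _ h1 _ h2 h3).le
  · intro i hi
    exact hfinal (p i) (hpL i hi)

set_option maxHeartbeats 1000000 in
/-- Sublevel sets of a C¹ invex function that is increasing at infinity are connected. -/
theorem sublevel_connected_of_invex {n : ℕ}
    (f : EuclideanSpace ℝ (Fin n) → ℝ)
    (hf : ContDiff ℝ 1 f)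
    (hinvex : ∀ x, fderiv ℝ f x = 0 → ∀ y, f x ≤ f y)
    (hinc : ∀ x, ∃ K : Set (EuclideanSpace ℝ (Fin n)),
      IsCompact K ∧ ∀ z ∉ K, f x < f z)
    (c : ℝ) :
    IsPreconnected {x | f x ≤ c} := by
  intro u v hu hv hcov ⟨a, ha⟩ ⟨b, hb⟩
  by_contra hne
  rw [not_nonempty_iff_eq_empty] at hne
  set S : Set (EuclideanSpace ℝ (Fin n)) := {x | f x ≤ c} with hS
  have hfc : Continuous f := hf.continuous
  have hSclosed : IsClosed S := isClosed_le hfc continuous_const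
  have hdisj : ∀ x, x ∈ S → x ∈ u → x ∈ v → False := by
    intro x hx hxu hxv
    have : x ∈ S ∩ (u ∩ v) := ⟨hx, hxu, hxv⟩
    rw [hne] at this; exact this
  by_cases hall : ∀ x, f x ≤ c
  · have hSu : S = univ := eq_univ_of_forall fun x => hall x
    have h2 := isPreconnected_univ (α := EuclideanSpace ℝ (Fin n)) u v hu hv
      (by rw [← hSu]; exact hcov) ⟨a, trivial, ha.2⟩ ⟨b, trivial, hb.2⟩
    obtain ⟨x, -, hxu, hxv⟩ := h2
    exact hdisj x (hall x) hxu hxv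
  push_neg at hall
  obtain ⟨w, hw⟩ := hall
  obtain ⟨Kw, hKw, hKwf⟩ := hinc w
  have hsub : ∀ β : ℝ, β ≤ f w → {x | f x ≤ β} ⊆ Kw := by
    intro β hβ x hx
    by_contra hxK
    exact absurd (le_trans hx hβ) (not_le.2 (hKwf x hxK))
  have hScomp : IsCompact S := hKw.of_isClosed_subset hSclosed (hsub c hw.le)
  -- P and Q : the two compact pieces of S
  set P : Set (EuclideanSpace ℝ (Fin n)) := S ∩ u with hP
  set Q : Set (EuclideanSpace ℝ (Fin n)) := S ∩ v with hQ
  have hPeq : P = S ∩ vᶜ := by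
    ext x
    constructor
    · rintro ⟨hxS, hxu⟩; exact ⟨hxS, fun hxv => hdisj x hxS hxu hxv⟩
    · rintro ⟨hxS, hxv⟩
      rcases hcov hxS with h | h
      · exact ⟨hxS, h⟩
      · exact absurd h hxv
  have hQeq : Q = S ∩ uᶜ := by
    ext x
    constructor
    · rintro ⟨hxS, hxv⟩; exact ⟨hxS, fun hxu => hdisj x hxS hxu hxv⟩
    · rintro ⟨hxS, hxu⟩
      rcases hcov hxS with h | h
      · exact absurd h hxu
      · exact ⟨hxS, h⟩
  have hPc : IsCompact P := by
    rw [hPeq]; exact hScomp.inter_right (hv.isClosed_compl)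
  have hQc : IsCompact Q := by
    rw [hQeq]; exact hScomp.inter_right (hu.isClosed_compl)
  have haP : a ∈ P := ha
  have hbQ : b ∈ Q := hb
  -- positive distance between P and Q
  obtain ⟨d₁, hd₁pos, hdist⟩ := compact_disjoint_dist hPc hQc ⟨a, haP⟩ ⟨b, hbQ⟩
    (fun x hx hx' => hdisj x hx.1 hx.2 hx'.2)
  -- open thickenings
  set U' : Set (EuclideanSpace ℝ (Fin n)) := {x | infDist x P < d₁/4} with hU'
  set V' : Set (EuclideanSpace ℝ (Fin n)) := {x | infDist x Q < d₁/4} with hV'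
  have hPne : P.Nonempty := ⟨a, haP⟩
  have hQne : Q.Nonempty := ⟨b, hbQ⟩
  have hU'V' : ∀ x, x ∈ U' → x ∈ V' → False := by
    intro x hxU hxV
    obtain ⟨p, hp, hdp⟩ := (infDist_lt_iff hPne).1 hxU
    obtain ⟨q, hq, hdq⟩ := (infDist_lt_iff hQne).1 hxV
    have := hdist p hp q hq
    have htri : dist p q ≤ dist x p + dist x q := by
      rw [dist_comm x p]; exact dist_triangle p x q
    linarith
  have hPU' : P ⊆ U' := fun x hx => by
    show infDist x P < d₁/4
    rw [infDist_zero_of_mem hx]; linarith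
  have hQV' : Q ⊆ V' := fun x hx => by
    show infDist x Q < d₁/4
    rw [infDist_zero_of_mem hx]; linarith
  have hU'open : IsOpen U' := isOpen_lt (continuous_infDist_pt P) continuous_const
  have hV'open : IsOpen V' := isOpen_lt (continuous_infDist_pt Q) continuous_const
  -- find a level α > c with {f ≤ α} ⊆ U' ∪ V'
  set F : ℕ → Set (EuclideanSpace ℝ (Fin n)) :=
    fun k => {x | f x ≤ c + (f w - c)/(k+1)} ∩ (U' ∪ V')ᶜ with hF
  have hαle : ∀ k : ℕ, c + (f w - c)/(k+1) ≤ f w := by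
    intro k
    have h1 : (0:ℝ) < (k:ℝ)+1 := by positivity
    have h2 : (f w - c)/((k:ℝ)+1) ≤ (f w - c) := by
      rw [div_le_iff₀ h1]; nlinarith [hw.le]
    linarith
  have hFclosed : ∀ k, IsClosed (F k) :=
    fun k => (isClosed_le hfc continuous_const).inter (hU'open.union hV'open).isClosed_compl
  have hFcomp : ∀ k, IsCompact (F k) := fun k =>
    hKw.of_isClosed_subset (hFclosed k) (fun x hx => hsub _ (hαle k) hx.1)
  have hFnest : ∀ k : ℕ, F (k+1) ⊆ F k := by
    intro k x hx
    have hx1 : f x ≤ c + (f w - c)/((k:ℝ)+1+1) := by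
      have h := hx.1; simp only [mem_setOf_eq] at h; push_cast at h; linarith
    refine ⟨?_, hx.2⟩
    show f x ≤ c + (f w - c)/((k:ℝ)+1)
    refine le_trans hx1 ?_
    have h1 : (0:ℝ) < (k:ℝ)+1 := by positivity
    have h2 : (0:ℝ) < (k:ℝ)+1+1 := by positivity
    have : (f w - c)/((k:ℝ)+1+1) ≤ (f w - c)/((k:ℝ)+1) := by
      apply div_le_div_of_nonneg_left (by linarith) h1 (by linarith)
    linarith
  have hFempty : ∃ k, F k = ∅ := by
    by_contra hcon
    push_neg at hcon
    have hne' : ∀ k, (F k).Nonempty := fun k => hcon k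
    obtain ⟨x, hx⟩ := IsCompact.nonempty_iInter_of_sequence_nonempty_isCompact_isClosed
      F hFnest hne' (hFcomp 0) hFclosed
    simp only [mem_iInter] at hx
    have hxS : x ∈ S := by
      show f x ≤ c
      by_contra hfx
      push_neg at hfx
      obtain ⟨k, hk⟩ := exists_nat_gt ((f w - c)/(f x - c))
      have h1 : (0:ℝ) < f x - c := by linarith
      have h2 : (f w - c)/(f x - c) < (k:ℝ) + 1 := by
        have : (k:ℝ) ≤ (k:ℝ)+1 := by linarith
        linarith
      have h3 : (f w - c)/((k:ℝ)+1) < f x - c := by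
        rw [div_lt_iff₀ (by positivity)]
        rw [div_lt_iff₀ h1] at h2
        linarith [h2]
      have := (hx k).1
      simp only [mem_setOf_eq] at this
      linarith
    have hxUV : x ∈ U' ∪ V' := by
      rcases hcov hxS with h | h
      · exact Or.inl (hPU' ⟨hxS, h⟩)
      · exact Or.inr (hQV' ⟨hxS, h⟩)
    exact (hx 0).2 hxUV
  obtain ⟨k, hk⟩ := hFempty
  set α : ℝ := c + (f w - c)/(k+1) with hαdef
  have hαc : c < α := by
    have : (0:ℝ) < (f w - c)/((k:ℝ)+1) := div_pos (by linarith) (by positivity)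
    rw [hαdef]; push_cast; linarith
  have hcover : ∀ x, f x ≤ α → x ∈ U' ∨ x ∈ V' := by
    intro x hx
    by_contra hcon
    push_neg at hcon
    have : x ∈ F k := ⟨hx, fun h => h.elim hcon.1 hcon.2⟩
    rw [hk] at this; exact this
  -- apply the chain lemma
  obtain ⟨M, p, hp0, hpM, hstep, hlev⟩ :=
    chain_lemma f hf hinvex hinc ha.1 hb.1 hαc (by positivity : (0:ℝ) < d₁/4)
  have hall : ∀ i ≤ M, p i ∈ U' := by
    intro i
    induction i with
    | zero => intro _; rw [hp0]; exact hPU' haP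
    | succ j ih =>
      intro hjM
      have hjM' : j ≤ M := le_trans (Nat.le_succ j) hjM
      have hjU : p j ∈ U' := ih (le_trans (Nat.le_succ j) hjM)
      rcases hcover _ (hlev _ hjM) with h | h
      · exact h
      · exfalso
        obtain ⟨pp, hpp, hdp⟩ := (infDist_lt_iff hPne).1 hjU
        obtain ⟨qq, hqq, hdq⟩ := (infDist_lt_iff hQne).1 h
        have h1 := hdist pp hpp qq hqq
        have h2 := hstep j (by omega)
        have htri : dist pp qq ≤ dist (p j) pp + dist (p (j+1)) (p j) + dist (p (j+1)) qq := by
          calc dist pp qq ≤ dist pp (p (j+1)) + dist (p (j+1)) qq := dist_triangle _ _ _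
            _ ≤ dist pp (p j) + dist (p j) (p (j+1)) + dist (p (j+1)) qq := by
                linarith [dist_triangle pp (p j) (p (j+1))]
            _ = dist (p j) pp + dist (p (j+1)) (p j) + dist (p (j+1)) qq := by
                rw [dist_comm pp (p j), dist_comm (p j) (p (j+1))]
        linarith
  have hbU : b ∈ U' := by rw [← hpM]; exact hall M le_rfl
  exact hU'V' b hbU (hQV' hbQ)
end

section
/- Let f : ℝⁿ → ℝ be continuously differentiable and invex with minimum value f*. If f is increasing at infinity, then the set of global minimizers {x : f(x) = f*} is connected. -/
open Set Metric

local notation "⟪" x ", " y "⟫" => inner (𝕜 := ℝ) x y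

/-- Descent step estimate: moving against the gradient decreases `f`, up to an error
controlled by a bound on the oscillation of the derivative along the segment. -/
lemma descent_estimate {n : ℕ} (f : EuclideanSpace ℝ (Fin n) → ℝ)
    (hf : Differentiable ℝ f) (y : EuclideanSpace ℝ (Fin n)) (τ C : ℝ) (hτ : 0 ≤ τ)
    (hC : ∀ z ∈ segment ℝ y (y - τ • gradient f y), ‖fderiv ℝ f z - fderiv ℝ f y‖ ≤ C) :
    f (y - τ • gradient f y) ≤ f y - τ * ‖gradient f y‖ ^ 2 + C * (τ * ‖gradient f y‖) := by
  set g := gradient f y with hg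
  set y' := y - τ • g with hy'
  have hseg : Convex ℝ (segment ℝ y y') := convex_segment _ _
  have hkey := hseg.norm_image_sub_le_of_norm_hasFDerivWithin_le'
      (f := f) (f' := fun z => fderiv ℝ f z) (φ := fderiv ℝ f y)
      (fun z _ => (hf z).hasFDerivAt.hasFDerivWithinAt) hC
      (left_mem_segment _ _ _) (right_mem_segment _ _ _)
  have h1 : f y' - f y - (fderiv ℝ f y) (y' - y) ≤ C * ‖y' - y‖ :=
    le_trans (le_abs_self _) hkey
  have h2 : (fderiv ℝ f y) (y' - y) = -(τ * ‖g‖ ^ 2) := by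
    have hsub : y' - y = (-τ) • g := by rw [hy']; module
    rw [hsub, map_smul]
    have : (fderiv ℝ f y) g = ⟪g, g⟫ := by
      rw [hg, gradient, InnerProductSpace.toDual_symm_apply]
    rw [this, real_inner_self_eq_norm_sq, smul_eq_mul]
    ring
  have h3 : ‖y' - y‖ = τ * ‖g‖ := by
    have hsub : y' - y = (-τ) • g := by rw [hy']; module
    rw [hsub, norm_smul, norm_neg, Real.norm_eq_abs, abs_of_nonneg hτ]
  rw [h2] at h1
  rw [h3] at h1
  linarith

set_option maxHeartbeats 2000000 in
/-- The set of global minimizers of a C¹ invex function increasing at infinity is connected. -/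
theorem minima_connected_of_invex {n : ℕ}
    (f : EuclideanSpace ℝ (Fin n) → ℝ) (fstar : ℝ)
    (hf : ContDiff ℝ 1 f)
    (hmin : ∀ x, fstar ≤ f x) (hattained : ∃ x, f x = fstar)
    (hinvex : ∀ x, fderiv ℝ f x = 0 → ∀ y, f x ≤ f y)
    (hinc : ∀ x, ∃ K : Set (EuclideanSpace ℝ (Fin n)),
      IsCompact K ∧ ∀ z ∉ K, f x < f z) :
    IsConnected {x | f x = fstar} := by
  classical
  obtain ⟨x₀, hx₀⟩ := hattained
  have hfc : Continuous f := hf.continuous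
  have hfd : Differentiable ℝ f := hf.differentiable one_ne_zero
  have hf' : Continuous (fderiv ℝ f) := hf.continuous_fderiv one_ne_zero
  have hgc : Continuous fun x => gradient f x := by
    unfold gradient
    exact (LinearIsometryEquiv.continuous _).comp hf'
  have hgnorm : ∀ x, ‖gradient f x‖ = ‖fderiv ℝ f x‖ := fun x =>
    LinearIsometryEquiv.norm_map _ _
  -- every point with value strictly above the minimum has nonzero gradient
  have hcrit : ∀ x, fstar < f x → gradient f x ≠ 0 := by
    intro x hx hg0
    have h0 : fderiv ℝ f x = 0 := by
      have := congrArg (InnerProductSpace.toDual ℝ (EuclideanSpace ℝ (Fin n))) hg0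
      simpa [gradient] using this
    have := hinvex x h0 x₀
    rw [hx₀] at this
    linarith
  set M := {x | f x = fstar} with hMdef
  refine ⟨⟨x₀, hx₀⟩, ?_⟩
  by_contra hdis
  rw [IsPreconnected] at hdis
  push_neg at hdis
  obtain ⟨U, V, hU, hV, hUV, ⟨a, haM, haU⟩, ⟨b, hbM, hbV⟩, hemp⟩ := hdis
  -- M is compact
  have hMcl : IsClosed M := isClosed_eq hfc continuous_const
  obtain ⟨K₀, hK₀c, hK₀⟩ := hinc x₀
  have hMc : IsCompact M := by
    refine hK₀c.of_isClosed_subset hMcl fun x hx => ?_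
    by_contra hxK
    have := hK₀ x hxK
    rw [hx₀, hx] at this
    exact lt_irrefl _ this
  -- the two separated pieces
  set A := M ∩ U with hAdef
  set B := M ∩ V with hBdef
  have hdisjAB : ∀ x, x ∈ A → x ∈ B → False := by
    intro x hxA hxB
    have : x ∈ M ∩ (U ∩ V) := ⟨hxA.1, hxA.2, hxB.2⟩
    rw [hemp] at this
    exact this
  have hAeq : A = M \ V := by
    ext x
    constructor
    · rintro ⟨hxM, hxU⟩
      refine ⟨hxM, fun hxV => ?_⟩
      have : x ∈ M ∩ (U ∩ V) := ⟨hxM, hxU, hxV⟩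
      rw [hemp] at this
      exact this
    · rintro ⟨hxM, hxV⟩
      rcases hUV hxM with h | h
      · exact ⟨hxM, h⟩
      · exact absurd h hxV
  have hBeq : B = M \ U := by
    ext x
    constructor
    · rintro ⟨hxM, hxV⟩
      refine ⟨hxM, fun hxU => ?_⟩
      have : x ∈ M ∩ (U ∩ V) := ⟨hxM, hxU, hxV⟩
      rw [hemp] at this
      exact this
    · rintro ⟨hxM, hxU⟩
      rcases hUV hxM with h | h
      · exact absurd h hxU
      · exact ⟨hxM, h⟩
  have hAcl : IsClosed A := by rw [hAeq]; exact hMcl.sdiff hV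
  have hBcl : IsClosed B := by rw [hBeq]; exact hMcl.sdiff hU
  have hAc : IsCompact A := hMc.of_isClosed_subset hAcl Set.inter_subset_left
  have hBc : IsCompact B := hMc.of_isClosed_subset hBcl Set.inter_subset_left
  have haA : a ∈ A := ⟨haM, haU⟩
  have hbB : b ∈ B := ⟨hbM, hbV⟩
  have hANe : A.Nonempty := ⟨a, haA⟩
  have hBNe : B.Nonempty := ⟨b, hbB⟩
  -- positive distance between the pieces
  obtain ⟨b₀, hb₀B, hb₀min⟩ := hBc.exists_isMinOn hBNe
    (Metric.continuous_infDist_pt A).continuousOn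
  set d := Metric.infDist b₀ A with hddef
  have hd : 0 < d := by
    rw [hddef, ← hAcl.notMem_iff_infDist_pos hANe]
    exact fun h => hdisjAB b₀ h hb₀B
  -- the separating "sphere" T
  set T := {x : EuclideanSpace ℝ (Fin n) | Metric.infDist x A = d / 2} with hTdef
  have hTcl : IsClosed T := isClosed_eq (Metric.continuous_infDist_pt A) continuous_const
  have hTc : IsCompact T := by
    refine (hAc.cthickening (r := d)).of_isClosed_subset hTcl fun x hx => ?_
    have hlt : Metric.infDist x A < d := by
      rw [hx]
      linarith
    obtain ⟨y, hyA, hxy⟩ := (Metric.infDist_lt_iff hANe).mp hlt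
    exact Metric.mem_cthickening_of_dist_le x y d A hyA hxy.le
  -- every path from a to b crosses T
  have hcross : ∀ γ : ℝ → EuclideanSpace ℝ (Fin n), Continuous γ → γ 0 = a → γ 1 = b →
      ∃ t ∈ Set.Icc (0:ℝ) 1, γ t ∈ T := by
    intro γ hγ hγ0 hγ1
    have hIVT := intermediate_value_Icc (zero_le_one (α := ℝ))
      ((Metric.continuous_infDist_pt A).comp hγ).continuousOn
    have hmem : d / 2 ∈ Set.Icc (Metric.infDist (γ 0) A) (Metric.infDist (γ 1) A) := by
      rw [hγ0, hγ1]
      constructor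
      · rw [Metric.infDist_zero_of_mem haA]
        linarith
      · have h1 : d ≤ Metric.infDist b A := hb₀min hbB
        linarith
    obtain ⟨t, ht, hρt⟩ := hIVT hmem
    exact ⟨t, ht, hρt⟩
  -- the straight segment path
  set γseg : ℝ → EuclideanSpace ℝ (Fin n) := fun t => a + t • (b - a) with hγsegdef
  have hγsegc : Continuous γseg := continuous_const.add (continuous_id.smul continuous_const)
  have hγseg0 : γseg 0 = a := by simp [hγsegdef]
  have hγseg1 : γseg 1 = b := by simp [hγsegdef]
  -- T is nonempty, and the barrier level m
  have hTne : T.Nonempty := by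
    obtain ⟨t, _, htT⟩ := hcross γseg hγsegc hγseg0 hγseg1
    exact ⟨γseg t, htT⟩
  obtain ⟨xT, hxT, hxTmin⟩ := hTc.exists_isMinOn hTne hfc.continuousOn
  set m := f xT with hmdef
  have hm : fstar < m := by
    rcases lt_or_eq_of_le (hmin xT) with h | h
    · exact h
    · exfalso
      have hxTM : xT ∈ M := h.symm
      rcases hUV hxTM with h' | h'
      · have : xT ∈ A := ⟨hxTM, h'⟩
        have h0 : Metric.infDist xT A = 0 := Metric.infDist_zero_of_mem this
        rw [hxT] at h0
        linarith
      · have hxTB : xT ∈ B := ⟨hxTM, h'⟩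
        have h1 : d ≤ Metric.infDist xT A := hb₀min hxTB
        have h0 : Metric.infDist xT A = d / 2 := hxT
        linarith
  -- the mountain pass value c
  set S := {r : ℝ | ∃ γ : ℝ → EuclideanSpace ℝ (Fin n), Continuous γ ∧ γ 0 = a ∧ γ 1 = b ∧
    ∀ t ∈ Set.Icc (0:ℝ) 1, f (γ t) ≤ r} with hSdef
  obtain ⟨tm, htm, htmmax⟩ := isCompact_Icc.exists_isMaxOn
    (Set.nonempty_Icc.mpr zero_le_one) (hfc.comp hγsegc).continuousOn
  have hrsegS : f (γseg tm) ∈ S :=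
    ⟨γseg, hγsegc, hγseg0, hγseg1, fun t ht => htmmax ht⟩
  have hSne : S.Nonempty := ⟨_, hrsegS⟩
  have hfa : f a = fstar := haM
  have hfb : f b = fstar := hbM
  have hSbdd : BddBelow S := by
    refine ⟨fstar, fun r hr => ?_⟩
    obtain ⟨γ, hγ, hγ0, hγ1, hγr⟩ := hr
    have := hγr 0 ⟨le_refl 0, zero_le_one⟩
    rw [hγ0, hfa] at this
    exact this
  set c := sInf S with hcdef
  have hmc : m ≤ c := by
    refine le_csInf hSne fun r hr => ?_
    obtain ⟨γ, hγ, hγ0, hγ1, hγr⟩ := hr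
    obtain ⟨t, ht, htT⟩ := hcross γ hγ hγ0 hγ1
    exact le_trans (hxTmin htT) (hγr t ht)
  have hfstarc : fstar < c := lt_of_lt_of_le hm hmc
  -- some point has value above c
  have hz : ∃ z, c < f z := by
    by_contra h
    push_neg at h
    have hlt : ∀ x, f x < c := by
      intro x
      rcases lt_or_eq_of_le (h x) with h' | h'
      · exact h'
      · exfalso
        have hmax : IsMaxOn f Set.univ x := fun y _ => by
          simp only [h']
          exact h y
        have h0 : fderiv ℝ f x = 0 :=
          (hmax.isLocalMax Filter.univ_mem).fderiv_eq_zero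
        have := hinvex x h0 x₀
        rw [hx₀] at this
        rw [h'] at this
        linarith
    have hcle : c ≤ f (γseg tm) := csInf_le hSbdd hrsegS
    linarith [hlt (γseg tm)]
  obtain ⟨z, hzc⟩ := hz
  -- the compact neighborhood of the level c and gradient bounds
  set δ₀ := min ((c - fstar) / 2) ((f z - c) / 2) with hδ₀def
  have hδ₀pos : 0 < δ₀ := lt_min (by linarith) (by linarith)
  have hδ₀1 : δ₀ ≤ (c - fstar) / 2 := min_le_left _ _
  have hδ₀2 : δ₀ ≤ (f z - c) / 2 := min_le_right _ _
  set R₀ := {x : EuclideanSpace ℝ (Fin n) | c - δ₀ ≤ f x ∧ f x ≤ c + δ₀} with hR₀def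
  have hR₀cl : IsClosed R₀ :=
    (isClosed_le continuous_const hfc).inter (isClosed_le hfc continuous_const)
  obtain ⟨Kz, hKzc, hKz⟩ := hinc z
  have hR₀c : IsCompact R₀ := by
    refine hKzc.of_isClosed_subset hR₀cl fun x hx => ?_
    by_contra hxK
    have := hKz x hxK
    have := hx.2
    linarith
  have hR₀val : ∀ x ∈ R₀, fstar < f x := by
    intro x hx
    have := hx.1
    linarith
  have hε : ∃ ε > 0, ∀ x ∈ R₀, ε ≤ ‖gradient f x‖ := by
    rcases R₀.eq_empty_or_nonempty with h | h
    · exact ⟨1, one_pos, by simp [h]⟩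
    · obtain ⟨w, hw, hwmin⟩ := hR₀c.exists_isMinOn h
        (continuous_norm.comp hgc).continuousOn
      refine ⟨‖gradient f w‖, ?_, fun x hx => hwmin hx⟩
      exact norm_pos_iff.mpr (hcrit w (hR₀val w hw))
  obtain ⟨ε, hεpos, hεR⟩ := hε
  have hG : ∃ G > 0, ∀ x ∈ R₀, ‖gradient f x‖ ≤ G := by
    rcases R₀.eq_empty_or_nonempty with h | h
    · exact ⟨1, one_pos, by simp [h]⟩
    · obtain ⟨w, hw, hwmax⟩ := hR₀c.exists_isMaxOn h
        (continuous_norm.comp hgc).continuousOn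
      refine ⟨‖gradient f w‖ + 1, by positivity, fun x hx => ?_⟩
      have h1 : ‖gradient f x‖ ≤ ‖gradient f w‖ := hwmax hx
      linarith
  obtain ⟨G, hGpos, hGR⟩ := hG
  -- uniform continuity of the derivative near R₀
  have huc := (hR₀c.cthickening (r := 1)).uniformContinuousOn_of_continuous hf'.continuousOn
  rw [Metric.uniformContinuousOn_iff] at huc
  obtain ⟨η, hηpos, hη⟩ := huc (ε / 2) (by positivity)
  -- step size
  set s := min η 1 / (2 * G) with hsdef
  have hspos : 0 < s := by positivity
  have hsG : s * G = min η 1 / 2 := by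
    rw [hsdef]
    field_simp
  have hminη : min η 1 ≤ η := min_le_left _ _
  have hmin1 : min η 1 ≤ 1 := min_le_right _ _
  -- final tolerance
  set δ := min δ₀ (s * ε ^ 2 / 2) with hδdef
  have hδpos : 0 < δ := lt_min hδ₀pos (by positivity)
  have hδδ₀ : δ ≤ δ₀ := min_le_left _ _
  have hδsε : δ ≤ s * ε ^ 2 / 2 := min_le_right _ _
  -- pick a near-optimal path
  obtain ⟨r, hrS, hrc⟩ := exists_lt_of_csInf_lt hSne
    (lt_add_of_pos_right c (by positivity : (0:ℝ) < δ / 2))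
  obtain ⟨γ, hγ, hγ0, hγ1, hγr⟩ := hrS
  -- the cutoff function
  set χ : ℝ → ℝ := fun t => min 1 (max 0 ((f (γ t) - (c - δ)) * (2 / δ))) with hχdef
  have hχc : Continuous χ := continuous_const.min
    (continuous_const.max (((hfc.comp hγ).sub continuous_const).mul continuous_const))
  have hχ0 : ∀ t, 0 ≤ χ t := fun t => le_min zero_le_one (le_max_left _ _)
  have hχ1 : ∀ t, χ t ≤ 1 := fun t => min_le_left _ _
  have hχlow : ∀ t, f (γ t) ≤ c - δ → χ t = 0 := by
    intro t ht
    have hX : (f (γ t) - (c - δ)) * (2 / δ) ≤ 0 :=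
      mul_nonpos_of_nonpos_of_nonneg (by linarith) (by positivity)
    simp only [hχdef]
    rw [max_eq_left hX, min_eq_right zero_le_one]
  have hχhigh : ∀ t, c - δ / 2 ≤ f (γ t) → χ t = 1 := by
    intro t ht
    have h2 : δ / 2 ≤ f (γ t) - (c - δ) := by linarith
    have h3 : (0:ℝ) < 2 / δ := by positivity
    have h1 : (1:ℝ) ≤ (f (γ t) - (c - δ)) * (2 / δ) := by
      calc (1:ℝ) = δ / 2 * (2 / δ) := by field_simp
        _ ≤ (f (γ t) - (c - δ)) * (2 / δ) := mul_le_mul_of_nonneg_right h2 h3.le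
    simp only [hχdef]
    rw [max_eq_right (le_trans zero_le_one h1), min_eq_left h1]
  -- the deformed path
  set γ' : ℝ → EuclideanSpace ℝ (Fin n) :=
    fun t => γ t - (s * χ t) • gradient f (γ t) with hγ'def
  have hγ'c : Continuous γ' :=
    hγ.sub ((continuous_const.mul hχc).smul (hgc.comp hγ))
  have hγ'0 : γ' 0 = a := by
    have h0 : χ 0 = 0 := by
      apply hχlow
      rw [hγ0, hfa]
      linarith
    rw [hγ'def]
    simp only [h0, mul_zero, zero_smul, sub_zero, hγ0]
  have hγ'1 : γ' 1 = b := by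
    have h0 : χ 1 = 0 := by
      apply hχlow
      rw [hγ1, hfb]
      linarith
    rw [hγ'def]
    simp only [h0, mul_zero, zero_smul, sub_zero, hγ1]
  -- the key estimate along the deformed path
  have hkey : ∀ t ∈ Set.Icc (0:ℝ) 1, f (γ' t) ≤ c - δ / 2 := by
    intro t ht
    have hfyr : f (γ t) ≤ r := hγr t ht
    by_cases hlow : f (γ t) ≤ c - δ
    · have h0 : χ t = 0 := hχlow t hlow
      have : γ' t = γ t := by
        rw [hγ'def]
        simp [h0]
      rw [this]
      linarith
    · push_neg at hlow
      set y := γ t with hydef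
      have hyR₀ : y ∈ R₀ := by
        constructor
        · linarith
        · linarith
      set τ := s * χ t with hτdef
      have hτ0 : 0 ≤ τ := mul_nonneg hspos.le (hχ0 t)
      have hτs : τ ≤ s := mul_le_of_le_one_right hspos.le (hχ1 t)
      have hgy_lb : ε ≤ ‖gradient f y‖ := hεR y hyR₀
      have hgy_ub : ‖gradient f y‖ ≤ G := hGR y hyR₀
      have hτg : τ * ‖gradient f y‖ ≤ min η 1 / 2 := by
        rw [← hsG]
        apply mul_le_mul hτs hgy_ub (norm_nonneg _) hspos.le
      -- oscillation bound along the descent segment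
      have hosc : ∀ w ∈ segment ℝ y (y - τ • gradient f y),
          ‖fderiv ℝ f w - fderiv ℝ f y‖ ≤ ε / 2 := by
        intro w hw
        obtain ⟨u, v, hu, hv, huv, hw⟩ := hw
        have hwy : w - y = -(v * τ) • gradient f y := by
          rw [← hw]
          have : u = 1 - v := by linarith
          rw [this]
          module
        have hdist : dist w y ≤ τ * ‖gradient f y‖ := by
          rw [dist_eq_norm, ← sub_zero (w - y), sub_zero, hwy, norm_smul]
          simp only [norm_neg, Real.norm_eq_abs, abs_of_nonneg (mul_nonneg hv hτ0)]
          have e : v * τ * ‖gradient f y‖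
              = τ * ‖gradient f y‖ - u * (τ * ‖gradient f y‖) := by
            have hv1 : v = 1 - u := by linarith
            rw [hv1]; ring
          rw [e]
          have h4 : 0 ≤ u * (τ * ‖gradient f y‖) :=
            mul_nonneg hu (mul_nonneg hτ0 (norm_nonneg _))
          linarith
        have hwR' : w ∈ Metric.cthickening 1 R₀ := by
          apply Metric.mem_cthickening_of_dist_le w y 1 R₀ hyR₀
          linarith
        have hyR' : y ∈ Metric.cthickening 1 R₀ :=
          Metric.self_subset_cthickening R₀ hyR₀
        have hdistη : dist w y < η := by
          have : min η 1 / 2 < η := by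
            rcases min_cases η 1 with ⟨h1, _⟩ | ⟨h1, h2⟩ <;> rw [h1] <;> linarith
          linarith
        have := hη w hwR' y hyR' hdistη
        rw [dist_eq_norm] at this
        exact this.le
      have hdesc := descent_estimate f hfd y τ (ε / 2) hτ0 hosc
      have hγ'ty : γ' t = y - τ • gradient f y := rfl
      rw [← hγ'ty] at hdesc
      by_cases hmid : f y ≤ c - δ / 2
      · -- the step does not increase the value
        have hpos : 0 ≤ τ * ‖gradient f y‖ ^ 2 - ε / 2 * (τ * ‖gradient f y‖) := by
          have h5 : 0 ≤ τ * ‖gradient f y‖ := mul_nonneg hτ0 (norm_nonneg _)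
          have h6 : 0 ≤ ‖gradient f y‖ - ε / 2 := by linarith
          nlinarith [mul_nonneg h5 h6]
        linarith
      · push_neg at hmid
        have hχt : χ t = 1 := hχhigh t hmid.le
        have hτeq : τ = s := by rw [hτdef, hχt, mul_one]
        rw [hτeq] at hdesc
        have hstep : s * ‖gradient f y‖ ^ 2 - ε / 2 * (s * ‖gradient f y‖)
            ≥ s * ε ^ 2 / 2 := by
          have h7 : 0 ≤ (‖gradient f y‖ - ε) * (‖gradient f y‖ + ε / 2) :=
            mul_nonneg (by linarith) (by linarith)
          nlinarith [mul_nonneg hspos.le h7]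
        have : f (γ' t) ≤ r - s * ε ^ 2 / 2 := by linarith
        linarith
  -- contradiction with the definition of c
  have hmem : c - δ / 2 ∈ S := ⟨γ', hγ'c, hγ'0, hγ'1, hkey⟩
  have := csInf_le hSbdd hmem
  linarith
end

section
/- Let f : ℝⁿ → ℝ be continuously differentiable and satisfy the α-PL condition for some α > 1 and μ > 0: ‖∇f(x)‖^α ≥ μ (f(x) − min f) for all x. If the set of minimizers of f is bounded, then every sublevel set {x : f(x) ≤ c} is connected; in particular the set of minimizers is connected. -/
set_option maxHeartbeats 1000000

open Filter Set Metric Topology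



/-- Ekeland's variational principle. -/
theorem my_ekeland {X : Type*} [MetricSpace X] [CompleteSpace X] (φ : X → ℝ)
    (hφ : LowerSemicontinuous φ) (C : ℝ) (hC : ∀ x, C ≤ φ x) {σ : ℝ} (hσ : 0 < σ) (x₀ : X) :
    ∃ y, φ y ≤ φ x₀ ∧ σ * dist x₀ y ≤ φ x₀ - φ y ∧ ∀ z, φ y - σ * dist y z ≤ φ z := by
  set F : X → Set X := fun x => {z | φ z + σ * dist x z ≤ φ x} with hF
  have hxF : ∀ x, x ∈ F x := by intro x; simp [hF]
  have hFbdd : ∀ x, BddBelow (φ '' F x) := by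
    intro x; exact ⟨C, by rintro v ⟨z, _, rfl⟩; exact hC z⟩
  set m : X → ℝ := fun x => sInf (φ '' F x) with hm
  have hmle : ∀ x, m x ≤ φ x := fun x => csInf_le (hFbdd x) ⟨x, hxF x, rfl⟩
  have hchoice : ∀ x, ∃ x', x' ∈ F x ∧ φ x' ≤ (m x + φ x) / 2 := by
    intro x
    rcases eq_or_lt_of_le (hmle x) with h | h
    · exact ⟨x, hxF x, by rw [← h]; linarith [hmle x]⟩
    · have hlt : m x < (m x + φ x) / 2 := by linarith
      obtain ⟨v, ⟨z, hz, rfl⟩, hv⟩ := exists_lt_of_csInf_lt (s := φ '' F x) ⟨φ x, ⟨x, hxF x, rfl⟩⟩ hlt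
      exact ⟨z, hz, le_of_lt hv⟩
  choose next hnext1 hnext2 using hchoice
  set u : ℕ → X := fun k => Nat.rec x₀ (fun _ x => next x) k with hu
  have husucc : ∀ k, u (k + 1) = next (u k) := fun k => rfl
  have hstep : ∀ k, φ (u (k+1)) + σ * dist (u k) (u (k+1)) ≤ φ (u k) := by
    intro k; rw [husucc k]; exact hnext1 (u k)
  have hhalf : ∀ k, φ (u (k+1)) ≤ (m (u k) + φ (u k)) / 2 := by
    intro k; rw [husucc k]; exact hnext2 (u k)
  have hmono : ∀ k, φ (u (k+1)) ≤ φ (u k) := by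
    intro k
    have := hstep k
    nlinarith [dist_nonneg (x := u k) (y := u (k+1)), hσ.le]
  have hanti : Antitone (fun k => φ (u k)) := antitone_nat_of_succ_le hmono
  have hbdd : BddBelow (Set.range fun k => φ (u k)) := ⟨C, by rintro v ⟨k, rfl⟩; exact hC _⟩
  set L : ℝ := ⨅ k, φ (u k) with hL
  have hLlim : Tendsto (fun k => φ (u k)) atTop (𝓝 L) := tendsto_atTop_ciInf hanti hbdd
  have hLle : ∀ k, L ≤ φ (u k) := fun k => ciInf_le hbdd k
  -- chain estimate
  have hchain : ∀ n k, σ * dist (u n) (u (n + k)) ≤ φ (u n) - φ (u (n + k)) := by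
    intro n k
    induction k with
    | zero => simp
    | succ k ih =>
      show σ * dist (u n) (u (n + k + 1)) ≤ φ (u n) - φ (u (n + k + 1))
      have htri : dist (u n) (u (n + k + 1)) ≤ dist (u n) (u (n + k)) + dist (u (n + k)) (u (n + k + 1)) := dist_triangle _ _ _
      have h2 := hstep (n + k)
      have ih' : σ * dist (u n) (u (n + k)) ≤ φ (u n) - φ (u (n + k)) := ih
      nlinarith [mul_le_mul_of_nonneg_left htri hσ.le]
  have hchain' : ∀ n mm, n ≤ mm → σ * dist (u n) (u mm) ≤ φ (u n) - φ (u mm) := by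
    intro n mm h
    obtain ⟨k, rfl⟩ := Nat.exists_eq_add_of_le h
    exact hchain n k
  -- Cauchy
  have hcauchy : CauchySeq u := by
    apply cauchySeq_of_le_tendsto_0 (fun N => (φ (u N) - L) / σ)
    · intro a b N ha hb
      rw [le_div_iff₀ hσ]
      rcases le_total a b with h | h
      · have h1 := hchain' a b h
        have h2 : φ (u a) ≤ φ (u N) := hanti ha
        have h3 := hLle b
        nlinarith
      · have h1 := hchain' b a h
        have h2 : φ (u b) ≤ φ (u N) := hanti hb
        have h3 := hLle a
        rw [dist_comm]
        nlinarith
    · have : Tendsto (fun N => φ (u N) - L) atTop (𝓝 (L - L)) := hLlim.sub tendsto_const_nhds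
      simpa using this.div_const σ
  obtain ⟨y, hy⟩ := cauchySeq_tendsto_of_complete hcauchy
  -- key: y ∈ F (u n) for all n
  have key3 : ∀ nn, φ y + σ * dist (u nn) y ≤ φ (u nn) := by
    intro nn
    by_contra hcon
    push_neg at hcon
    set ψ : X → ℝ := fun z => φ z + σ * dist (u nn) z with hψ
    have hψlsc : LowerSemicontinuous ψ :=
      hφ.add ((continuous_const.mul (Continuous.dist continuous_const continuous_id)).lowerSemicontinuous)
    have hev : ∀ᶠ z in nhds y, φ (u nn) < ψ z := hψlsc y _ hcon
    have hev2 : ∀ᶠ k in atTop, φ (u nn) < ψ (u k) := hy.eventually hev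
    have hev3 : ∀ᶠ k in atTop, ψ (u k) ≤ φ (u nn) := by
      filter_upwards [eventually_ge_atTop nn] with k hk
      have := hchain' nn k hk
      simp only [hψ]
      linarith
    obtain ⟨k, h1, h2⟩ := (hev2.and hev3).exists
    linarith
  have key4 : φ y ≤ L := by
    apply le_ciInf
    intro k
    have := key3 k
    nlinarith [dist_nonneg (x := u k) (y := y), hσ.le]
  refine ⟨y, ?_, ?_, ?_⟩
  · have := key3 0
    have h0 : u 0 = x₀ := rfl
    rw [h0] at this
    nlinarith [dist_nonneg (x := x₀) (y := y), hσ.le]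
  · have := key3 0
    have h0 : u 0 = x₀ := rfl
    rw [h0] at this
    linarith
  · intro z
    by_contra hcon
    push_neg at hcon
    have hzF : ∀ k, φ z ∈ φ '' F (u k) := by
      intro k
      refine ⟨z, ?_, rfl⟩
      simp only [hF, Set.mem_setOf_eq]
      have htri : dist (u k) z ≤ dist (u k) y + dist y z := dist_triangle _ _ _
      have := key3 k
      nlinarith [hσ.le]
    have hlb : ∀ k, 2 * φ (u (k+1)) - φ (u k) ≤ φ z := by
      intro k
      have h1 : m (u k) ≤ φ z := csInf_le (hFbdd _) (hzF k)
      have h2 := hhalf k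
      linarith
    have hlim : Tendsto (fun k => 2 * φ (u (k+1)) - φ (u k)) atTop (𝓝 (2 * L - L)) := by
      have h1 : Tendsto (fun k => φ (u (k+1))) atTop (𝓝 L) :=
        hLlim.comp (tendsto_add_atTop_nat 1)
      exact ((h1.const_mul 2).sub hLlim)
    have : 2 * L - L ≤ φ z := le_of_tendsto hlim (Eventually.of_forall hlb)
    have hLz : L ≤ φ z := by linarith
    nlinarith [dist_nonneg (x := y) (y := z), hσ.le]

/-- A nested intersection of compact preconnected sets is preconnected. -/
theorem isPreconnected_iInter_nested {X : Type*} [MetricSpace X]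
    (K : ℕ → Set X) (hanti : ∀ m, K (m+1) ⊆ K m) (hcpt : ∀ m, IsCompact (K m))
    (hconn : ∀ m, IsPreconnected (K m)) : IsPreconnected (⋂ m, K m) := by
  have hmono : ∀ {m m'}, m ≤ m' → K m' ⊆ K m := by
    intro m m' h
    induction h with
    | refl => exact subset_rfl
    | step h ih => exact fun x hx => ih (hanti _ hx)
  set S := ⋂ m, K m with hS
  have hScl : IsClosed S := isClosed_iInter (fun m => (hcpt m).isClosed)
  rw [isPreconnected_iff_subset_of_fully_disjoint_closed hScl]
  intro a b ha hb hab hdis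
  have hdisj : Disjoint (K 0 ∩ a) (K 0 ∩ b) :=
    hdis.mono inter_subset_right inter_subset_right
  obtain ⟨δ, hδ, hdisj2⟩ := hdisj.exists_thickenings ((hcpt 0).inter_right ha)
    ((hcpt 0).inter_right hb).isClosed
  set u := thickening δ (K 0 ∩ a) with hu
  set v := thickening δ (K 0 ∩ b) with hv
  have hu_open : IsOpen u := isOpen_thickening
  have hv_open : IsOpen v := isOpen_thickening
  have hau : K 0 ∩ a ⊆ u := self_subset_thickening hδ _
  have hbv : K 0 ∩ b ⊆ v := self_subset_thickening hδ _
  have hSsub : ∀ m, S ⊆ K m := fun m => iInter_subset K m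
  have hScover : S ⊆ u ∪ v := by
    intro x hx
    rcases hab hx with hxa | hxb
    · exact Or.inl (hau ⟨hSsub 0 hx, hxa⟩)
    · exact Or.inr (hbv ⟨hSsub 0 hx, hxb⟩)
  have hkey : ∃ m, K m ⊆ u ∪ v := by
    by_contra hno
    push_neg at hno
    have hCne : ∀ m, (K m \ (u ∪ v)).Nonempty := by
      intro m
      rcases not_subset.1 (hno m) with ⟨x, hx1, hx2⟩
      exact ⟨x, hx1, hx2⟩
    have hCcl : ∀ m, IsClosed (K m \ (u ∪ v)) :=
      fun m => (hcpt m).isClosed.sdiff (hu_open.union hv_open)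
    have hCsub : ∀ m, K (m+1) \ (u ∪ v) ⊆ K m \ (u ∪ v) :=
      fun m => diff_subset_diff_left (hanti m)
    obtain ⟨x, hx⟩ := IsCompact.nonempty_iInter_of_sequence_nonempty_isCompact_isClosed
      (fun m => K m \ (u ∪ v)) hCsub hCne ((hcpt 0).of_isClosed_subset (hCcl 0) diff_subset)
      hCcl
    simp only [Set.mem_iInter, Set.mem_diff] at hx
    have hxS : x ∈ S := Set.mem_iInter.2 fun m => (hx m).1
    exact (hx 0).2 (hScover hxS)
  obtain ⟨m, hm⟩ := hkey
  by_cases hKu : (K m ∩ u).Nonempty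
  · by_cases hKv : (K m ∩ v).Nonempty
    · obtain ⟨x, hx⟩ := hconn m u v hu_open hv_open hm hKu hKv
      exact absurd (Set.disjoint_iff.1 hdisj2 ⟨hx.2.1, hx.2.2⟩) (by simp)
    · -- K m ∩ v = ∅, so S ⊆ a
      left
      intro x hx
      rcases hab hx with hxa | hxb
      · exact hxa
      · exact absurd ⟨hSsub m hx, hbv ⟨hSsub 0 hx, hxb⟩⟩ (fun h => hKv ⟨x, h⟩)
  · -- K m ∩ u = ∅, so S ⊆ b
    right
    intro x hx
    rcases hab hx with hxa | hxb
    · exact absurd ⟨hSsub m hx, hau ⟨hSsub 0 hx, hxa⟩⟩ (fun h => hKu ⟨x, h⟩)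
    · exact hxb

section

variable {E : Type*} [NormedAddCommGroup E] [InnerProductSpace ℝ E] [CompleteSpace E]
  [ProperSpace E]

/-- If `h` satisfies the Ekeland-type inequality with slope `σ` at `y` and is differentiable
there, then `‖fderiv‖ ≤ σ`. -/
theorem norm_fderiv_le_of_ekeland {h : E → ℝ} {D : E →L[ℝ] ℝ} {y : E} {σ : ℝ} (hσ : 0 ≤ σ)
    (hD : HasFDerivAt h D y) (hek : ∀ z, h y - σ * dist y z ≤ h z) : ‖D‖ ≤ σ := by
  set v : E := (InnerProductSpace.toDual ℝ E).symm D with hv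
  have hnv : ‖v‖ = ‖D‖ := LinearIsometryEquiv.norm_map _ D
  have hDv : D v = ‖v‖ ^ 2 := by
    have : (inner ℝ v v : ℝ) = D v := InnerProductSpace.toDual_symm_apply
    rw [← this, real_inner_self_eq_norm_sq]
  -- curve t ↦ y - t • v
  have hcurve : HasDerivAt (fun t : ℝ => h (y - t • v)) (-‖v‖ ^ 2) 0 := by
    have hc : HasDerivAt (fun t : ℝ => y - t • v) (-v) 0 := by
      simpa using ((hasDerivAt_id (0:ℝ)).smul_const v).const_sub y
    have hD' : HasFDerivAt h D (y - (0:ℝ) • v) := by simpa using hD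
    have := hD'.comp_hasDerivAt (x := (0:ℝ)) hc
    simpa [hDv, map_neg, Function.comp_def] using this
  -- slope lower bound for t > 0
  have hslope : ∀ t : ℝ, 0 < t → -(σ * ‖v‖) ≤ (h (y - t • v) - h y) / t := by
    intro t ht
    have hd : dist y (y - t • v) = t * ‖v‖ := by
      rw [dist_eq_norm]
      simp [norm_smul, abs_of_pos ht]
    have := hek (y - t • v)
    rw [hd] at this
    rw [le_div_iff₀ ht]
    nlinarith
  have hlim : Tendsto (fun t : ℝ => (h (y - t • v) - h y) / t) (𝓝[>] (0:ℝ)) (𝓝 (-‖v‖ ^ 2)) := by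
    have h1 : Tendsto (slope (fun t : ℝ => h (y - t • v)) 0) (𝓝[≠] (0:ℝ)) (𝓝 (-‖v‖ ^ 2)) :=
      hasDerivAt_iff_tendsto_slope.1 hcurve
    have h2 : Tendsto (slope (fun t : ℝ => h (y - t • v)) 0) (𝓝[>] (0:ℝ)) (𝓝 (-‖v‖ ^ 2)) :=
      h1.mono_left (nhdsWithin_mono 0 fun t ht => ne_of_gt ht)
    refine h2.congr' ?_
    filter_upwards [self_mem_nhdsWithin] with t ht
    simp [slope_def_field, div_eq_inv_mul]
  have hge : -(σ * ‖v‖) ≤ -‖v‖ ^ 2 := by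
    refine ge_of_tendsto hlim ?_
    filter_upwards [self_mem_nhdsWithin] with t ht
    exact hslope t ht
  have : ‖v‖ ^ 2 ≤ σ * ‖v‖ := by linarith
  rcases eq_or_lt_of_le (norm_nonneg v) with h0 | h0
  · rw [← hnv, ← h0]; exact hσ
  · rw [← hnv]; nlinarith

/-- If the derivative at `x` is nonzero, there are nearby points with smaller value. -/
theorem exists_lt_of_hasFDerivAt_ne_zero {f : E → ℝ} {D : E →L[ℝ] ℝ} {x : E}
    (hD : HasFDerivAt f D x) (hne : D ≠ 0) {U : Set E} (hU : U ∈ 𝓝 x) :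
    ∃ z ∈ U, f z < f x := by
  set v : E := (InnerProductSpace.toDual ℝ E).symm D with hv
  have hvne : v ≠ 0 := by
    intro h0
    exact hne (by simpa using (LinearIsometryEquiv.map_eq_zero_iff _).1 h0)
  have hDv : D v = ‖v‖ ^ 2 := by
    have : (inner ℝ v v : ℝ) = D v := InnerProductSpace.toDual_symm_apply
    rw [← this, real_inner_self_eq_norm_sq]
  have hcurve : HasDerivAt (fun t : ℝ => f (x - t • v)) (-‖v‖ ^ 2) 0 := by
    have hc : HasDerivAt (fun t : ℝ => x - t • v) (-v) 0 := by
      simpa using ((hasDerivAt_id (0:ℝ)).smul_const v).const_sub x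
    have hD' : HasFDerivAt f D (x - (0:ℝ) • v) := by simpa using hD
    have := hD'.comp_hasDerivAt (x := (0:ℝ)) hc
    simpa [hDv, map_neg, Function.comp_def] using this
  have hlim : Tendsto (fun t : ℝ => (f (x - t • v) - f x) / t) (𝓝[>] (0:ℝ)) (𝓝 (-‖v‖ ^ 2)) := by
    have h1 : Tendsto (slope (fun t : ℝ => f (x - t • v)) 0) (𝓝[≠] (0:ℝ)) (𝓝 (-‖v‖ ^ 2)) :=
      hasDerivAt_iff_tendsto_slope.1 hcurve
    have h2 := h1.mono_left (nhdsWithin_mono 0 fun t ht => ne_of_gt ht)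
    refine h2.congr' ?_
    filter_upwards [self_mem_nhdsWithin] with t ht
    simp [slope_def_field, div_eq_inv_mul]
  have hneg : -‖v‖ ^ 2 < 0 := by
    have : 0 < ‖v‖ := norm_pos_iff.2 hvne
    nlinarith
  have hev1 : ∀ᶠ t : ℝ in 𝓝[>] 0, (f (x - t • v) - f x) / t < 0 :=
    hlim.eventually_lt_const hneg
  have hT : Tendsto (fun t : ℝ => x - t • v) (𝓝[>] (0:ℝ)) (𝓝 x) := by
    have hcont : Continuous (fun t : ℝ => x - t • v) := by continuity
    have : Tendsto (fun t : ℝ => x - t • v) (𝓝 (0:ℝ)) (𝓝 x) := by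
      simpa using hcont.tendsto 0
    exact this.mono_left nhdsWithin_le_nhds
  have hev2 : ∀ᶠ t : ℝ in 𝓝[>] 0, x - t • v ∈ U := hT hU
  obtain ⟨t, ⟨⟨hs1, hs2⟩, ht3⟩⟩ := ((hev1.and hev2).and self_mem_nhdsWithin).exists
  refine ⟨x - t • v, hs2, ?_⟩
  have ht0 : (0:ℝ) < t := ht3
  have h := hs1
  rw [div_lt_iff₀ ht0] at h
  linarith

/-- Taylor-type inequality from uniform closeness of the derivative on a segment. -/
theorem taylor_ineq (f : E → ℝ) (hf : Differentiable ℝ f) (x u : E) (C : ℝ) (hC0 : 0 ≤ C)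
    (hC : ∀ τ : ℝ, τ ∈ Set.Icc (0:ℝ) 1 → ‖fderiv ℝ f (x + τ • u) - fderiv ℝ f x‖ ≤ C) :
    f (x + u) ≤ f x + fderiv ℝ f x u + C * ‖u‖ := by
  set D := fderiv ℝ f x with hD
  have hmem : ∀ z ∈ segment ℝ x (x+u), ‖fderiv ℝ f z - D‖ ≤ C := by
    intro z hz
    rw [segment_eq_image'] at hz
    obtain ⟨τ, hτ, rfl⟩ := hz
    have : x + u - x = u := add_sub_cancel_left x u
    rw [this]
    exact hC τ hτ
  have key := Convex.norm_image_sub_le_of_norm_hasFDerivWithin_le'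
    (f := f) (f' := fun z => fderiv ℝ f z) (φ := D) (s := segment ℝ x (x+u))
    (x := x) (y := x + u)
    (fun z _ => ((hf z).hasFDerivAt).hasFDerivWithinAt) hmem (convex_segment _ _)
    (left_mem_segment ℝ x (x+u)) (right_mem_segment ℝ x (x+u))
  have h1 : x + u - x = u := add_sub_cancel_left x u
  rw [h1] at key
  have h2 : f (x + u) - f x - D u ≤ C * ‖u‖ := (le_abs_self _).trans (by rwa [← Real.norm_eq_abs])
  linarith


/-- Error bound: every point has a minimizer at controlled distance. -/
theorem error_bound
    (f : E → ℝ) (fstar : ℝ) (α μ : ℝ)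
    (hf : ContDiff ℝ 1 f) (hα : 1 < α) (hμ : 0 < μ)
    (hmin : ∀ x, fstar ≤ f x)
    (hPL : ∀ x, μ * (f x - fstar) ≤ ‖fderiv ℝ f x‖ ^ α) (x : E) :
    ∃ y, f y = fstar ∧
      ((1 - 1/α) * μ ^ (1/α) / 2) * dist x y ≤ (f x - fstar) ^ (1 - 1/α) := by
  set θ : ℝ := 1 - 1/α with hθ
  have hαpos : (0:ℝ) < α := by linarith
  have hθpos : 0 < θ := by
    have h1 : 1/α < 1 := by rw [div_lt_one hαpos]; exact hα
    simp only [hθ]; linarith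
  have hθlt : θ < 1 := by
    have : 0 < 1/α := by positivity
    simp only [hθ]; linarith
  set κ : ℝ := θ * μ ^ (1/α) with hκ
  have hκpos : 0 < κ := by
    have := Real.rpow_pos_of_pos hμ (1/α)
    positivity
  set h : E → ℝ := fun z => (f z - fstar) ^ θ with hh
  have hcont : Continuous h := by
    apply Continuous.rpow_const (hf.continuous.sub continuous_const)
    intro z; exact Or.inr hθpos.le
  have hnn : ∀ z, 0 ≤ h z := fun z => Real.rpow_nonneg (by linarith [hmin z]) θ
  obtain ⟨y, hy1, hy2, hy3⟩ := my_ekeland h hcont.lowerSemicontinuous 0 hnn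
    (σ := κ/2) (by positivity) x
  have hyfstar : f y = fstar := by
    by_contra hne
    have hty : 0 < f y - fstar := lt_of_le_of_ne (by linarith [hmin y]) (by
      intro hh'; exact hne (by linarith))
    set t : ℝ := f y - fstar with ht
    -- h is differentiable at y
    have hfd : HasFDerivAt (fun z => f z - fstar) (fderiv ℝ f y) y :=
      ((hf.differentiable one_ne_zero) y).hasFDerivAt.sub_const fstar
    have hrp : HasDerivAt (fun s : ℝ => s ^ θ) (θ * t ^ (θ - 1)) t :=
      Real.hasDerivAt_rpow_const (Or.inl hty.ne')
    have hDh : HasFDerivAt h ((θ * t ^ (θ - 1)) • fderiv ℝ f y) y :=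
      by have := hrp.comp_hasFDerivAt y hfd; exact this
    -- lower bound on the norm
    have hDfl : (μ * t) ^ (1/α) ≤ ‖fderiv ℝ f y‖ := by
      have h1 : μ * t ≤ ‖fderiv ℝ f y‖ ^ α := hPL y
      have h2 := Real.rpow_le_rpow (by positivity) h1 (by positivity : (0:ℝ) ≤ 1/α)
      rwa [← Real.rpow_mul (norm_nonneg _), mul_one_div_cancel hαpos.ne',
        Real.rpow_one] at h2
    have htpow : 0 < t ^ (θ - 1) := Real.rpow_pos_of_pos hty _
    have hnormDh : ‖(θ * t ^ (θ - 1)) • fderiv ℝ f y‖ = θ * t ^ (θ - 1) * ‖fderiv ℝ f y‖ := by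
      rw [norm_smul, Real.norm_eq_abs, abs_of_pos (by positivity)]
    have hprod : μ ^ (1/α) * t ^ (1/α) ≤ ‖fderiv ℝ f y‖ := by
      rwa [Real.mul_rpow hμ.le hty.le] at hDfl
    have hexp : (θ - 1) + 1/α = 0 := by rw [hθ]; ring
    have hcancel : t ^ (θ - 1) * t ^ (1/α) = 1 := by
      rw [← Real.rpow_add hty, hexp, Real.rpow_zero]
    have hκle : κ ≤ ‖(θ * t ^ (θ - 1)) • fderiv ℝ f y‖ := by
      rw [hnormDh]
      calc κ = θ * μ ^ (1/α) * (t ^ (θ - 1) * t ^ (1/α)) := by rw [hcancel, hκ]; ring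
      _ = θ * t ^ (θ - 1) * (μ ^ (1/α) * t ^ (1/α)) := by ring
      _ ≤ θ * t ^ (θ - 1) * ‖fderiv ℝ f y‖ := by
          apply mul_le_mul_of_nonneg_left hprod (by positivity)
    have hup : ‖(θ * t ^ (θ - 1)) • fderiv ℝ f y‖ ≤ κ/2 :=
      norm_fderiv_le_of_ekeland (by positivity) hDh hy3
    linarith
  refine ⟨y, hyfstar, ?_⟩
  have hhy : h y = 0 := by
    simp only [hh, hyfstar, sub_self]
    exact Real.zero_rpow hθpos.ne'
  rw [hhy, sub_zero] at hy2
  simpa [hh] using hy2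

/-- Sublevel sets are bounded. -/
theorem isBounded_sublevel
    (f : E → ℝ) (fstar : ℝ) (α μ : ℝ)
    (hf : ContDiff ℝ 1 f) (hα : 1 < α) (hμ : 0 < μ)
    (hmin : ∀ x, fstar ≤ f x)
    (hPL : ∀ x, μ * (f x - fstar) ≤ ‖fderiv ℝ f x‖ ^ α)
    (hbdd : Bornology.IsBounded {x | f x = fstar}) (c : ℝ) :
    Bornology.IsBounded {x | f x ≤ c} := by
  obtain ⟨R₀, hR₀⟩ := hbdd.subset_closedBall 0
  have hαpos : (0:ℝ) < α := by linarith
  have hθpos : 0 < 1 - 1/α := by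
    have h1 : 1/α < 1 := by rw [div_lt_one hαpos]; exact hα
    linarith
  have hκpos : 0 < (1 - 1/α) * μ ^ (1/α) / 2 := by
    have := Real.rpow_pos_of_pos hμ (1/α)
    positivity
  set κ2 : ℝ := (1 - 1/α) * μ ^ (1/α) / 2 with hκ2
  set r : ℝ := (max 0 (c - fstar)) ^ (1 - 1/α) / κ2 with hr
  apply Bornology.IsBounded.subset (Metric.isBounded_closedBall (x := (0:E)) (r := R₀ + r))
  intro x hx
  simp only [Set.mem_setOf_eq] at hx
  obtain ⟨y, hy1, hy2⟩ := error_bound f fstar α μ hf hα hμ hmin hPL x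
  have hmono : (f x - fstar) ^ (1 - 1/α) ≤ (max 0 (c - fstar)) ^ (1 - 1/α) :=
    Real.rpow_le_rpow (by linarith [hmin x]) (le_max_of_le_right (by linarith)) hθpos.le
  have hdxy : dist x y ≤ r := by
    rw [hr, le_div_iff₀ hκpos]
    calc dist x y * κ2 = κ2 * dist x y := mul_comm _ _
    _ ≤ (f x - fstar) ^ (1 - 1/α) := hy2
    _ ≤ _ := hmono
  have hy0 : dist y 0 ≤ R₀ := hR₀ hy1
  have := dist_triangle x y 0
  simp only [Metric.mem_closedBall]
  calc dist x 0 ≤ dist x y + dist y 0 := dist_triangle x y 0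
  _ ≤ r + R₀ := add_le_add hdxy hy0
  _ = R₀ + r := add_comm _ _

/-- Each part of an open separation of a compact sublevel set contains a global minimizer. -/
theorem exists_min_in_part
    (f : E → ℝ) (fstar : ℝ) (α μ : ℝ)
    (hf : ContDiff ℝ 1 f) (hα : 1 < α) (hμ : 0 < μ)
    (hmin : ∀ x, fstar ≤ f x)
    (hPL : ∀ x, μ * (f x - fstar) ≤ ‖fderiv ℝ f x‖ ^ α)
    {c : ℝ} {U V : Set E} (hU : IsOpen U) (hV : IsOpen V)
    (hScpt : IsCompact {x | f x ≤ c}) (hcover : {x | f x ≤ c} ⊆ U ∪ V)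
    (hdisj : {x | f x ≤ c} ∩ (U ∩ V) = ∅) (hne : ({x | f x ≤ c} ∩ U).Nonempty) :
    ∃ p, (f p ≤ c ∧ p ∈ U) ∧ f p = fstar := by
  set S := {x | f x ≤ c} with hSdef
  have hAeq : S ∩ U = S \ V := by
    apply Set.Subset.antisymm
    · rintro x ⟨hx1, hx2⟩
      refine ⟨hx1, fun hxv => ?_⟩
      have : x ∈ S ∩ (U ∩ V) := ⟨hx1, hx2, hxv⟩
      rw [hdisj] at this
      exact this
    · rintro x ⟨hx1, hx2⟩
      rcases hcover hx1 with h | h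
      · exact ⟨hx1, h⟩
      · exact absurd h hx2
  have hAcl : IsClosed (S ∩ U) := by
    rw [hAeq]
    exact (hScpt.isClosed).sdiff hV
  have hAcpt : IsCompact (S ∩ U) := hScpt.of_isClosed_subset hAcl inter_subset_left
  obtain ⟨x₀, hx₀A, hx₀min'⟩ := hAcpt.exists_isMinOn hne (hf.continuous.continuousOn)
  have hx₀min : ∀ z ∈ S ∩ U, f x₀ ≤ f z := fun z hz => hx₀min' hz
  refine ⟨x₀, ⟨hx₀A.1, hx₀A.2⟩, ?_⟩
  by_contra hnefs
  have hgt : fstar < f x₀ := lt_of_le_of_ne (hmin x₀) (Ne.symm hnefs)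
  have hDne : fderiv ℝ f x₀ ≠ 0 := by
    intro h0
    have := hPL x₀
    rw [h0] at this
    simp only [norm_zero] at this
    rw [Real.zero_rpow (by positivity : α ≠ 0)] at this
    nlinarith
  obtain ⟨z, hzU, hzlt⟩ := exists_lt_of_hasFDerivAt_ne_zero
    ((hf.differentiable one_ne_zero) x₀).hasFDerivAt hDne (hU.mem_nhds hx₀A.2)
  have hzS : z ∈ S := le_of_lt (lt_of_lt_of_le hzlt hx₀A.1)
  exact absurd (hx₀min z ⟨hzS, hzU⟩) (not_le.2 hzlt)

/-- If every path from `p` to `q` passes through a point with value `≥ fstar + ε`,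
we derive a contradiction (mountain pass argument). -/
theorem exists_path_small_max
    (f : E → ℝ) (fstar : ℝ) (α μ : ℝ)
    (hf : ContDiff ℝ 1 f) (hα : 1 < α) (hμ : 0 < μ)
    (hmin : ∀ x, fstar ≤ f x)
    (hPL : ∀ x, μ * (f x - fstar) ≤ ‖fderiv ℝ f x‖ ^ α)
    (hcpt : ∀ b : ℝ, IsCompact {x | f x ≤ b})
    (p q : E) (hp : f p = fstar) (hq : f q = fstar) {ε : ℝ} (hε : 0 < ε) :
    ∃ γ : C(unitInterval, E), γ 0 = p ∧ γ 1 = q ∧ ∀ t, f (γ t) < fstar + ε := by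
  by_contra hcon
  push_neg at hcon
  have hαpos : (0:ℝ) < α := by linarith
  -- the space of paths
  let Γ : Set C(unitInterval, E) := {γ | γ 0 = p ∧ γ 1 = q}
  have hΓcl : IsClosed Γ := by
    have h0 : IsClosed {γ : C(unitInterval, E) | γ 0 = p} :=
      isClosed_eq (continuous_eval_const 0) continuous_const
    have h1 : IsClosed {γ : C(unitInterval, E) | γ 1 = q} :=
      isClosed_eq (continuous_eval_const 1) continuous_const
    exact h0.inter h1
  haveI : CompleteSpace Γ := hΓcl.completeSpace_coe
  -- the max functional
  let Φ : Γ → ℝ := fun γ => sSup (Set.range fun t => f (γ.1 t))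
  have hrange_ne : ∀ γ : Γ, (Set.range fun t => f (γ.1 t)).Nonempty :=
    fun γ => ⟨f (γ.1 0), 0, rfl⟩
  have hrange_cpt : ∀ γ : Γ, IsCompact (Set.range fun t => f (γ.1 t)) :=
    fun γ => isCompact_range (hf.continuous.comp (map_continuous γ.1))
  have hΦub : ∀ (γ : Γ) (t : unitInterval), f (γ.1 t) ≤ Φ γ :=
    fun γ t => le_csSup (hrange_cpt γ).bddAbove ⟨t, rfl⟩
  have hΦmem : ∀ γ : Γ, ∃ t, f (γ.1 t) = Φ γ := by
    intro γ
    obtain ⟨t, ht⟩ := (hrange_cpt γ).sSup_mem (hrange_ne γ)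
    exact ⟨t, ht⟩
  have hΦge : ∀ γ : Γ, fstar + ε ≤ Φ γ := by
    intro γ
    obtain ⟨t, ht⟩ := hcon γ.1 γ.2.1 γ.2.2
    exact ht.trans (hΦub γ t)
  have hΦlb : ∀ γ : Γ, fstar ≤ Φ γ := fun γ => by linarith [hΦge γ, hε]
  -- lower semicontinuity of Φ
  have hΦlsc : LowerSemicontinuous Φ := by
    intro γ a ha
    obtain ⟨t₀, ht₀⟩ := hΦmem γ
    have hopen : IsOpen {z : E | a < f z} := isOpen_lt continuous_const hf.continuous
    have hx₀ : γ.1 t₀ ∈ {z : E | a < f z} := by rw [Set.mem_setOf_eq, ht₀]; exact ha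
    obtain ⟨r, hr, hball⟩ := Metric.isOpen_iff.1 hopen _ hx₀
    filter_upwards [Metric.ball_mem_nhds γ hr] with γ' hγ'
    have hd : dist (γ'.1 t₀) (γ.1 t₀) < r := by
      calc dist (γ'.1 t₀) (γ.1 t₀) ≤ dist γ'.1 γ.1 := ContinuousMap.dist_apply_le_dist t₀
      _ = dist γ' γ := (Subtype.dist_eq γ' γ).symm
      _ < r := mem_ball.1 hγ'
    have : a < f (γ'.1 t₀) := hball (mem_ball.2 hd)
    exact this.trans_le (hΦub γ' t₀)
  -- infimum of Φ
  have hΓne : Nonempty Γ := by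
    refine ⟨⟨⟨fun t => p + (t : ℝ) • (q - p),
      continuous_const.add (continuous_subtype_val.smul continuous_const)⟩, ?_, ?_⟩⟩
    · simp
    · simp
  obtain ⟨γinit⟩ := hΓne
  have hbddΦ : BddBelow (Set.range Φ) := ⟨fstar, by rintro v ⟨γ, rfl⟩; exact hΦlb γ⟩
  set cs : ℝ := sInf (Set.range Φ) with hcs
  have hcs_ge : fstar + ε ≤ cs := le_csInf ⟨Φ γinit, γinit, rfl⟩ (by rintro v ⟨γ, rfl⟩; exact hΦge γ)
  -- gradient lower bound near level cs
  set δ : ℝ := (μ * (ε/2)) ^ (1/α) with hδ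
  have hδpos : 0 < δ := Real.rpow_pos_of_pos (by positivity) _
  have hgrad_lb : ∀ x : E, cs - ε/2 ≤ f x → δ ≤ ‖fderiv ℝ f x‖ := by
    intro x hx
    have h1 : μ * (ε/2) ≤ μ * (f x - fstar) := by
      apply mul_le_mul_of_nonneg_left _ hμ.le
      linarith only [hcs_ge, hx, hε]
    have h2 : μ * (ε/2) ≤ ‖fderiv ℝ f x‖ ^ α := h1.trans (hPL x)
    have h3 := Real.rpow_le_rpow (by positivity) h2 (by positivity : (0:ℝ) ≤ 1/α)
    rwa [← Real.rpow_mul (norm_nonneg _), mul_one_div_cancel hαpos.ne', Real.rpow_one] at h3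
  -- the compact region and gradient upper bound
  set R : Set E := {x | f x ≤ cs + 1} with hR
  have hRcpt : IsCompact R := hcpt _
  have hRne : R.Nonempty := ⟨p, by simp only [hR, Set.mem_setOf_eq, hp]; linarith⟩
  obtain ⟨xM, _, hxM⟩ := hRcpt.exists_isMaxOn hRne
    ((hf.continuous_fderiv one_ne_zero).norm.continuousOn)
  set M : ℝ := max 1 ‖fderiv ℝ f xM‖ with hM
  have hMpos : (0:ℝ) < M := lt_of_lt_of_le one_pos (le_max_left _ _)
  have hMbound : ∀ x ∈ R, ‖fderiv ℝ f x‖ ≤ M := fun x hx => (hxM hx).trans (le_max_right _ _)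
  -- uniform continuity of the derivative on a neighborhood of R
  set N : Set E := cthickening 1 R with hN
  have hNcpt : IsCompact N := hRcpt.cthickening
  have hRN : R ⊆ N := self_subset_cthickening R
  have hucont := hNcpt.uniformContinuousOn_of_continuous
    ((hf.continuous_fderiv one_ne_zero).continuousOn (s := N))
  obtain ⟨η, hηpos, hη⟩ := Metric.uniformContinuousOn_iff.1 hucont (δ/2) (by positivity)
  set η' : ℝ := min (η/2) 1 with hη'
  have hη'pos : 0 < η' := lt_min (by positivity) one_pos
  have hη'le : η' ≤ 1 := min_le_right _ _
  -- Ekeland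
  set σ : ℝ := δ^2 / (4 * M) with hσ
  have hσpos : 0 < σ := by positivity
  obtain ⟨γ0, hγ0⟩ : ∃ γ0 : Γ, Φ γ0 < cs + 1 := by
    obtain ⟨v, ⟨γ0, rfl⟩, hv⟩ := exists_lt_of_csInf_lt (s := Set.range Φ)
      ⟨Φ γinit, γinit, rfl⟩ (by linarith : cs < cs + 1)
    exact ⟨γ0, hv⟩
  obtain ⟨γ, hγ1, _, hγ3⟩ := my_ekeland Φ hΦlsc fstar hΦlb hσpos γ0
  have hγcs : Φ γ ≤ cs + 1 := le_of_lt (lt_of_le_of_lt hγ1 hγ0)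
  -- the cutoff function
  set w : ℝ := ε / 2 with hw
  have hwpos : 0 < w := by positivity
  set χ : unitInterval → ℝ := fun t => min 1 (max 0 ((f (γ.1 t) - (Φ γ - w)) * (2/w))) with hχ
  have hχcont : Continuous χ :=
    (continuous_const.min ((continuous_const.max
      (((hf.continuous.comp (map_continuous γ.1)).sub continuous_const).mul continuous_const))))
  have hχ01 : ∀ t, 0 ≤ χ t ∧ χ t ≤ 1 := by
    intro t
    constructor
    · exact le_min zero_le_one (le_max_left _ _)
    · exact min_le_left _ _
  have hχ0 : ∀ t, f (γ.1 t) ≤ Φ γ - w → χ t = 0 := by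
    intro t ht
    have : (f (γ.1 t) - (Φ γ - w)) * (2/w) ≤ 0 :=
      mul_nonpos_of_nonpos_of_nonneg (by linarith) (by positivity)
    simp only [hχ]
    rw [max_eq_left this, min_eq_right zero_le_one]
  have hχ1 : ∀ t, Φ γ - w ≤ f (γ.1 t) + w/2 → True := fun _ _ => trivial
  -- the gradient vector field
  set grad : E → E := fun x => (InnerProductSpace.toDual ℝ E).symm (fderiv ℝ f x) with hgrad
  have hgradcont : Continuous grad :=
    (LinearIsometryEquiv.continuous _).comp (hf.continuous_fderiv one_ne_zero)
  have hgradnorm : ∀ x, ‖grad x‖ = ‖fderiv ℝ f x‖ :=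
    fun x => LinearIsometryEquiv.norm_map _ _
  have hgradinner : ∀ x, fderiv ℝ f x (grad x) = ‖grad x‖^2 := by
    intro x
    have : (inner ℝ (grad x) (grad x) : ℝ) = fderiv ℝ f x (grad x) :=
      InnerProductSpace.toDual_symm_apply
    rw [← this, real_inner_self_eq_norm_sq]
  -- step size
  set s : ℝ := min (η' / M) (w / δ^2) with hs
  have hspos : 0 < s := lt_min (by positivity) (by positivity)
  have hsM : s * M ≤ η' := by
    rw [hs]
    calc min (η' / M) (w / δ^2) * M ≤ (η' / M) * M :=
      mul_le_mul_of_nonneg_right (min_le_left _ _) hMpos.le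
    _ = η' := div_mul_cancel₀ _ hMpos.ne'
  have hsδw : s * δ^2 / 2 ≤ w / 2 := by
    have : s ≤ w / δ^2 := min_le_right _ _
    have h2 : s * δ^2 ≤ w := by
      rw [← le_div_iff₀ (by positivity : (0:ℝ) < δ^2)]
      exact this
    linarith
  -- the perturbed path
  have hγscont : Continuous (fun t => γ.1 t - (s * χ t) • grad (γ.1 t)) :=
    (map_continuous γ.1).sub ((continuous_const.mul hχcont).smul
      (hgradcont.comp (map_continuous γ.1)))
  set γsmap : C(unitInterval, E) := ⟨fun t => γ.1 t - (s * χ t) • grad (γ.1 t), hγscont⟩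
    with hγsmap
  have hγs0 : γsmap 0 = p := by
    have h0 : f (γ.1 0) = fstar := by rw [γ.2.1, hp]
    have : χ 0 = 0 := hχ0 0 (by rw [h0]; linarith only [hΦge γ, hw, hε])
    simp only [hγsmap, ContinuousMap.coe_mk, this, mul_zero, zero_smul, sub_zero, γ.2.1]
  have hγs1 : γsmap 1 = q := by
    have h0 : f (γ.1 1) = fstar := by rw [γ.2.2, hq]
    have : χ 1 = 0 := hχ0 1 (by rw [h0]; linarith only [hΦge γ, hw, hε])
    simp only [hγsmap, ContinuousMap.coe_mk, this, mul_zero, zero_smul, sub_zero, γ.2.2]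
  set γs : Γ := ⟨γsmap, hγs0, hγs1⟩ with hγsdef
  -- pointwise bounds
  have hkey : ∀ t, f (γsmap t) ≤ Φ γ - s * δ^2 / 2 := by
    intro t
    rcases le_or_gt (f (γ.1 t)) (Φ γ - w) with hcase | hcase
    · -- cutoff vanishes
      have hz := hχ0 t hcase
      have : γsmap t = γ.1 t := by
        simp only [hγsmap, ContinuousMap.coe_mk, hz, mul_zero, zero_smul, sub_zero]
      rw [this]
      linarith only [hcase, hsδw, hwpos]
    · -- main estimate
      set x : E := γ.1 t with hx
      have hxR : x ∈ R := by
        simp only [hR, Set.mem_setOf_eq]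
        linarith only [hΦub γ t, hγcs]
      have hxlb : δ ≤ ‖fderiv ℝ f x‖ := by
        apply hgrad_lb
        have h5 : cs ≤ Φ γ := csInf_le hbddΦ ⟨γ, rfl⟩
        linarith only [hcase, h5, hw]
      have hxub : ‖fderiv ℝ f x‖ ≤ M := hMbound x hxR
      set u : E := -((s * χ t) • grad x) with hu
      have hsχ : (0:ℝ) ≤ s * χ t := mul_nonneg hspos.le (hχ01 t).1
      have hunorm : ‖u‖ = s * χ t * ‖grad x‖ := by
        rw [hu, norm_neg, norm_smul, Real.norm_eq_abs, abs_of_nonneg hsχ]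
      have hgx : ‖grad x‖ = ‖fderiv ℝ f x‖ := hgradnorm x
      have hunorm_le : ‖u‖ ≤ η' := by
        rw [hunorm, hgx, mul_assoc]
        have hcm : χ t * ‖fderiv ℝ f x‖ ≤ M := by
          calc χ t * ‖fderiv ℝ f x‖ ≤ 1 * M :=
            mul_le_mul (hχ01 t).2 hxub (norm_nonneg _) one_pos.le
          _ = M := one_mul M
        calc s * (χ t * ‖fderiv ℝ f x‖) ≤ s * M := mul_le_mul_of_nonneg_left hcm hspos.le
        _ ≤ η' := hsM
      -- Taylor estimate
      have htay : f (x + u) ≤ f x + fderiv ℝ f x u + (δ/2) * ‖u‖ := by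
        apply taylor_ineq f (hf.differentiable one_ne_zero) x u (δ/2) (by positivity)
        intro τ hτ
        have hxN : x ∈ N := hRN hxR
        have hdist1 : dist (x + τ • u) x ≤ ‖u‖ := by
          rw [dist_eq_norm, add_sub_cancel_left, norm_smul, Real.norm_eq_abs,
            abs_of_nonneg hτ.1]
          nlinarith [norm_nonneg u, hτ.2]
        have hxτN : x + τ • u ∈ N := by
          apply mem_cthickening_of_dist_le _ x _ _ hxR
          exact hdist1.trans (hunorm_le.trans hη'le)
        have hlt : dist (x + τ • u) x < η := by
          have h6 : η' ≤ η/2 := min_le_left _ _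
          have := hdist1.trans (hunorm_le.trans h6)
          linarith
        have := hη _ hxτN _ hxN hlt
        rw [dist_eq_norm] at this
        exact this.le
      have hDu : fderiv ℝ f x u = -(s * χ t * ‖grad x‖^2) := by
        rw [hu, map_neg, map_smul, hgradinner x]
        simp [smul_eq_mul]
      have hγst : γsmap t = x + u := by
        simp only [hγsmap, ContinuousMap.coe_mk, hu, hx]
        abel
      rw [hγst]
      have hfub : f x ≤ Φ γ := hΦub γ t
      -- combined descent bound
      have hdesc : f (x + u) ≤ f x - s * χ t * ‖grad x‖ * (‖grad x‖ - δ/2) := by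
        rw [hDu] at htay
        rw [hunorm] at htay
        nlinarith only [htay]
      have hglb : δ ≤ ‖grad x‖ := by rw [hgx]; exact hxlb
      rcases eq_or_lt_of_le (hχ01 t).2 with hone | hlt1
      · -- χ t = 1
        rw [hone] at hdesc
        nlinarith only [hdesc, hfub, hspos.le,
          mul_nonneg (mul_nonneg hspos.le (sub_nonneg.2 hglb))
            (by linarith only [hglb, hδpos] : (0:ℝ) ≤ ‖grad x‖ + δ/2)]
      · -- χ t < 1, so f x is well below Φ γ
        have harg : (f x - (Φ γ - w)) * (2/w) < 1 := by
          have h7 : max 0 ((f x - (Φ γ - w)) * (2/w)) < 1 := by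
            by_contra h8
            push_neg at h8
            have : χ t = 1 := by
              simp only [hχ]
              rw [min_eq_left h8]
            rw [this] at hlt1
            exact lt_irrefl _ hlt1
          exact lt_of_le_of_lt (le_max_right _ _) h7
        have hfxlt : f x < Φ γ - w/2 := by
          have hw0 : w ≠ 0 := hwpos.ne'
          rw [div_eq_mul_inv, ← mul_assoc] at harg
          have h12 := mul_lt_mul_of_pos_right harg hwpos
          rw [mul_assoc, inv_mul_cancel₀ hw0, mul_one, one_mul] at h12
          linarith only [h12]
        have hnonneg : 0 ≤ s * χ t * ‖grad x‖ * (‖grad x‖ - δ/2) := by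
          apply mul_nonneg (mul_nonneg hsχ (norm_nonneg _))
          linarith only [hglb, hδpos]
        linarith only [hdesc, hnonneg, hfxlt, hsδw]
  -- conclude via the Ekeland inequality
  have hΦγs : Φ γs ≤ Φ γ - s * δ^2/2 := by
    apply csSup_le (hrange_ne γs)
    rintro v ⟨t, rfl⟩
    exact hkey t
  have hdistγ : dist γ γs ≤ s * M := by
    rw [Subtype.dist_eq]
    have h9 : (0:ℝ) ≤ s * M := by positivity
    rw [ContinuousMap.dist_le h9]
    intro t
    have h10 : dist (γ.1 t) (γsmap t) = ‖(s * χ t) • grad (γ.1 t)‖ := by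
      simp only [hγsmap, ContinuousMap.coe_mk, dist_eq_norm, sub_sub_cancel]
    rw [h10, norm_smul, Real.norm_eq_abs,
      abs_of_nonneg (mul_nonneg hspos.le (hχ01 t).1)]
    rcases le_or_gt (f (γ.1 t)) (Φ γ - w) with hcc | hcc
    · rw [hχ0 t hcc]
      simp only [mul_zero, zero_mul]
      positivity
    · have hxR : γ.1 t ∈ R := by
        simp only [hR, Set.mem_setOf_eq]
        linarith only [hΦub γ t, hγcs]
      have hMb := hMbound _ hxR
      rw [hgradnorm, mul_assoc]
      have hcm : χ t * ‖fderiv ℝ f (γ.1 t)‖ ≤ M := by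
        calc χ t * ‖fderiv ℝ f (γ.1 t)‖ ≤ 1 * M :=
          mul_le_mul (hχ01 t).2 hMb (norm_nonneg _) one_pos.le
        _ = M := one_mul M
      exact mul_le_mul_of_nonneg_left hcm hspos.le
  have hek := hγ3 γs
  have hfinal : s * δ^2/2 ≤ σ * (s * M) := by
    have h11 : σ * dist γ γs ≤ σ * (s * M) := mul_le_mul_of_nonneg_left hdistγ hσpos.le
    linarith only [hek, h11, hΦγs]
  rw [hσ] at hfinal
  have : δ^2 / (4*M) * (s * M) = s * δ^2/4 := by
    field_simp
  rw [this] at hfinal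
  have hsd : 0 < s * δ^2 := by positivity
  linarith only [hsd, hfinal]

end

/-- The α-PL condition with bounded minimizer set implies all sublevel sets are connected. -/
theorem sublevel_connected_of_alphaPL {n : ℕ}
    (f : EuclideanSpace ℝ (Fin n) → ℝ) (fstar : ℝ) (α μ : ℝ)
    (hf : ContDiff ℝ 1 f)
    (hα : 1 < α) (hμ : 0 < μ)
    (hmin : ∀ x, fstar ≤ f x) (hattained : ∃ x, f x = fstar)
    (hPL : ∀ x, μ * (f x - fstar) ≤ ‖fderiv ℝ f x‖ ^ α)
    (hbdd : Bornology.IsBounded {x | f x = fstar}) :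
    ∀ c : ℝ, IsPreconnected {x | f x ≤ c} := by
  intro c
  have hcl : ∀ b : ℝ, IsClosed {x : EuclideanSpace ℝ (Fin n) | f x ≤ b} :=
    fun b => isClosed_le hf.continuous continuous_const
  have hcptS : ∀ b : ℝ, IsCompact {x : EuclideanSpace ℝ (Fin n) | f x ≤ b} := fun b =>
    isCompact_of_isClosed_isBounded (hcl b)
      (isBounded_sublevel f fstar α μ hf hα hμ hmin hPL hbdd b)
  have main : ∀ b : ℝ, fstar < b → IsPreconnected {x : EuclideanSpace ℝ (Fin n) | f x ≤ b} := by
    intro b hb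
    by_contra hnc
    unfold IsPreconnected at hnc
    push_neg at hnc
    obtain ⟨U, V, hU, hV, hcover, hneU, hneV, hdisj⟩ := hnc
    have hdisj' : {x | f x ≤ b} ∩ (U ∩ V) = ∅ := hdisj
    obtain ⟨p, ⟨hpb, hpU⟩, hpstar⟩ := exists_min_in_part f fstar α μ hf hα hμ hmin hPL
      hU hV (hcptS b) hcover hdisj' hneU
    have hcover' : {x | f x ≤ b} ⊆ V ∪ U := by rwa [Set.union_comm]
    have hdisj'' : {x | f x ≤ b} ∩ (V ∩ U) = ∅ := by rwa [Set.inter_comm V U]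
    obtain ⟨q, ⟨hqb, hqV⟩, hqstar⟩ := exists_min_in_part f fstar α μ hf hα hμ hmin hPL
      hV hU (hcptS b) hcover' hdisj'' hneV
    obtain ⟨γ, hγ0, hγ1, hγlt⟩ := exists_path_small_max f fstar α μ hf hα hμ hmin hPL hcptS
      p q hpstar hqstar (ε := b - fstar) (by linarith)
    have hrs : Set.range ⇑γ ⊆ {x | f x ≤ b} := by
      rintro z ⟨t, rfl⟩
      have := hγlt t
      simp only [Set.mem_setOf_eq]
      linarith
    have hconn : IsPreconnected (Set.range ⇑γ) := isPreconnected_range (map_continuous γ)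
    have h1 : (Set.range ⇑γ ∩ U).Nonempty := ⟨p, ⟨0, hγ0⟩, hpU⟩
    have h2 : (Set.range ⇑γ ∩ V).Nonempty := ⟨q, ⟨1, hγ1⟩, hqV⟩
    obtain ⟨z, hz⟩ := hconn U V hU hV (hrs.trans hcover) h1 h2
    have hzmem : z ∈ {x | f x ≤ b} ∩ (U ∩ V) := ⟨hrs hz.1, hz.2⟩
    rw [hdisj'] at hzmem
    exact hzmem
  rcases lt_trichotomy c fstar with h | h | h
  · have hemp : {x : EuclideanSpace ℝ (Fin n) | f x ≤ c} = ∅ := by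
      ext x
      simp only [Set.mem_setOf_eq, Set.mem_empty_iff_false, iff_false, not_le]
      linarith [hmin x]
    rw [hemp]
    exact isPreconnected_empty
  · have hKeq : {x : EuclideanSpace ℝ (Fin n) | f x ≤ c}
        = ⋂ m : ℕ, {x | f x ≤ fstar + 1/(m+1)} := by
      ext x
      simp only [Set.mem_iInter, Set.mem_setOf_eq]
      constructor
      · intro hx m
        have hpos : (0:ℝ) < 1/((m:ℝ)+1) := by positivity
        rw [h] at hx
        linarith
      · intro hx
        rw [h]
        have htend : Filter.Tendsto (fun m : ℕ => fstar + 1/((m:ℝ)+1)) Filter.atTop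
            (nhds fstar) := by
          have h0 : Filter.Tendsto (fun m : ℕ => 1/((m:ℝ)+1)) Filter.atTop (nhds 0) :=
            tendsto_one_div_add_atTop_nhds_zero_nat
          have := h0.const_add fstar
          simpa using this
        exact ge_of_tendsto' htend hx
    rw [hKeq]
    apply isPreconnected_iInter_nested
    · intro m x hx
      simp only [Set.mem_setOf_eq] at *
      have hle : (1:ℝ)/((m:ℝ)+1+1) ≤ 1/((m:ℝ)+1) := by
        apply one_div_le_one_div_of_le (by positivity)
        linarith
      push_cast at hx ⊢
      linarith
    · intro m
      exact hcptS _
    · intro m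
      apply main
      have hpos : (0:ℝ) < 1/((m:ℝ)+1) := by positivity
      linarith
  · exact main c h
end

section
/- Let f : ℝⁿ → ℝ be differentiable and satisfy the α-PL condition globally for some α > 1 and μ > 0. Let P be the set of minimizers of f. Then for all x, f(x) − min f ≥ ((α−1)/α)^{α/(α−1)} · μ^{1/(α−1)} · d(x, P)^{α/(α−1)}, i.e., f satisfies an α/(α−1)-growth condition. -/
open Filter Topology

theorem aux_norm_fderiv_le {E : Type*} [NormedAddCommGroup E] [NormedSpace ℝ E]
    (φ : E → ℝ) (y : E) (φ' : E →L[ℝ] ℝ) (K : ℝ) (hK : 0 ≤ K)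
    (hd : HasFDerivAt φ φ' y)
    (h : ∀ z, φ y ≤ φ z + K * dist z y) : ‖φ'‖ ≤ K := by
  have key : ∀ v : E, -(K * ‖v‖) ≤ φ' v := by
    intro v
    have hc : HasDerivAt (fun t : ℝ => y + t • v) v 0 := by
      simpa using ((hasDerivAt_id (0:ℝ)).smul_const v).const_add y
    have hd' : HasFDerivAt φ φ' (y + (0:ℝ) • v) := by simpa using hd
    have hψ : HasDerivAt (fun t : ℝ => φ (y + t • v)) (φ' v) 0 :=
      hd'.comp_hasDerivAt 0 hc
    have hslope := hasDerivAt_iff_tendsto_slope.1 hψ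
    have hslope' : Tendsto (slope (fun t : ℝ => φ (y + t • v)) 0) (𝓝[>] 0) (𝓝 (φ' v)) :=
      hslope.mono_left (nhdsWithin_mono _ (fun t ht => ne_of_gt ht))
    refine ge_of_tendsto hslope' ?_
    filter_upwards [self_mem_nhdsWithin] with t (ht : (0:ℝ) < t)
    have hz := h (y + t • v)
    have hdist : dist (y + t • v) y = t * ‖v‖ := by
      rw [dist_eq_norm]
      simp [norm_smul, abs_of_pos ht]
    rw [slope_def_field]
    have h1 : -(K * ‖v‖) * t ≤ φ (y + t • v) - φ (y + (0:ℝ) • v) := by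
      rw [hdist] at hz
      simp only [zero_smul, add_zero]
      nlinarith
    rw [sub_zero, le_div_iff₀ ht]
    simpa using h1
  refine φ'.opNorm_le_bound hK (fun v => ?_)
  rw [Real.norm_eq_abs, abs_le]
  constructor
  · have := key v; linarith
  · have h2 := key (-v)
    rw [map_neg, norm_neg] at h2
    linarith

theorem aux_ekeland {E : Type*} [MetricSpace E] [CompleteSpace E]
    (g : E → ℝ) (hg : Continuous g) (hg0 : ∀ x, 0 ≤ g x)
    (x₀ : E) (σ : ℝ) (hσ : 0 < σ) :
    ∃ y, σ * dist y x₀ ≤ g x₀ ∧ ∀ z, g y ≤ g z + σ * dist z y := by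
  set S : E → Set E := fun x => {z | g z + σ * dist z x ≤ g x} with hS
  have hSself : ∀ x, x ∈ S x := by intro x; simp [hS]
  have hStrans : ∀ x z w, z ∈ S x → w ∈ S z → w ∈ S x := by
    intro x z w hz hw
    simp only [hS, Set.mem_setOf_eq] at *
    have htri : dist w x ≤ dist w z + dist z x := dist_triangle w z x
    nlinarith
  have hSne : ∀ x, (g '' S x).Nonempty := fun x => ⟨g x, x, hSself x, rfl⟩
  have hSbdd : ∀ x, BddBelow (g '' S x) := by
    intro x; exact ⟨0, by rintro a ⟨z, _, rfl⟩; exact hg0 z⟩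
  have hchoice : ∀ (n : ℕ) (x : E), ∃ z, z ∈ S x ∧ g z < sInf (g '' S x) + (1/2)^n := by
    intro n x
    obtain ⟨a, ⟨z, hz, rfl⟩, ha⟩ := Real.lt_sInf_add_pos (hSne x) (by positivity : (0:ℝ) < (1/2)^n)
    exact ⟨z, hz, ha⟩
  choose F hF1 hF2 using hchoice
  set u : ℕ → E := fun n => Nat.rec x₀ (fun n x => F n x) n with hu
  have hu0 : u 0 = x₀ := rfl
  have husucc : ∀ n, u (n+1) = F n (u n) := fun n => rfl
  have hmem : ∀ n, u (n+1) ∈ S (u n) := fun n => hF1 n (u n)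
  have hinf : ∀ n, g (u (n+1)) < sInf (g '' S (u n)) + (1/2)^n := fun n => hF2 n (u n)
  have hanti : Antitone (fun n => g (u n)) := by
    refine antitone_nat_of_succ_le (fun n => ?_)
    have := hmem n
    simp only [hS, Set.mem_setOf_eq] at this
    have := dist_nonneg (x := u (n+1)) (y := u n)
    nlinarith
  have hchain : ∀ n m, n ≤ m → u m ∈ S (u n) := by
    intro n m hnm
    induction m, hnm using Nat.le_induction with
    | base => exact hSself _
    | succ m hnm ih => exact hStrans _ _ _ ih (hmem m)
  -- the sequence is Cauchy
  set L : ℝ := ⨅ n, g (u n) with hL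
  have hbdd : BddBelow (Set.range fun n => g (u n)) := ⟨0, by rintro a ⟨k, rfl⟩; exact hg0 _⟩
  have hLle : ∀ n, L ≤ g (u n) := fun n => ciInf_le hbdd n
  have htendL : Tendsto (fun n => g (u n)) atTop (𝓝 L) := tendsto_atTop_ciInf hanti hbdd
  have hdistle : ∀ n m, n ≤ m → σ * dist (u n) (u m) ≤ g (u n) - g (u m) := by
    intro n m hnm
    have := hchain n m hnm
    simp only [hS, Set.mem_setOf_eq] at this
    rw [dist_comm]
    linarith
  have hcauchy : CauchySeq u := by
    refine cauchySeq_of_le_tendsto_0 (fun n => (g (u n) - L) / σ) ?_ ?_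
    · intro n m N hn hm
      rcases le_total n m with h | h
      · have h1 := hdistle n m h
        have h2 := hLle m
        have h3 : g (u n) ≤ g (u N) := hanti hn
        rw [le_div_iff₀ hσ]
        nlinarith
      · have h1 := hdistle m n h
        have h2 := hLle n
        have h3 : g (u m) ≤ g (u N) := hanti hm
        rw [dist_comm, le_div_iff₀ hσ]
        nlinarith
    · have : Tendsto (fun n => (g (u n) - L) / σ) atTop (𝓝 ((L - L)/σ)) :=
        ((htendL.sub tendsto_const_nhds).div_const σ)
      simpa using this
  obtain ⟨y, hy⟩ := cauchySeq_tendsto_of_complete hcauchy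
  have hSclosed : ∀ x, IsClosed (S x) :=
    fun x => isClosed_le (by fun_prop) continuous_const
  have hyS : ∀ n, y ∈ S (u n) := by
    intro n
    refine (hSclosed (u n)).mem_of_tendsto hy ?_
    filter_upwards [eventually_ge_atTop n] with m hm using hchain n m hm
  refine ⟨y, ?_, ?_⟩
  · have := hyS 0
    simp only [hS, Set.mem_setOf_eq, hu0] at this
    have := hg0 y
    linarith
  · intro z
    by_contra hlt
    push_neg at hlt
    have hzy : z ∈ S y := le_of_lt hlt
    have hzn : ∀ n, z ∈ S (u n) := fun n => hStrans _ y z (hyS n) hzy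
    have hge : ∀ n, g (u (n+1)) - (1/2)^n ≤ g z := by
      intro n
      have h1 : sInf (g '' S (u n)) ≤ g z := csInf_le (hSbdd _) ⟨z, hzn n, rfl⟩
      have := hinf n
      linarith
    have htz : Tendsto (fun n => g (u (n+1)) - (1/2:ℝ)^n) atTop (𝓝 (g y - 0)) := by
      refine Tendsto.sub ?_ (tendsto_pow_atTop_nhds_zero_of_lt_one (by norm_num) (by norm_num))
      have h1 : Tendsto (fun n => u (n+1)) atTop (𝓝 y) := hy.comp (tendsto_add_atTop_nat 1)
      exact (hg.continuousAt).tendsto.comp h1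
    have : g y - 0 ≤ g z := le_of_tendsto htz (Eventually.of_forall hge)
    have hd : 0 ≤ dist z y := dist_nonneg
    nlinarith

/-- The global α-PL condition implies an α/(α−1)-growth condition. -/
theorem alphaPL_implies_growth {n : ℕ}
    (f : EuclideanSpace ℝ (Fin n) → ℝ) (fstar : ℝ) (α μ : ℝ)
    (hf : Differentiable ℝ f)
    (hα : 1 < α) (hμ : 0 < μ)
    (hmin : ∀ x, fstar ≤ f x)
    (hPL : ∀ x, μ * (f x - fstar) ≤ ‖fderiv ℝ f x‖ ^ α) :
    ∀ x, ((α - 1) / α) ^ (α / (α - 1)) * μ ^ (1 / (α - 1)) *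
        (Metric.infDist x {y | f y = fstar}) ^ (α / (α - 1)) ≤ f x - fstar := by
  have hα0 : (0:ℝ) < α := lt_trans one_pos hα
  have hα1 : (0:ℝ) < α - 1 := sub_pos.2 hα
  set p : ℝ := (α - 1) / α with hpdef
  set q : ℝ := α / (α - 1) with hqdef
  have hp : 0 < p := by positivity
  have hq : 0 < q := by positivity
  have hαne : α ≠ 0 := hα0.ne'
  have hα1ne : α - 1 ≠ 0 := hα1.ne'
  have hpq : p * q = 1 := by rw [hpdef, hqdef]; field_simp
  have hpa : p - 1 + 1/α = 0 := by rw [hpdef]; field_simp; ring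
  have hqa : (1/α) * q = 1/(α-1) := by rw [hqdef]; field_simp
  set c : ℝ := p * μ ^ (1/α) with hcdef
  have hμa : (0:ℝ) < μ ^ (1/α) := Real.rpow_pos_of_pos hμ _
  have hc : 0 < c := by positivity
  set g : EuclideanSpace ℝ (Fin n) → ℝ := fun z => (f z - fstar) ^ p with hgdef
  have hg0 : ∀ z, 0 ≤ g z := fun z => Real.rpow_nonneg (sub_nonneg.2 (hmin z)) p
  have hgcont : Continuous g := by
    rw [continuous_iff_continuousAt]
    intro z
    exact (Real.continuousAt_rpow_const _ _ (Or.inr hp.le)).comp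
      ((hf.continuous.sub continuous_const).continuousAt)
  -- key claim : c * infDist ≤ g x
  have hkey : ∀ x, c * Metric.infDist x {y | f y = fstar} ≤ g x := by
    intro x
    by_contra hcon
    push_neg at hcon
    set r : ℝ := Metric.infDist x {y | f y = fstar} with hrdef
    have hr0 : 0 ≤ r := Metric.infDist_nonneg
    have hrpos : 0 < r := by
      rcases hr0.lt_or_eq with h | h
      · exact h
      · exfalso; rw [← h] at hcon; simp at hcon; nlinarith [hg0 x]
    set σ : ℝ := (g x / r + c) / 2 with hσdef
    have hgxcr : g x < c * r := hcon
    have hσpos : 0 < σ := by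
      have := hg0 x; positivity
    have hσc : σ < c := by
      rw [hσdef]
      have : g x / r < c := by rw [div_lt_iff₀ hrpos]; linarith [hgxcr]
      linarith
    obtain ⟨y, hy1, hy2⟩ := aux_ekeland g hgcont hg0 x σ hσpos
    have hdyx : dist y x < r := by
      have h1 : σ * r = (g x + c * r) / 2 := by
        rw [hσdef]; field_simp [hrpos.ne']
      have h2 : g x < σ * r := by rw [h1]; linarith
      exact (mul_lt_mul_iff_right₀ hσpos).1 (lt_of_le_of_lt hy1 h2)
    have hyP : f y ≠ fstar := by
      intro h
      have : r ≤ dist x y := Metric.infDist_le_dist_of_mem (by exact h)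
      rw [dist_comm] at this
      linarith
    have hs : 0 < f y - fstar := lt_of_le_of_ne (sub_nonneg.2 (hmin y)) (by simpa [sub_eq_zero, eq_comm] using hyP)
    -- derivative of g at y
    have hfd : HasFDerivAt (fun z => f z - fstar) (fderiv ℝ f y) y := (hf y).hasFDerivAt.sub_const fstar
    have hgd : HasFDerivAt g ((p * (f y - fstar) ^ (p - 1)) • (fderiv ℝ f y)) y :=
      hfd.rpow_const (Or.inl (ne_of_gt hs))
    have hbound := aux_norm_fderiv_le g y _ σ hσpos.le hgd hy2
    -- lower bound on the derivative norm
    have hsp : 0 < (f y - fstar) ^ (p - 1) := Real.rpow_pos_of_pos hs _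
    have hnorm : ‖(p * (f y - fstar) ^ (p - 1)) • (fderiv ℝ f y)‖
        = p * (f y - fstar) ^ (p - 1) * ‖fderiv ℝ f y‖ := by
      rw [norm_smul, Real.norm_eq_abs, abs_of_pos (by positivity)]
    have hDf : (μ * (f y - fstar)) ^ (1/α) ≤ ‖fderiv ℝ f y‖ := by
      have h1 := hPL y
      calc (μ * (f y - fstar)) ^ (1/α)
          ≤ (‖fderiv ℝ f y‖ ^ α) ^ (1/α) :=
            Real.rpow_le_rpow (by positivity) h1 (by positivity)
        _ = ‖fderiv ℝ f y‖ ^ (α * (1/α)) := (Real.rpow_mul (norm_nonneg _) _ _).symm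
        _ = ‖fderiv ℝ f y‖ := by rw [mul_one_div_cancel hα0.ne', Real.rpow_one]
    have hclow : c ≤ ‖(p * (f y - fstar) ^ (p - 1)) • (fderiv ℝ f y)‖ := by
      rw [hnorm]
      have h2 : p * (f y - fstar) ^ (p - 1) * ((μ * (f y - fstar)) ^ (1/α))
          ≤ p * (f y - fstar) ^ (p - 1) * ‖fderiv ℝ f y‖ :=
        mul_le_mul_of_nonneg_left hDf (by positivity)
      refine le_trans (le_of_eq ?_) h2
      rw [Real.mul_rpow hμ.le hs.le, hcdef]
      have h3 : (f y - fstar) ^ (p - 1) * (f y - fstar) ^ (1/α) = 1 := by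
        rw [← Real.rpow_add hs, hpa, Real.rpow_zero]
      linear_combination (-(p * μ ^ (1/α))) * h3
    linarith
  -- conclude
  intro x
  set r : ℝ := Metric.infDist x {y | f y = fstar} with hrdef
  have hr0 : 0 ≤ r := Metric.infDist_nonneg
  have h1 : (c * r) ^ q ≤ (g x) ^ q :=
    Real.rpow_le_rpow (by positivity) (hkey x) hq.le
  have h2 : (g x) ^ q = f x - fstar := by
    have hnn : 0 ≤ f x - fstar := sub_nonneg.2 (hmin x)
    simp only [hgdef]
    rw [← Real.rpow_mul hnn, hpq, Real.rpow_one]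
  have h3 : (c * r) ^ q = p ^ q * μ ^ (1/(α-1)) * r ^ q := by
    rw [Real.mul_rpow hc.le hr0, hcdef, Real.mul_rpow hp.le hμa.le,
      ← Real.rpow_mul hμ.le, hqa]
  rw [h3, h2] at h1
  exact h1
end

section
/- Let f : ℝⁿ × ℝᵐ → ℝ be continuously differentiable such that for each parameter p ∈ ℝᵐ, the function a ↦ f(a, p) is incave (every stationary point in a is a global maximum), decreasing at infinity in a, and hence attains its maximum on a compact, connected set BR(p) = argmax_a f(a, p). Then the set-valued map p ↦ BR(p) is outer semicontinuous: for every p̄ and every open V ⊇ BR(p̄), there exists an open U ∋ p̄ with BR(p) ⊆ V for all p ∈ U. -/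
open Metric Set

section Aux

variable {E : Type*} [NormedAddCommGroup E] [InnerProductSpace ℝ E] [ProperSpace E]
  [CompleteSpace E]

local notation "⟪" x ", " y "⟫" => @inner ℝ _ _ x y

lemma fderiv_zero_of_forall_le {g : E → ℝ} {b : E} (h : ∀ a', g a' ≤ g b) :
    fderiv ℝ g b = 0 :=
  IsLocalMax.fderiv_eq_zero (Filter.Eventually.of_forall fun y => h y)

lemma superlevel_isCompact {g : E → ℝ} (hg : Continuous g) {a : E}
    (hd : ∃ K : Set E, IsCompact K ∧ ∀ z ∉ K, g z < g a) :
    IsCompact {x | g a ≤ g x} := by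
  obtain ⟨K, hK, hKlt⟩ := hd
  refine hK.of_isClosed_subset (isClosed_le continuous_const hg) ?_
  intro z hz
  by_contra hzK
  exact absurd (hKlt z hzK) (not_lt.mpr hz)

set_option maxHeartbeats 1600000 in
/-- The argmax set of a C¹ incave function that is decreasing at infinity is preconnected.
This is proved by a discrete mountain-pass (gradient ascent) argument. -/
lemma argmax_preconnected {g : E → ℝ} (hg : ContDiff ℝ 1 g)
    (hinc : ∀ a, fderiv ℝ g a = 0 → ∀ a', g a' ≤ g a)
    (hd : ∀ a, ∃ K : Set E, IsCompact K ∧ ∀ z ∉ K, g z < g a) :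
    IsPreconnected {a : E | ∀ a', g a' ≤ g a} := by
  set B := {a : E | ∀ a', g a' ≤ g a} with hBdef
  rintro u v hu hv hBuv ⟨b1, hb1B, hb1u⟩ ⟨b2, hb2B, hb2v⟩
  by_contra hne
  rw [Set.not_nonempty_iff_eq_empty] at hne
  have hgc : Continuous g := hg.continuous
  have hgd : Differentiable ℝ g := hg.differentiable one_ne_zero
  -- B is compact
  have hBclosed : IsClosed B := by
    have : B = ⋂ a', {a : E | g a' ≤ g a} := by
      ext x; simp [hBdef, Set.mem_iInter]
    rw [this]
    exact isClosed_iInter fun a' => isClosed_le continuous_const hgc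
  have hBcompact : IsCompact B := by
    obtain ⟨K, hK, hKlt⟩ := hd b1
    refine hK.of_isClosed_subset hBclosed ?_
    intro z hz
    by_contra hzK
    exact absurd (hz b1) (not_le.mpr (hKlt z hzK))
  -- separate `B \ v` and `B \ u` by disjoint open sets
  have hS1S2 : Disjoint (B \ v) (B \ u) := by
    rw [Set.disjoint_left]
    rintro x ⟨hxB, hxv⟩ ⟨_, hxu⟩
    rcases hBuv hxB with h | h
    · exact hxu h
    · exact hxv h
  obtain ⟨W1, W2, hW1, hW2, hS1W1, hS2W2, hW12⟩ :=
    SeparatedNhds.of_isCompact_isCompact (hBcompact.diff hv) (hBcompact.diff hu) hS1S2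
  have hb1W1 : b1 ∈ W1 := hS1W1 ⟨hb1B, fun hv' => (Set.eq_empty_iff_forall_notMem.mp hne b1)
    ⟨hb1B, hb1u, hv'⟩⟩
  have hb2W2 : b2 ∈ W2 := hS2W2 ⟨hb2B, fun hu' => (Set.eq_empty_iff_forall_notMem.mp hne b2)
    ⟨hb2B, hu', hb2v⟩⟩
  have hBW : B ⊆ W1 ∪ W2 := by
    intro x hxB
    rcases hBuv hxB with h | h
    · have hxv : x ∉ v := fun hv' => (Set.eq_empty_iff_forall_notMem.mp hne x) ⟨hxB, h, hv'⟩
      exact Or.inl (hS1W1 ⟨hxB, hxv⟩)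
    · have hxu : x ∉ u := fun hu' => (Set.eq_empty_iff_forall_notMem.mp hne x) ⟨hxB, hu', h⟩
      exact Or.inr (hS2W2 ⟨hxB, hxu⟩)
  set M := g b1 with hMdef
  -- the segment from b1 to b2
  set seg := segment ℝ b1 b2 with hsegdef
  have hsegcompact : IsCompact seg := by
    rw [hsegdef, segment_eq_image]
    exact isCompact_Icc.image (by continuity)
  have hsegne : seg.Nonempty := ⟨b1, left_mem_segment ℝ b1 b2⟩
  obtain ⟨s0, hs0seg, hs0min⟩ := hsegcompact.exists_isMinOn hsegne hgc.continuousOn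
  have hs0min' : ∀ x ∈ seg, g s0 ≤ g x := fun x hx => hs0min hx
  set c0 := g s0 with hc0def
  have hc0M : c0 ≤ M := hs0min' b1 (left_mem_segment ℝ b1 b2)
  -- the case where the whole segment consists of maximizers
  by_cases hc0eq : M ≤ c0
  · have hsegB : seg ⊆ B := by
      intro x hx a'
      exact le_trans (le_trans (hb1B a') hc0eq) (hs0min' x hx)
    have hsegpre : IsPreconnected seg := (convex_segment b1 b2).isPreconnected
    obtain ⟨z, hzseg, hz12⟩ := hsegpre W1 W2 hW1 hW2 (fun x hx => hBW (hsegB hx))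
      ⟨b1, left_mem_segment ℝ b1 b2, hb1W1⟩ ⟨b2, right_mem_segment ℝ b1 b2, hb2W2⟩
    exact Set.disjoint_left.mp hW12 hz12.1 hz12.2
  push_neg at hc0eq
  -- compact playgrounds
  have hA0compact : IsCompact {x | c0 ≤ g x} := superlevel_isCompact hgc (hd s0)
  set A0 := {x : E | c0 ≤ g x} with hA0def
  -- find a level c1 < M whose superlevel set is inside W1 ∪ W2
  obtain ⟨⟨c1, hc1c0, hc1M⟩, hA1sub⟩ :
      ∃ c1 : Set.Ico c0 M, {x | c1.1 ≤ g x} ⊆ W1 ∪ W2 := by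
    have hne' : Nonempty (Set.Ico c0 M) := ⟨⟨c0, le_refl c0, hc0eq⟩⟩
    refine exists_subset_nhds_of_isCompact' (V := fun t : Set.Ico c0 M => {x | t.1 ≤ g x})
      ?_ ?_ ?_ ?_
    · rintro s t
      exact ⟨⟨max s.1 t.1, le_max_of_le_left s.2.1, max_lt s.2.2 t.2.2⟩,
        fun x (hx : max s.1 t.1 ≤ g x) => le_trans (le_max_left _ _) hx,
        fun x (hx : max s.1 t.1 ≤ g x) => le_trans (le_max_right _ _) hx⟩
    · intro t
      refine hA0compact.of_isClosed_subset (isClosed_le continuous_const hgc) ?_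
      intro x hx; exact le_trans t.2.1 hx
    · intro t; exact isClosed_le continuous_const hgc
    · intro x hx
      have hxM : M ≤ g x := by
        by_contra hxM
        push_neg at hxM
        have hmem := Set.mem_iInter.mp hx ⟨max c0 ((g x + M)/2),
          le_max_left _ _, by rw [max_lt_iff]; constructor <;> linarith⟩
        simp only [Set.mem_setOf_eq] at hmem
        have : g x < max c0 ((g x + M)/2) := lt_of_lt_of_le (by linarith) (le_max_right _ _)
        linarith [lt_of_lt_of_le this hmem]
      have hxB : x ∈ B := fun a' => le_trans (hb1B a') hxM
      exact (hW1.union hW2).mem_nhds (hBW hxB)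
  set ε := (M - c1)/2 with hεdef
  have hεpos : 0 < ε := by simp only [hεdef]; linarith
  -- the compact region where the gradient is bounded below
  set D := {x : E | c0 ≤ g x ∧ g x ≤ M - ε} with hDdef
  have hDcompact : IsCompact D := by
    refine hA0compact.of_isClosed_subset
      ((isClosed_le continuous_const hgc).inter (isClosed_le hgc continuous_const)) ?_
    intro x hx; exact hx.1
  have hDne : D.Nonempty := ⟨s0, le_refl c0, by
    rw [← hc0def]; linarith [hεpos, hc1c0, hεdef.le, hεdef.ge]⟩
  have hfderivcont : Continuous fun x => fderiv ℝ g x := hg.continuous_fderiv one_ne_zero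
  have hnormcont : Continuous fun x => ‖fderiv ℝ g x‖ := hfderivcont.norm
  obtain ⟨xδ, hxδD, hxδmin⟩ := hDcompact.exists_isMinOn hDne hnormcont.continuousOn
  set δ := ‖fderiv ℝ g xδ‖ with hδdef
  have hδpos : 0 < δ := by
    rcases lt_or_eq_of_le (norm_nonneg (fderiv ℝ g xδ)) with h | h
    · exact h
    · exfalso
      have h0 : fderiv ℝ g xδ = 0 := by rwa [eq_comm, norm_eq_zero] at h
      have := hinc xδ h0 b1
      have := hxδD.2
      linarith [hb1B xδ, hεpos, hMdef.le, hMdef.ge]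
  have hδD : ∀ x ∈ D, δ ≤ ‖fderiv ℝ g x‖ := fun x hx => hxδmin hx
  -- bound on the gradient on a thickening of A0
  set P := cthickening 1 A0 with hPdef
  have hPcompact : IsCompact P := hA0compact.cthickening
  have hA0P : A0 ⊆ P := self_subset_cthickening A0
  have hPne : P.Nonempty := ⟨s0, hA0P (le_refl c0)⟩
  obtain ⟨xG, hxGP, hxGmax⟩ := hPcompact.exists_isMaxOn hPne hnormcont.continuousOn
  set G' := ‖fderiv ℝ g xG‖ + 1 with hG'def
  have hG'pos : 0 < G' := by positivity
  have hG'bound : ∀ x ∈ P, ‖fderiv ℝ g x‖ ≤ G' := fun x hx => by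
    have h : ‖fderiv ℝ g x‖ ≤ ‖fderiv ℝ g xG‖ := hxGmax hx
    simp only [hG'def]; linarith
  have hδG' : δ ≤ G' := le_trans (hG'bound xδ (hA0P hxδD.1)) (le_refl G')
  set κ := δ^2/(2*G') with hκdef
  have hκpos : 0 < κ := by positivity
  have hκδ : κ ≤ δ/2 := by
    rw [hκdef, div_le_div_iff₀ (by positivity) (by norm_num)]
    nlinarith
  -- uniform continuity of the derivative on P
  obtain ⟨η, hηpos, hηUC⟩ : ∃ η > 0, ∀ x ∈ P, ∀ y ∈ P, dist x y < η →
      dist (fderiv ℝ g x) (fderiv ℝ g y) < κ := by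
    have := hPcompact.uniformContinuousOn_of_continuous hfderivcont.continuousOn
    rw [Metric.uniformContinuousOn_iff] at this
    obtain ⟨η, hηpos, h⟩ := this κ hκpos
    exact ⟨η, hηpos, fun x hx y hy hxy => h x hx y hy hxy⟩
  -- the step size
  set t := min (min (1/G') ((η/2)/G')) (2*ε/δ^2) with htdef
  have htpos : 0 < t := by
    refine lt_min (lt_min (by positivity) (by positivity)) (by positivity)
  have htG1 : t * G' ≤ 1 := by
    have : t ≤ 1/G' := le_trans (min_le_left _ _) (min_le_left _ _)
    rw [le_div_iff₀ hG'pos] at this; linarith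
  have htGη : t * G' ≤ η/2 := by
    have : t ≤ (η/2)/G' := le_trans (min_le_left _ _) (min_le_right _ _)
    rw [le_div_iff₀ hG'pos] at this; linarith
  set τ := t*δ^2/2 with hτdef
  have hτpos : 0 < τ := by positivity
  have hτε : τ ≤ ε := by
    have ht3 : t ≤ 2*ε/δ^2 := min_le_right _ _
    rw [le_div_iff₀ (by positivity)] at ht3
    simp only [hτdef]; linarith
  -- the gradient map and the ascent step
  set φ : E → E := fun x => (InnerProductSpace.toDual ℝ E).symm (fderiv ℝ g x) with hφdef
  have hφnorm : ∀ x, ‖φ x‖ = ‖fderiv ℝ g x‖ := fun x =>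
    LinearIsometryEquiv.norm_map _ _
  have hφcont : Continuous φ := (InnerProductSpace.toDual ℝ E).symm.continuous.comp hfderivcont
  set F : E → E := fun x => x + t • φ x with hFdef
  have hFcont : Continuous F := continuous_id.add (hφcont.const_smul t)
  -- the key one-step estimate
  have hstep : ∀ x, c0 ≤ g x →
      g x + t * ‖φ x‖^2 - κ * (t * ‖φ x‖) ≤ g (F x) := by
    intro x hxA0
    set L := fderiv ℝ g x with hLdef
    set w := t • φ x with hwdef
    have hwnorm : ‖w‖ = t * ‖φ x‖ := by
      rw [hwdef, norm_smul, Real.norm_eq_abs, abs_of_pos htpos]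
    have hwG : ‖w‖ ≤ t * G' := by
      rw [hwnorm]
      have := hG'bound x (hA0P hxA0)
      rw [← hφnorm] at this
      nlinarith
    have hLw : L w = t * ‖φ x‖^2 := by
      rw [hwdef, map_smul, smul_eq_mul]
      congr 1
      have : L (φ x) = ⟪φ x, φ x⟫ := by
        rw [hφdef]
        exact (InnerProductSpace.toDual_symm_apply).symm
      rw [this, real_inner_self_eq_norm_sq]
    -- points of the segment [x, x + w] lie in P and are η-close to x
    have hsegP : ∀ z ∈ segment ℝ x (x + w), z ∈ P ∧ dist z x < η := by
      intro z hz
      have hzball : z ∈ closedBall x ‖w‖ := by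
        refine (convex_closedBall x ‖w‖).segment_subset ?_ ?_ hz
        · simp [norm_nonneg]
        · simp only [mem_closedBall]
          rw [dist_eq_norm]
          simp
      rw [mem_closedBall, dist_comm] at hzball
      have hd1 : dist z x ≤ t * G' := le_trans (by rwa [dist_comm]) hwG
      constructor
      · refine mem_cthickening_of_dist_le z x 1 A0 hxA0 ?_
        exact le_trans hd1 htG1
      · exact lt_of_le_of_lt (le_trans hd1 htGη) (by linarith)
    -- mean value estimate for h := g - L
    have hmvt : ‖(g (x + w) - L (x + w)) - (g x - L x)‖ ≤ κ * ‖(x + w) - x‖ := by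
      refine Convex.norm_image_sub_le_of_norm_fderiv_le
        (f := fun z => g z - L z) (fun z _ => (hgd z).sub (L.differentiableAt)) ?_
        (convex_segment x (x + w)) (left_mem_segment ℝ x (x + w))
        (right_mem_segment ℝ x (x + w))
      intro z hz
      obtain ⟨hzP, hzη⟩ := hsegP z hz
      rw [fderiv_fun_sub (hgd z) (L.differentiableAt), L.fderiv]
      have := hηUC z hzP x (hA0P hxA0) hzη
      rw [dist_eq_norm] at this
      exact le_of_lt this
    have hxwx : (x + w) - x = w := by abel
    rw [hxwx, hwnorm] at hmvt
    have hLsub : L (x + w) - L x = L w := by rw [map_add]; abel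
    rw [Real.norm_eq_abs] at hmvt
    have habs := abs_le.mp hmvt
    have hFx : F x = x + w := rfl
    rw [hFx]
    have h1 : -(κ * (t * ‖φ x‖)) ≤ (g (x + w) - L (x + w)) - (g x - L x) := habs.1
    have h2 : (g (x + w) - L (x + w)) - (g x - L x)
        = g (x + w) - g x - L w := by rw [← hLsub]; ring
    rw [h2] at h1
    rw [← hLw]
    linarith
  -- the two case estimates
  have hstep1 : ∀ x, c0 ≤ g x → δ ≤ ‖φ x‖ → g x + τ ≤ g (F x) := by
    intro x hx hφx
    have := hstep x hx
    have hk : κ ≤ δ/2 := hκδ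
    have h1 : t * ‖φ x‖^2 - κ * (t * ‖φ x‖) ≥ t*δ^2/2 := by
      have h2 : δ * (δ - κ) ≤ ‖φ x‖ * (‖φ x‖ - κ) :=
        mul_le_mul hφx (by linarith) (by linarith) (norm_nonneg _)
      have h3 : t * (δ * (δ - κ)) ≤ t * (‖φ x‖ * (‖φ x‖ - κ)) :=
        mul_le_mul_of_nonneg_left h2 htpos.le
      have h4 : 0 ≤ t * δ * (δ/2 - κ) :=
        mul_nonneg (mul_nonneg htpos.le hδpos.le) (by linarith)
      nlinarith [h3, h4]
    simp only [hτdef]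
    linarith
  have hstep2 : ∀ x, c0 ≤ g x → g x - τ ≤ g (F x) := by
    intro x hx
    have := hstep x hx
    have hφx : 0 ≤ ‖φ x‖ := norm_nonneg _
    have h1 : t * ‖φ x‖^2 - κ * (t * ‖φ x‖) ≥ -(t*δ^2/2) := by
      have h2 : -(κ^2/4) ≤ ‖φ x‖^2 - κ*‖φ x‖ := by nlinarith [sq_nonneg (‖φ x‖ - κ/2)]
      have h3 : t * (-(κ^2/4)) ≤ t * (‖φ x‖^2 - κ*‖φ x‖) := mul_le_mul_of_nonneg_left h2 htpos.le
      have h4 : κ^2 ≤ δ^2/2 := by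
        nlinarith [mul_nonneg (by linarith : (0:ℝ) ≤ δ/2 - κ) (by linarith : (0:ℝ) ≤ δ/2 + κ)]
      have h5 : t * κ^2 ≤ t * (δ^2/2) := mul_le_mul_of_nonneg_left h4 htpos.le
      have h6 : (0:ℝ) ≤ t * δ^2 := by positivity
      nlinarith [h3, h5, h6]
    simp only [hτdef]
    linarith
  have hc1eq : M - 2*ε = c1 := by simp only [hεdef]; ring
  -- the invariant of the discrete ascent
  have hinv : ∀ x ∈ seg, ∀ k : ℕ, min (c0 + k*τ) (M - ε - τ) ≤ g (F^[k] x) := by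
    intro x hxseg k
    induction k with
    | zero =>
      simp only [Function.iterate_zero, id_eq, Nat.cast_zero, zero_mul, add_zero]
      exact le_trans (min_le_left _ _) (hs0min' x hxseg)
    | succ k ih =>
      set y := F^[k] x with hydef
      have hyc0 : c0 ≤ g y := by
        refine le_trans ?_ ih
        rw [le_min_iff]
        constructor
        · nlinarith [Nat.cast_nonneg (α := ℝ) k]
        · linarith
      rw [Function.iterate_succ_apply', ← hydef]
      by_cases hφy : δ ≤ ‖φ y‖
      · have hFy := hstep1 y hyc0 hφy
        rcases le_total (c0 + k*τ) (M - ε - τ) with h | h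
        · rw [min_eq_left h] at ih
          refine le_trans (min_le_left _ _) ?_
          push_cast
          linarith
        · rw [min_eq_right h] at ih
          refine le_trans (min_le_right _ _) ?_
          linarith
      · push_neg at hφy
        have hyε : M - ε < g y := by
          by_contra hyε
          push_neg at hyε
          have : δ ≤ ‖fderiv ℝ g y‖ := hδD y ⟨hyc0, hyε⟩
          rw [← hφnorm] at this
          linarith
        have hFy := hstep2 y hyc0
        refine le_trans (min_le_right _ _) ?_
        linarith
  -- number of steps
  obtain ⟨N, hN⟩ := exists_nat_ge ((M - c0)/τ)
  have hNτ : M - c0 ≤ N * τ := by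
    rw [div_le_iff₀ hτpos] at hN
    linarith
  have hclimb : ∀ x ∈ seg, c1 ≤ g (F^[N] x) := by
    intro x hxseg
    have := hinv x hxseg N
    have hmin : c1 ≤ min (c0 + N*τ) (M - ε - τ) := by
      rw [le_min_iff]
      constructor
      · linarith
      · linarith
    linarith [le_trans hmin this]
  -- conclusion: the image of the segment under the flow is connected,
  -- inside W1 ∪ W2, and touches both W1 and W2
  have hENcont : Continuous (F^[N]) := hFcont.iterate N
  have hCpre : IsPreconnected (F^[N] '' seg) :=
    ((convex_segment b1 b2).isPreconnected).image _ hENcont.continuousOn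
  have hCsub : F^[N] '' seg ⊆ W1 ∪ W2 := by
    rintro _ ⟨x, hxseg, rfl⟩
    exact hA1sub (hclimb x hxseg)
  have hfix : ∀ b ∈ B, F^[N] b = b := by
    intro b hbB
    have h0 : fderiv ℝ g b = 0 := fderiv_zero_of_forall_le hbB
    have hφb : φ b = 0 := by rw [hφdef]; simp only [h0, map_zero]
    have hFb : F b = b := by rw [hFdef]; simp [hφb]
    exact Function.iterate_fixed hFb N
  obtain ⟨z, hzC, hz12⟩ := hCpre W1 W2 hW1 hW2 hCsub
    ⟨b1, ⟨b1, left_mem_segment ℝ b1 b2, hfix b1 hb1B⟩, hb1W1⟩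
    ⟨b2, ⟨b2, right_mem_segment ℝ b1 b2, hfix b2 hb2B⟩, hb2W2⟩
  exact Set.disjoint_left.mp hW12 hz12.1 hz12.2

end Aux

set_option maxHeartbeats 1600000 in
/-- Outer semicontinuity of the best-response map of an incave function that is
decreasing at infinity in the decision variable. -/
theorem bestResponse_outer_semicontinuous {n m : ℕ}
    (f : EuclideanSpace ℝ (Fin n) → EuclideanSpace ℝ (Fin m) → ℝ)
    (hf : ContDiff ℝ 1 (fun p : EuclideanSpace ℝ (Fin n) × EuclideanSpace ℝ (Fin m) =>
      f p.1 p.2))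
    (hincave : ∀ p a, fderiv ℝ (fun a' => f a' p) a = 0 → ∀ a', f a' p ≤ f a p)
    (hdec : ∀ p a, ∃ K : Set (EuclideanSpace ℝ (Fin n)),
      IsCompact K ∧ ∀ z ∉ K, f z p < f a p) :
    ∀ pbar : EuclideanSpace ℝ (Fin m),
      ∀ V : Set (EuclideanSpace ℝ (Fin n)), IsOpen V →
        {a | ∀ a', f a' pbar ≤ f a pbar} ⊆ V →
        ∃ U : Set (EuclideanSpace ℝ (Fin m)), IsOpen U ∧ pbar ∈ U ∧
          ∀ p ∈ U, {a | ∀ a', f a' p ≤ f a p} ⊆ V := by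
  intro pbar V hV hBV
  have hcont : Continuous fun q : EuclideanSpace ℝ (Fin n) × EuclideanSpace ℝ (Fin m) =>
      f q.1 q.2 := hf.continuous
  have hslice : ∀ p, ContDiff ℝ 1 (fun a => f a p) := fun p =>
    hf.comp (contDiff_id.prodMk contDiff_const)
  set B := {a | ∀ a', f a' pbar ≤ f a pbar} with hBdef
  -- a maximizer for pbar
  obtain ⟨K, hK, hKlt⟩ := hdec pbar 0
  obtain ⟨abar, habarmem, habarmax⟩ := (hK.insert 0).exists_isMaxOn
    (Set.insert_nonempty 0 K) (hslice pbar).continuous.continuousOn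
  have habar : ∀ a', f a' pbar ≤ f abar pbar := by
    intro a'
    by_cases h : a' ∈ insert 0 K
    · exact habarmax h
    · have h1 : a' ∉ K := fun hK' => h (Set.mem_insert_of_mem 0 hK')
      exact le_trans (hKlt a' h1).le (habarmax (Set.mem_insert 0 K))
  have habarB : abar ∈ B := habar
  have hBne : B.Nonempty := ⟨abar, habarB⟩
  have hBclosed : IsClosed B := by
    have : B = ⋂ a', {a | f a' pbar ≤ f a pbar} := by
      ext x; simp [hBdef, Set.mem_iInter]
    rw [this]
    exact isClosed_iInter fun a' =>
      isClosed_le continuous_const (hslice pbar).continuous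
  have hBcompact : IsCompact B := by
    refine hK.of_isClosed_subset hBclosed ?_
    intro z hz
    by_contra hzK
    exact absurd (le_trans (habarmax (Set.mem_insert 0 K)) (hz abar)) (not_le.mpr (hKlt z hzK))
  -- the case V = univ
  by_cases hVuniv : V = univ
  · exact ⟨univ, isOpen_univ, mem_univ _, fun p _ a _ => hVuniv ▸ mem_univ a⟩
  have hVc : Vᶜ.Nonempty := nonempty_compl.mpr hVuniv
  have hVcclosed : IsClosed Vᶜ := hV.isClosed_compl
  -- a safety margin r around B inside V
  obtain ⟨bmin, hbminB, hbminmin⟩ := hBcompact.exists_isMinOn hBne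
    (continuous_infDist_pt Vᶜ).continuousOn
  set r := infDist bmin Vᶜ / 2 with hrdef
  have hrpos : 0 < r := by
    have h0 : infDist bmin Vᶜ ≠ 0 := by
      intro h
      have : bmin ∈ Vᶜ := by
        rw [← hVcclosed.closure_eq]
        exact (mem_closure_iff_infDist_zero hVc).mpr h
      exact this (hBV hbminB)
    have h1 : 0 ≤ infDist bmin Vᶜ := infDist_nonneg
    rw [hrdef]
    rcases lt_or_eq_of_le h1 with h | h
    · linarith
    · exact absurd h.symm h0
  have hWV : ∀ x, infDist x B ≤ r → x ∈ V := by
    intro x hx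
    obtain ⟨b, hbB, hbd⟩ := hBcompact.exists_infDist_eq_dist hBne x
    by_contra hxV
    have h1 : infDist b Vᶜ ≤ dist b x := infDist_le_dist_of_mem hxV
    have h2 : infDist bmin Vᶜ ≤ infDist b Vᶜ := hbminmin hbB
    rw [dist_comm, ← hbd] at h1
    rw [hrdef] at hx
    linarith [hrpos]
  -- the sphere S around B and the margin δ
  set M := f abar pbar with hMdef
  set S := {x : EuclideanSpace ℝ (Fin n) | infDist x B = r} with hSdef
  have hScompact : IsCompact S := by
    have hSclosed : IsClosed S :=
      IsClosed.preimage (continuous_infDist_pt B) isClosed_singleton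
    obtain ⟨R, hR⟩ := hBcompact.isBounded.subset_closedBall bmin
    refine isCompact_of_isClosed_isBounded hSclosed ?_
    refine (isBounded_closedBall (x := bmin) (r := R + (r + 1))).subset ?_
    intro x hx
    have h1 : infDist x B < r + 1 := by
      have := hx; simp only [hSdef, Set.mem_setOf_eq] at this; linarith
    obtain ⟨b, hbB, hbd⟩ := (infDist_lt_iff hBne).mp h1
    have h2 : dist b bmin ≤ R := hR hbB
    have h3 : dist x bmin ≤ dist x b + dist b bmin := dist_triangle x b bmin
    simp only [mem_closedBall]
    linarith
  have hSub : ∀ x ∈ S, f x pbar < M := by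
    intro x hx
    have hxB : x ∉ B := by
      intro h
      have h0 : infDist x B = 0 := infDist_zero_of_mem h
      have h1 : infDist x B = r := hx
      rw [h0] at h1
      exact absurd h1.symm (ne_of_gt hrpos)
    have h2 : ¬∀ a', f a' pbar ≤ f x pbar := hxB
    push_neg at h2
    obtain ⟨a', ha'⟩ := h2
    exact lt_of_lt_of_le ha' (habar a')
  obtain ⟨δ, hδpos, hSδ⟩ : ∃ δ > 0, ∀ x ∈ S, f x pbar ≤ M - 2*δ := by
    rcases eq_empty_or_nonempty S with hSe | hSne
    · exact ⟨1, one_pos, by simp [hSe]⟩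
    · obtain ⟨smax, hsmaxS, hsmaxmax⟩ := hScompact.exists_isMaxOn hSne
        (hslice pbar).continuous.continuousOn
      refine ⟨(M - f smax pbar)/2, by linarith [hSub smax hsmaxS], fun x hx => ?_⟩
      have h1 : f x pbar ≤ f smax pbar := hsmaxmax hx
      linarith [hSub smax hsmaxS]
  -- an open neighborhood of pbar where the estimates persist
  have hO : IsOpen {q : EuclideanSpace ℝ (Fin n) × EuclideanSpace ℝ (Fin m) |
      f q.1 q.2 < M - δ} := isOpen_lt hcont continuous_const
  obtain ⟨u, w, hu, hw, hSu, hpw, huw⟩ := generalized_tube_lemma hScompact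
    (isCompact_singleton (x := pbar)) hO (by
      rintro ⟨x, p⟩ ⟨hx, hp⟩
      simp only [Set.mem_singleton_iff] at hp
      subst hp
      simp only [Set.mem_setOf_eq]
      linarith [hSδ x hx])
  set Ub := {p | M - δ < f abar p} with hUbdef
  have hUbopen : IsOpen Ub := isOpen_lt continuous_const
    (hcont.comp (Continuous.prodMk_right abar))
  have hUbmem : pbar ∈ Ub := by
    simp only [hUbdef, Set.mem_setOf_eq, ← hMdef]
    linarith
  refine ⟨w ∩ Ub, hw.inter hUbopen, ⟨hpw rfl, hUbmem⟩, ?_⟩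
  rintro p ⟨hpw', hpUb⟩ b hb
  -- now work with the slice at p
  have hb' : ∀ a', f a' p ≤ f b p := fun a' => hb a'
  have hSp : ∀ x ∈ S, f x p < M - δ := by
    intro x hx
    have hmem : (x, p) ∈ u ×ˢ w := Set.mk_mem_prod (hSu hx) hpw'
    exact huw hmem
  have hcp : M - δ < f abar p := hpUb
  -- the superlevel set A at level f abar p
  have hA : IsCompact {x | f abar p ≤ f x p} := superlevel_isCompact
    (hslice p).continuous (hdec p abar)
  set A := {x : EuclideanSpace ℝ (Fin n) | f abar p ≤ f x p} with hAdef
  have hAS : ∀ x ∈ A, x ∉ S := by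
    intro x hxA hxS
    have h1 : f x p < M - δ := hSp x hxS
    have h2 : f abar p ≤ f x p := hxA
    linarith
  -- the part of A near B, and its maximizer
  set A1 := A ∩ {x | infDist x B ≤ r} with hA1def
  have hA1compact : IsCompact A1 := hA.inter_right
    (isClosed_le (continuous_infDist_pt B) continuous_const)
  have habarA1 : abar ∈ A1 := ⟨show f abar p ≤ f abar p from le_refl _, by
    simp only [Set.mem_setOf_eq, infDist_zero_of_mem habarB]; linarith⟩
  obtain ⟨x1, hx1A1, hx1max⟩ := hA1compact.exists_isMaxOn ⟨abar, habarA1⟩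
    (hslice p).continuous.continuousOn
  set A2 := A ∩ {x | r ≤ infDist x B} with hA2def
  have hA2compact : IsCompact A2 := hA.inter_right
    (isClosed_le continuous_const (continuous_infDist_pt B))
  have hx1A2 : x1 ∉ A2 := by
    rintro ⟨hx1A, hx1r⟩
    exact hAS x1 hx1A1.1 (le_antisymm hx1A1.2 hx1r)
  -- x1 is a local maximum of the slice
  obtain ⟨η, hηpos, hηball⟩ : ∃ η > 0, ∀ y ∈ ball x1 η, y ∉ A2 := by
    rcases eq_empty_or_nonempty A2 with hA2e | hA2ne
    · exact ⟨1, one_pos, fun y _ hy => by rw [hA2e] at hy; exact hy⟩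
    · refine ⟨infDist x1 A2, ?_, ?_⟩
      · have h0 : infDist x1 A2 ≠ 0 := by
          intro h
          have : x1 ∈ A2 := by
            rw [← (hA2compact.isClosed).closure_eq]
            exact (mem_closure_iff_infDist_zero hA2ne).mpr h
          exact hx1A2 this
        rcases lt_or_eq_of_le (infDist_nonneg (s := A2) (x := x1)) with h | h
        · exact h
        · exact absurd h.symm h0
      · intro y hy hyA2
        have h1 : infDist x1 A2 ≤ dist x1 y := infDist_le_dist_of_mem hyA2
        rw [mem_ball, dist_comm] at hy
        linarith
  have hx1loc : IsLocalMax (fun a => f a p) x1 := by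
    have hball : ∀ y ∈ ball x1 η, f y p ≤ f x1 p := by
      intro y hy
      by_cases hyA : f abar p ≤ f y p
      · rcases le_total (infDist y B) r with h | h
        · exact hx1max ⟨hyA, h⟩
        · exact absurd (⟨hyA, h⟩ : y ∈ A2) (hηball y hy)
      · push_neg at hyA
        exact le_trans hyA.le (hx1max habarA1)
    exact Filter.eventually_iff_exists_mem.mpr
      ⟨ball x1 η, ball_mem_nhds x1 hηpos, hball⟩
  have hx1glob : ∀ a', f a' p ≤ f x1 p :=
    hincave p x1 hx1loc.fderiv_eq_zero
  have hx1dist : infDist x1 B < r := by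
    have h2 : infDist x1 B ≤ r := hx1A1.2
    rcases lt_or_eq_of_le h2 with h | h
    · exact h
    · exact absurd h (fun h' => hAS x1 hx1A1.1 h')
  -- the argmax set at p is preconnected; conclude by the intermediate value theorem
  have hpre : IsPreconnected {a : EuclideanSpace ℝ (Fin n) | ∀ a', f a' p ≤ f a p} :=
    argmax_preconnected (hslice p) (hincave p) (hdec p)
  by_contra hbV
  have hbr : r < infDist b B := by
    by_contra h
    push_neg at h
    exact hbV (hWV b h)
  have hIcc : r ∈ Icc (infDist x1 B) (infDist b B) := ⟨hx1dist.le, hbr.le⟩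
  obtain ⟨z, hzmem, hzr⟩ := hpre.intermediate_value hx1glob hb'
    (continuous_infDist_pt B).continuousOn hIcc
  exact hAS z (hzmem abar) hzr
end

section
/- Let f : ℝ^{n_x} × ℝ^{n_y} → ℝ be continuously differentiable, invex in x for each fixed y, incave in y for each fixed x, with f(·, y) increasing at infinity and f(x, ·) decreasing at infinity. Assume the set E of saddle points is non-empty. Then the union of the set of minimax points and the set of maximin points, M̲ ∪ M̄, is connected. -/
open Metric Set InnerProductSpace

set_option maxHeartbeats 1000000
set_option linter.unusedSectionVars false
set_option linter.unusedTactic false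


lemma chain_of_preconnected {X : Type*} [PseudoMetricSpace X] {C : Set X} (hC : IsPreconnected C)
    {a b : X} (ha : a ∈ C) (hb : b ∈ C) {η : ℝ} (hη : 0 < η) :
    ∃ (n : ℕ) (c : ℕ → X), c 0 = a ∧ c n = b ∧ (∀ i ≤ n, c i ∈ C) ∧
      ∀ i < n, dist (c i) (c (i + 1)) < η := by
  set R : Set X := {x | x ∈ C ∧ ∃ (n : ℕ) (c : ℕ → X), c 0 = a ∧ c n = x ∧ (∀ i ≤ n, c i ∈ C) ∧
      ∀ i < n, dist (c i) (c (i + 1)) < η} with hR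
  have haR : a ∈ R := by
    refine ⟨ha, 0, fun _ => a, rfl, rfl, ?_, ?_⟩
    · intro i hi; interval_cases i; exact ha
    · intro i hi; omega
  have hext : ∀ x ∈ R, ∀ z ∈ C, dist x z < η → z ∈ R := by
    intro x hx z hzC hxz
    obtain ⟨hxC, n, c, hc0, hcn, hcC, hcd⟩ := hx
    refine ⟨hzC, n + 1, fun i => if i ≤ n then c i else z, ?_, ?_, ?_, ?_⟩
    · simp [hc0]
    · simp
    · intro i hi
      by_cases h : i ≤ n
      · simpa [h] using hcC i h
      · simpa [h] using hzC
    · intro i hi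
      rcases lt_or_eq_of_le (Nat.lt_succ_iff.mp hi) with h | h
      · have h1 : i ≤ n := h.le
        have h2 : i + 1 ≤ n := h
        simpa [h1, h2] using hcd i h
      · have h1 : i ≤ n := le_of_eq h
        have h2 : ¬ (i + 1 ≤ n) := by omega
        have hcx : c i = x := by rw [h]; exact hcn
        simpa [h1, h2, hcx] using hxz
  by_cases hbR : b ∈ R
  · obtain ⟨_, n, c, h0, hn, hC', hd⟩ := hbR
    exact ⟨n, c, h0, hn, hC', hd⟩
  exfalso
  set U : Set X := ⋃ x ∈ R, ball x η
  set V : Set X := ⋃ x ∈ C \ R, ball x η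
  have hU : IsOpen U := isOpen_biUnion fun _ _ => isOpen_ball
  have hV : IsOpen V := isOpen_biUnion fun _ _ => isOpen_ball
  have hcov : C ⊆ U ∪ V := by
    intro x hx
    by_cases h : x ∈ R
    · exact Or.inl (mem_biUnion h (mem_ball_self hη))
    · exact Or.inr (mem_biUnion ⟨hx, h⟩ (mem_ball_self hη))
  have hCU : (C ∩ U).Nonempty := ⟨a, ha, mem_biUnion haR (mem_ball_self hη)⟩
  have hCV : (C ∩ V).Nonempty := ⟨b, hb, mem_biUnion ⟨hb, hbR⟩ (mem_ball_self hη)⟩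
  obtain ⟨z, hzC, hzU, hzV⟩ := hC U V hU hV hcov hCU hCV
  obtain ⟨x, hxR, hzx⟩ := mem_iUnion₂.mp hzU
  obtain ⟨y, hyCR, hzy⟩ := mem_iUnion₂.mp hzV
  have hzR : z ∈ R := hext x hxR z hzC (by rwa [mem_ball, dist_comm] at hzx)
  have : y ∈ R := hext z hzR y hyCR.1 (mem_ball.mp hzy)
  exact hyCR.2 this


variable {F : Type*} [NormedAddCommGroup F] [InnerProductSpace ℝ F] [CompleteSpace F]
  [ProperSpace F]

local notation "⟪" x ", " y "⟫" => @inner ℝ _ _ x y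

lemma fderiv_apply_eq_inner_gradient (g : F → ℝ) (y v : F) :
    fderiv ℝ g y v = ⟪gradient g y, v⟫ := by
  rw [gradient, InnerProductSpace.toDual_symm_apply]

lemma gradient_eq_zero_iff (g : F → ℝ) (y : F) :
    gradient g y = 0 ↔ fderiv ℝ g y = 0 := by
  rw [gradient]
  constructor
  · intro h
    have := congrArg (InnerProductSpace.toDual ℝ F) h
    simpa using this
  · intro h; simp [h]

lemma norm_gradient_eq (g : F → ℝ) (y : F) : ‖gradient g y‖ = ‖fderiv ℝ g y‖ := by
  rw [gradient]; exact LinearIsometryEquiv.norm_map _ _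

lemma continuous_gradient {g : F → ℝ} (hg : ContDiff ℝ 1 g) :
    Continuous (fun x => gradient g x) := by
  have h1 : Continuous (fderiv ℝ g) := hg.continuous_fderiv one_ne_zero
  exact (LinearIsometryEquiv.continuous _).comp h1

/-- Descent lemma: any two global minimizers can be joined by a preconnected set lying in
the sublevel set at level `g a + ε`. -/
lemma lemA_descent [Nontrivial F] (g : F → ℝ) (hg : ContDiff ℝ 1 g)
    (hinv : ∀ x, fderiv ℝ g x = 0 → ∀ z, g x ≤ g z)
    (hco : ∀ x, ∃ K : Set F, IsCompact K ∧ ∀ z ∉ K, g x < g z)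
    (a : F) (hmin : ∀ z, g a ≤ g z) {ε : ℝ} (hε : 0 < ε) (a₁ a₂ : F)
    (h1 : ∀ z, g a₁ ≤ g z) (h2 : ∀ z, g a₂ ≤ g z) :
    ∃ C : Set F, IsPreconnected C ∧ a₁ ∈ C ∧ a₂ ∈ C ∧ ∀ x ∈ C, g x ≤ g a + ε := by
  set m := g a with hm
  have hga1 : g a₁ = m := le_antisymm (h1 a) (hmin a₁)
  have hga2 : g a₂ = m := le_antisymm (h2 a) (hmin a₂)
  -- the segment and its max
  have hsegc : IsCompact (segment ℝ a₁ a₂) := by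
    rw [segment_eq_image' ℝ a₁ a₂]
    exact isCompact_Icc.image (by continuity)
  obtain ⟨b₀, hb₀seg, hb₀max⟩ := hsegc.exists_isMaxOn ⟨a₁, left_mem_segment ℝ a₁ a₂⟩
    hg.continuous.continuousOn
  rw [isMaxOn_iff] at hb₀max
  set c₁ := g b₀ with hc₁
  by_cases hctriv : c₁ ≤ m + ε
  · exact ⟨segment ℝ a₁ a₂, (convex_segment a₁ a₂).isPreconnected,
      left_mem_segment ℝ a₁ a₂, right_mem_segment ℝ a₁ a₂,
      fun x hx => le_trans (hb₀max x hx) hctriv⟩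
  push_neg at hctriv
  -- compact sublevel set W
  obtain ⟨Kb, hKb, hKblt⟩ := hco b₀
  set W := {x | g x ≤ c₁} with hW
  have hWcl : IsClosed W := isClosed_le hg.continuous continuous_const
  have hWKb : W ⊆ Kb := by
    intro x hx
    by_contra hxK
    exact absurd hx (not_le.mpr (hKblt x hxK))
  have hWc : IsCompact W := hKb.of_isClosed_subset hWcl hWKb
  have hsegW : segment ℝ a₁ a₂ ⊆ W := fun x hx => hb₀max x hx
  have ha₁W : a₁ ∈ W := hsegW (left_mem_segment ℝ a₁ a₂)
  -- enlarged compact W₁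
  set W₁ := cthickening 1 W with hW₁
  have hW₁c : IsCompact W₁ := isCompact_of_isClosed_isBounded isClosed_cthickening
    (hWc.isBounded.cthickening)
  have hWW₁ : W ⊆ W₁ := self_subset_cthickening W
  have hW₁ne : W₁.Nonempty := ⟨a₁, hWW₁ ha₁W⟩
  -- bound M on the gradient over W₁
  have hgc : Continuous (fun x => ‖gradient g x‖) := (continuous_gradient hg).norm
  obtain ⟨xM, hxMW, hxM⟩ := hW₁c.exists_isMaxOn hW₁ne hgc.continuousOn
  rw [isMaxOn_iff] at hxM
  set M := ‖gradient g xM‖ with hM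
  have hM0 : 0 ≤ M := norm_nonneg _
  -- the critical-point-free zone Z and the gradient lower bound δ₀
  set Z := {x | m + ε / 2 ≤ g x ∧ g x ≤ c₁} with hZ
  have hZc : IsCompact Z := hWc.of_isClosed_subset
    (IsClosed.inter (isClosed_le continuous_const hg.continuous)
      (isClosed_le hg.continuous continuous_const)) (fun x hx => hx.2)
  have hZne : Z.Nonempty := ⟨b₀, by constructor <;> [linarith; exact le_rfl]⟩
  obtain ⟨z₀, hz₀Z, hz₀min⟩ := hZc.exists_isMinOn hZne hgc.continuousOn
  rw [isMinOn_iff] at hz₀min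
  set δ₀ := ‖gradient g z₀‖ with hδ₀
  have hδ₀pos : 0 < δ₀ := by
    rcases eq_or_lt_of_le (norm_nonneg (gradient g z₀)) with h | h
    · exfalso
      have hz0 : gradient g z₀ = 0 := by
        have := h.symm; rwa [norm_eq_zero] at this
      have := hinv z₀ ((gradient_eq_zero_iff g z₀).mp hz0) a
      have hz₀1 := hz₀Z.1
      linarith
    · exact h
  -- uniform continuity of the gradient on W₁
  have huc := hW₁c.uniformContinuousOn_of_continuous (continuous_gradient hg).continuousOn
  rw [Metric.uniformContinuousOn_iff] at huc
  obtain ⟨δu, hδu, hδuu⟩ := huc (δ₀ / 2) (by positivity)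
  -- step size
  set h := min δu 1 / (M + 1) with hh
  have hhpos : 0 < h := by positivity
  -- cutoff function
  set θ : ℝ → ℝ := fun t => max 0 (min 1 ((t - (m + ε / 2)) / (ε / 2))) with hθ
  have hθc : Continuous θ := by
    apply Continuous.max continuous_const
    apply Continuous.min continuous_const
    exact (continuous_id.sub continuous_const).div_const _
  have hθ01 : ∀ t, 0 ≤ θ t ∧ θ t ≤ 1 := fun t =>
    ⟨le_max_left _ _, max_le zero_le_one (min_le_left _ _)⟩
  have hθlow : ∀ t, t ≤ m + ε / 2 → θ t = 0 := by
    intro t ht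
    have : (t - (m + ε / 2)) / (ε / 2) ≤ 0 := by
      apply div_nonpos_of_nonpos_of_nonneg <;> linarith
    simp only [hθ, max_eq_left_iff]
    exact le_trans (min_le_right _ _) this
  have hθhigh : ∀ t, m + ε ≤ t → θ t = 1 := by
    intro t ht
    have h1 : (1:ℝ) ≤ (t - (m + ε / 2)) / (ε / 2) := by
      rw [le_div_iff₀ (by linarith)]
      linarith
    simp only [hθ]
    rw [min_eq_left h1]
    exact max_eq_right zero_le_one
  -- the descent map
  set V : F → F := fun x => θ (g x) • gradient g x with hV
  set Φ : F → F := fun x => x - h • V x with hΦ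
  have hΦcont : Continuous Φ := by
    apply continuous_id.sub
    exact ((hθc.comp hg.continuous).smul (continuous_gradient hg)).const_smul h
  have hVnorm : ∀ x, ‖V x‖ ≤ ‖gradient g x‖ := by
    intro x
    rw [hV]
    simp only [norm_smul, Real.norm_eq_abs, abs_of_nonneg (hθ01 (g x)).1]
    exact mul_le_of_le_one_left (norm_nonneg _) (hθ01 (g x)).2
  -- key one-step estimate
  have hstep : ∀ x ∈ W, g (Φ x) ≤ g x ∧ (m + ε ≤ g x → g (Φ x) ≤ g x - h * (δ₀ * δ₀ / 2)) := by
    intro x hxW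
    by_cases hxlow : g x ≤ m + ε / 2
    · have hz : θ (g x) = 0 := hθlow _ hxlow
      have hΦx : Φ x = x := by simp [hΦ, hV, hz]
      exact ⟨by rw [hΦx], fun habs => absurd habs (by push_neg; linarith)⟩
    · push_neg at hxlow
      have hxZ : x ∈ Z := ⟨hxlow.le, hxW⟩
      have hgx : δ₀ ≤ ‖gradient g x‖ := hz₀min x hxZ
      have hdiff : ∀ y ∈ (univ : Set F), HasFDerivWithinAt g (fderiv ℝ g y) univ y := fun y _ =>
        ((hg.differentiable one_ne_zero) y).hasFDerivAt.hasFDerivWithinAt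
      obtain ⟨ξ, hξ, hMVT⟩ := domain_mvt hdiff convex_univ (mem_univ x) (mem_univ (Φ x))
      have hΦsub : Φ x - x = -(h • V x) := by simp [hΦ]
      have hxW₁ : x ∈ W₁ := hWW₁ hxW
      have hgradxM : ‖gradient g x‖ ≤ M := hxM x hxW₁
      have hstep1 : ‖Φ x - x‖ ≤ h * M := by
        rw [hΦsub, norm_neg, norm_smul, Real.norm_eq_abs, abs_of_nonneg hhpos.le]
        exact mul_le_mul_of_nonneg_left (le_trans (hVnorm x) hgradxM) hhpos.le
      have hmin1 : (0:ℝ) < min δu 1 := lt_min hδu one_pos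
      have hhM : h * M < min δu 1 := by
        have hMd : M / (M + 1) < 1 := by
          rw [div_lt_one (by linarith)]; linarith
        calc h * M = min δu 1 * (M / (M + 1)) := by rw [hh]; ring
        _ < min δu 1 * 1 := by exact mul_lt_mul_of_pos_left hMd hmin1
        _ = min δu 1 := mul_one _
      have hξx : ‖ξ - x‖ ≤ ‖Φ x - x‖ := by
        rw [segment_eq_image' ℝ x (Φ x)] at hξ
        obtain ⟨t, ht, rfl⟩ := hξ
        simp only [add_sub_cancel_left]
        rw [norm_smul, Real.norm_eq_abs, abs_of_nonneg ht.1]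
        exact mul_le_of_le_one_left (norm_nonneg _) ht.2
      have hξxlt : ‖ξ - x‖ < min δu 1 := lt_of_le_of_lt (le_trans hξx hstep1) hhM
      have hξW₁ : ξ ∈ W₁ := by
        apply thickening_subset_cthickening
        rw [Metric.mem_thickening_iff]
        exact ⟨x, hxW, by rw [dist_eq_norm]; exact lt_of_lt_of_le hξxlt (min_le_right _ _)⟩
      have hdistgrad : ‖gradient g ξ - gradient g x‖ < δ₀ / 2 := by
        have := hδuu ξ hξW₁ x hxW₁
          (by rw [dist_eq_norm]; exact lt_of_lt_of_le hξxlt (min_le_left _ _))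
        rwa [dist_eq_norm] at this
      have hinner : θ (g x) * (‖gradient g x‖ * (‖gradient g x‖ - δ₀ / 2)) ≤
          fderiv ℝ g ξ (V x) := by
        rw [fderiv_apply_eq_inner_gradient]
        have hVx : V x = θ (g x) • gradient g x := rfl
        rw [hVx, real_inner_smul_right]
        apply mul_le_mul_of_nonneg_left _ (hθ01 (g x)).1
        have hsplit : ⟪gradient g ξ, gradient g x⟫ =
            ⟪gradient g x, gradient g x⟫ + ⟪gradient g ξ - gradient g x, gradient g x⟫ := by
          rw [inner_sub_left]; ring
        have hcs : |⟪gradient g ξ - gradient g x, gradient g x⟫| ≤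
            ‖gradient g ξ - gradient g x‖ * ‖gradient g x‖ := abs_real_inner_le_norm _ _
        rw [hsplit, real_inner_self_eq_norm_mul_norm]
        nlinarith [abs_le.mp hcs, norm_nonneg (gradient g x)]
      have hfinal : g (Φ x) - g x = -(h * (fderiv ℝ g ξ (V x))) := by
        rw [hΦsub] at hMVT
        rw [hMVT, map_neg, map_smul]
        simp
      have hq : δ₀ * (δ₀ / 2) ≤ ‖gradient g x‖ * (‖gradient g x‖ - δ₀ / 2) := by nlinarith
      have hθpos := (hθ01 (g x)).1
      constructor
      · have h0 : 0 ≤ fderiv ℝ g ξ (V x) := le_trans (by nlinarith) hinner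
        nlinarith
      · intro hxhigh
        have hθ1 : θ (g x) = 1 := hθhigh _ hxhigh
        rw [hθ1, one_mul] at hinner
        nlinarith
  -- iterate the descent map
  set Δ := h * (δ₀ * δ₀ / 2) with hΔ
  have hΔpos : 0 < Δ := by positivity
  have hWinv : ∀ x ∈ W, Φ x ∈ W := fun x hx => le_trans (hstep x hx).1 hx
  have hiter : ∀ x ∈ segment ℝ a₁ a₂, ∀ k : ℕ,
      Φ^[k] x ∈ W ∧ g (Φ^[k] x) ≤ max (m + ε) (c₁ - k * Δ) := by
    intro x hx k
    induction k with
    | zero =>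
      refine ⟨by simpa using hsegW hx, le_max_of_le_right ?_⟩
      simp only [Function.iterate_zero_apply, Nat.cast_zero, zero_mul, sub_zero]
      exact hsegW hx
    | succ k ih =>
      obtain ⟨hmem, hbound⟩ := ih
      rw [Function.iterate_succ_apply']
      refine ⟨hWinv _ hmem, ?_⟩
      by_cases hcase : g (Φ^[k] x) ≤ m + ε
      · exact le_max_of_le_left (le_trans (hstep _ hmem).1 hcase)
      · push_neg at hcase
        have hd := (hstep _ hmem).2 hcase.le
        have hb2 : g (Φ^[k] x) ≤ c₁ - k * Δ := by
          rcases le_max_iff.mp hbound with hcb | hcb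
          · linarith
          · exact hcb
        apply le_max_of_le_right
        push_cast
        push_cast at hb2
        linarith
  obtain ⟨N, hN⟩ := exists_nat_ge ((c₁ - (m + ε)) / Δ)
  have hNΔ : c₁ - N * Δ ≤ m + ε := by
    rw [div_le_iff₀ hΔpos] at hN; linarith
  refine ⟨Φ^[N] '' segment ℝ a₁ a₂,
    ((convex_segment a₁ a₂).isPreconnected).image _ (hΦcont.iterate N).continuousOn, ?_, ?_, ?_⟩
  · have hfix : Φ a₁ = a₁ := by
      have hz : θ (g a₁) = 0 := hθlow _ (by rw [hga1]; linarith)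
      simp [hΦ, hV, hz]
    exact ⟨a₁, left_mem_segment ℝ a₁ a₂, Function.iterate_fixed hfix N⟩
  · have hfix : Φ a₂ = a₂ := by
      have hz : θ (g a₂) = 0 := hθlow _ (by rw [hga2]; linarith)
      simp [hΦ, hV, hz]
    exact ⟨a₂, right_mem_segment ℝ a₁ a₂, Function.iterate_fixed hfix N⟩
  · rintro x ⟨x₀, hx₀, rfl⟩
    have hb := (hiter x₀ hx₀ N).2
    exact le_trans hb (max_le le_rfl (by linarith))



/-- The set of global minimizers of a C¹ invex function which increases at infinity
is connected. -/
theorem lemA (g : F → ℝ) (hg : ContDiff ℝ 1 g)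
    (hinv : ∀ x, fderiv ℝ g x = 0 → ∀ z, g x ≤ g z)
    (hco : ∀ x, ∃ K : Set F, IsCompact K ∧ ∀ z ∉ K, g x < g z) :
    IsConnected {x | ∀ z, g x ≤ g z} := by
  set A := {x | ∀ z, g x ≤ g z} with hA
  obtain ⟨K0, hK0, hK0lt⟩ := hco 0
  obtain ⟨a, haK, hamin⟩ := (hK0.insert 0).exists_isMinOn (insert_nonempty _ _)
    hg.continuous.continuousOn
  rw [isMinOn_iff] at hamin
  have ha : a ∈ A := by
    intro z
    by_cases hz : z ∈ insert (0:F) K0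
    · exact hamin z hz
    · have h0 : g 0 < g z := hK0lt z (fun hzz => hz (mem_insert_of_mem _ hzz))
      exact le_trans (hamin 0 (mem_insert _ _)) h0.le
  have hAne : A.Nonempty := ⟨a, ha⟩
  have hAcl : IsClosed A := by
    have hiA : A = ⋂ z, {x | g x ≤ g z} := by ext x; simp [hA, mem_iInter]
    rw [hiA]; exact isClosed_iInter fun z => isClosed_le hg.continuous continuous_const
  obtain ⟨Ka, hKa, hKalt⟩ := hco a
  have hAKa : A ⊆ Ka := fun x hx => by
    by_contra hxK
    exact absurd (hx a) (not_le.mpr (hKalt x hxK))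
  have hAc : IsCompact A := hKa.of_isClosed_subset hAcl hAKa
  rcases subsingleton_or_nontrivial F with hsub | hnt
  · exact ⟨hAne, Set.Subsingleton.isPreconnected Set.subsingleton_of_subsingleton⟩
  have hnc : NoncompactSpace F := NormedSpace.noncompactSpace ℝ F
  -- sublevel sets are eventually close to A
  have hnbhd : ∀ r > 0, ∃ ε > 0, ∀ x, g x ≤ g a + ε → infDist x A < r := by
    intro r hr
    obtain ⟨z₁, hz₁⟩ := (Set.ne_univ_iff_exists_notMem Ka).mp (hKa.ne_univ)
    have hz₁g : g a < g z₁ := hKalt z₁ hz₁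
    set εm := (g z₁ - g a) / 2 with hεm
    have hεmpos : 0 < εm := by rw [hεm]; linarith
    by_cases hall : ∀ n : ℕ,
        ({x | g x ≤ g a + εm / (n + 1)} ∩ {x | r ≤ infDist x A}).Nonempty
    · exfalso
      set L : ℕ → Set F := fun n =>
        {x | g x ≤ g a + εm / (n + 1)} ∩ {x | r ≤ infDist x A} with hL
      have hLsub : ∀ n, L (n + 1) ⊆ L n := by
        intro n x hx
        obtain ⟨hx1, hx2⟩ := hx
        simp only [mem_setOf_eq] at hx1
        refine ⟨?_, hx2⟩
        simp only [mem_setOf_eq]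
        have hd : εm / ((n:ℝ) + 1 + 1) ≤ εm / ((n:ℝ) + 1) :=
          div_le_div_of_nonneg_left hεmpos.le (by positivity) (by linarith)
        push_cast at hx1 ⊢
        linarith
      have hLcl : ∀ n, IsClosed (L n) := fun n =>
        (isClosed_le hg.continuous continuous_const).inter
          (isClosed_le continuous_const (continuous_infDist_pt A))
      have hL0c : IsCompact (L 0) := by
        obtain ⟨Kz, hKz, hKzlt⟩ := hco z₁
        apply hKz.of_isClosed_subset (hLcl 0)
        intro x hx
        by_contra hxK
        have h1 : g z₁ < g x := hKzlt x hxK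
        have h2 : g x ≤ g a + εm / ((0:ℕ) + 1) := hx.1
        have h3 : ((0:ℕ):ℝ) + 1 = 1 := by norm_num
        rw [h3, div_one] at h2
        rw [hεm] at h2
        linarith
      obtain ⟨y, hy⟩ := IsCompact.nonempty_iInter_of_sequence_nonempty_isCompact_isClosed
        L hLsub hall hL0c hLcl
      simp only [mem_iInter] at hy
      have hym : g y ≤ g a := by
        by_contra hgy
        push_neg at hgy
        obtain ⟨n, hn⟩ := exists_nat_gt (εm / (g y - g a))
        have h4 : εm / (g y - g a) < (n:ℝ) := hn
        rw [div_lt_iff₀ (by linarith)] at h4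
        have h5 : εm / ((n:ℝ) + 1) < g y - g a := by
          rw [div_lt_iff₀ (by positivity)]
          nlinarith [sub_pos.mpr hgy]
        have h6 := (hy n).1
        simp only [mem_setOf_eq] at h6
        linarith
      have hyA : y ∈ A := fun z => le_trans hym (ha z)
      have h8 : infDist y A = 0 := infDist_zero_of_mem hyA
      have h9 := (hy 0).2
      simp only [mem_setOf_eq] at h9
      linarith
    · push_neg at hall
      obtain ⟨n, hn⟩ := hall
      refine ⟨εm / ((n:ℝ) + 1), by positivity, ?_⟩
      intro x hgx
      by_contra hge
      push_neg at hge
      have : x ∈ ({x | g x ≤ g a + εm / (n + 1)} ∩ {x | r ≤ infDist x A}) := by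
        constructor
        · simp only [mem_setOf_eq]; push_cast; push_cast at hgx; linarith
        · exact hge
      rw [hn] at this
      exact this
  -- chains inside A
  have hchain : ∀ η > 0, ∀ a₁ ∈ A, ∀ a₂ ∈ A, ∃ (n : ℕ) (p : ℕ → F),
      (∀ i, p i ∈ A) ∧ dist a₁ (p 0) < η ∧ dist a₂ (p n) < η ∧
      ∀ i < n, dist (p i) (p (i + 1)) < η := by
    intro η hη a₁ ha₁ a₂ ha₂
    obtain ⟨ε, hεpos, hεr⟩ := hnbhd (η / 3) (by linarith)
    obtain ⟨C, hCpre, ha₁C, ha₂C, hCb⟩ := lemA_descent g hg hinv hco a ha hεpos a₁ a₂ ha₁ ha₂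
    obtain ⟨n, c, hc0, hcn, hcC, hcd⟩ := chain_of_preconnected hCpre ha₁C ha₂C
      (show 0 < η / 3 by linarith)
    have hproj : ∀ i : ℕ, ∃ q ∈ A, dist (c (min i n)) q < η / 3 := by
      intro i
      have h5 : c (min i n) ∈ C := hcC _ (min_le_right _ _)
      exact (infDist_lt_iff hAne).mp (hεr _ (hCb _ h5))
    choose p hpA hpd using hproj
    refine ⟨n, p, hpA, ?_, ?_, ?_⟩
    · have h6 := hpd 0
      rw [Nat.zero_min, hc0] at h6
      linarith
    · have h6 := hpd n
      rw [Nat.min_self, hcn] at h6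
      linarith
    · intro i hi
      have himin : min i n = i := min_eq_left hi.le
      have himin1 : min (i + 1) n = i + 1 := min_eq_left hi
      have h6 := hpd i; rw [himin] at h6
      have h7 := hpd (i + 1); rw [himin1] at h7
      have h8 := hcd i hi
      calc dist (p i) (p (i + 1)) ≤
          dist (p i) (c i) + dist (c i) (c (i + 1)) + dist (c (i + 1)) (p (i + 1)) :=
            dist_triangle4 _ _ _ _
        _ < η / 3 + η / 3 + η / 3 := by
            rw [dist_comm (p i) (c i)]
            exact add_lt_add (add_lt_add h6 h8) h7
        _ = η := by ring
  -- the separation argument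
  refine ⟨hAne, ?_⟩
  rintro u v hu hv hcov ⟨a₁, ha₁A, ha₁u⟩ ⟨a₂, ha₂A, ha₂v⟩
  by_contra hne
  rw [Set.not_nonempty_iff_eq_empty] at hne
  have hAu : A ∩ u = A \ v := by
    ext x
    constructor
    · rintro ⟨hxA, hxu⟩
      refine ⟨hxA, fun hxv => ?_⟩
      have hxx : x ∈ A ∩ (u ∩ v) := ⟨hxA, hxu, hxv⟩
      rw [hne] at hxx; exact hxx
    · rintro ⟨hxA, hxv⟩
      rcases hcov hxA with h | h
      · exact ⟨hxA, h⟩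
      · exact absurd h hxv
  have hAv : A ∩ v = A \ u := by
    ext x
    constructor
    · rintro ⟨hxA, hxv⟩
      refine ⟨hxA, fun hxu => ?_⟩
      have hxx : x ∈ A ∩ (u ∩ v) := ⟨hxA, hxu, hxv⟩
      rw [hne] at hxx; exact hxx
    · rintro ⟨hxA, hxu⟩
      rcases hcov hxA with h | h
      · exact absurd h hxu
      · exact ⟨hxA, h⟩
  have hAucl : IsClosed (A ∩ u) := by
    rw [hAu]; exact hAcl.inter (isClosed_compl_iff.mpr hv)
  have hAvcl : IsClosed (A ∩ v) := by
    rw [hAv]; exact hAcl.inter (isClosed_compl_iff.mpr hu)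
  have hAuc : IsCompact (A ∩ u) := hAc.of_isClosed_subset hAucl inter_subset_left
  have hAvne : (A ∩ v).Nonempty := ⟨a₂, ha₂A, ha₂v⟩
  obtain ⟨p₀, hp₀, hp₀min⟩ := hAuc.exists_isMinOn ⟨a₁, ha₁A, ha₁u⟩
    ((continuous_infDist_pt (A ∩ v)).continuousOn)
  rw [isMinOn_iff] at hp₀min
  set d₀ := infDist p₀ (A ∩ v) with hd₀
  have hp₀nv : p₀ ∉ A ∩ v := by
    rw [hAu] at hp₀
    exact fun hc => hp₀.2 hc.2
  have hd₀pos : 0 < d₀ := (hAvcl.notMem_iff_infDist_pos hAvne).mp hp₀nv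
  have hdd : ∀ p ∈ A ∩ u, ∀ q ∈ A ∩ v, d₀ ≤ dist p q := fun p hp q hq =>
    le_trans (hp₀min p hp) (infDist_le_dist_of_mem hq)
  obtain ⟨n, p, hpA, hpd1, hpd2, hpd⟩ := hchain (d₀ / 2) (by linarith) a₁ ha₁A a₂ ha₂A
  have hind : ∀ i ≤ n, p i ∈ A ∩ u := by
    intro i
    induction i with
    | zero =>
      intro _
      rcases hcov (hpA 0) with h | h
      · exact ⟨hpA 0, h⟩
      · exfalso
        have h9 := hdd a₁ ⟨ha₁A, ha₁u⟩ (p 0) ⟨hpA 0, h⟩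
        linarith
    | succ i ih =>
      intro hi1
      have hpi := ih (by omega)
      rcases hcov (hpA (i + 1)) with h | h
      · exact ⟨hpA (i + 1), h⟩
      · exfalso
        have h9 := hdd (p i) hpi (p (i + 1)) ⟨hpA (i + 1), h⟩
        have h10 := hpd i (by omega)
        linarith
  have h11 := hdd (p n) (hind n le_rfl) a₂ ⟨ha₂A, ha₂v⟩
  rw [dist_comm] at hpd2
  linarith


theorem lemA_max {F : Type*} [NormedAddCommGroup F] [InnerProductSpace ℝ F] [CompleteSpace F]
    [ProperSpace F] (g : F → ℝ) (hg : ContDiff ℝ 1 g)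
    (hinc : ∀ y, fderiv ℝ g y = 0 → ∀ z, g z ≤ g y)
    (hco : ∀ y, ∃ K : Set F, IsCompact K ∧ ∀ z ∉ K, g z < g y) :
    IsConnected {y | ∀ z, g z ≤ g y} := by
  have h1 : IsConnected {y | ∀ z, (fun w => -g w) y ≤ (fun w => -g w) z} := by
    apply lemA (fun w => -g w) hg.neg
    · intro x hx z
      have hx' : fderiv ℝ g x = 0 := by
        have hne : fderiv ℝ (fun w => -g w) x = -fderiv ℝ g x := fderiv_neg
        rw [hne] at hx
        exact neg_eq_zero.mp hx
      exact neg_le_neg (hinc x hx' z)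
    · intro y
      obtain ⟨K, hK, hKlt⟩ := hco y
      exact ⟨K, hK, fun z hz => by have := hKlt z hz; linarith⟩
  have hset : {y | ∀ z, g z ≤ g y} = {y | ∀ z, (fun w => -g w) y ≤ (fun w => -g w) z} := by
    ext y
    simp only [mem_setOf_eq, neg_le_neg_iff]
  rw [hset]
  exact h1

/-- Connectedness of the union of the sets of minimax and maximin points of an
invex-incave minimax problem with non-empty saddle point set. -/
theorem minimax_union_maximin_connected {nx ny : ℕ}
    (f : EuclideanSpace ℝ (Fin nx) → EuclideanSpace ℝ (Fin ny) → ℝ)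
    (hf : ContDiff ℝ 1 (fun p : EuclideanSpace ℝ (Fin nx) × EuclideanSpace ℝ (Fin ny) =>
      f p.1 p.2))
    (hinvex : ∀ y x, fderiv ℝ (fun x' => f x' y) x = 0 → ∀ x', f x y ≤ f x' y)
    (hincave : ∀ x y, fderiv ℝ (fun y' => f x y') y = 0 → ∀ y', f x y' ≤ f x y)
    (hinc : ∀ y x, ∃ K : Set (EuclideanSpace ℝ (Fin nx)),
      IsCompact K ∧ ∀ z ∉ K, f x y < f z y)
    (hdec : ∀ x y, ∃ K : Set (EuclideanSpace ℝ (Fin ny)),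
      IsCompact K ∧ ∀ z ∉ K, f x z < f x y)
    (Mlo Mhi E : Set (EuclideanSpace ℝ (Fin nx) × EuclideanSpace ℝ (Fin ny)))
    (hMlo : Mlo = {p | (∀ b, f p.1 b ≤ f p.1 p.2) ∧ ∀ a, f p.1 p.2 ≤ ⨆ y', f a y'})
    (hMhi : Mhi = {p | (∀ a, f p.1 p.2 ≤ f a p.2) ∧ ∀ b, (⨅ x', f x' b) ≤ f p.1 p.2})
    (hE : E = {p | (∀ b, f p.1 b ≤ f p.1 p.2) ∧ ∀ a, f p.1 p.2 ≤ f a p.2})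
    (hEne : E.Nonempty) :
    IsConnected (Mlo ∪ Mhi) := by
  obtain ⟨p₀, hp₀E⟩ := hEne
  rw [hE] at hp₀E
  obtain ⟨hs1, hs2⟩ := hp₀E
  set xs := p₀.1 with hxs
  set ys := p₀.2 with hys
  -- slice smoothness
  have hcx : ∀ y, ContDiff ℝ 1 (fun x => f x y) := fun y =>
    hf.comp (contDiff_id.prodMk contDiff_const)
  have hcy : ∀ x, ContDiff ℝ 1 (fun y => f x y) := fun x =>
    hf.comp (contDiff_const.prodMk contDiff_id)
  -- boundedness of ranges
  have hbdd : ∀ a, BddAbove (Set.range (fun y' => f a y')) := by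
    intro a
    obtain ⟨K, hK, hKlt⟩ := hdec a ys
    rcases K.eq_empty_or_nonempty with hKe | hKne
    · exact ⟨f a ys, by rintro t ⟨y, rfl⟩; exact (hKlt y (by simp [hKe])).le⟩
    · obtain ⟨yM, hyM, hmax⟩ := hK.exists_isMaxOn hKne (hcy a).continuous.continuousOn
      rw [isMaxOn_iff] at hmax
      refine ⟨max (f a yM) (f a ys), ?_⟩
      rintro t ⟨y, rfl⟩
      by_cases hy : y ∈ K
      · exact le_max_of_le_left (hmax y hy)
      · exact le_max_of_le_right (hKlt y hy).le
  have hbddb : ∀ b, BddBelow (Set.range (fun x' => f x' b)) := by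
    intro b
    obtain ⟨K, hK, hKlt⟩ := hinc b xs
    rcases K.eq_empty_or_nonempty with hKe | hKne
    · exact ⟨f xs b, by rintro t ⟨x, rfl⟩; exact (hKlt x (by simp [hKe])).le⟩
    · obtain ⟨xM, hxM, hmin⟩ := hK.exists_isMinOn hKne (hcx b).continuous.continuousOn
      rw [isMinOn_iff] at hmin
      refine ⟨min (f xM b) (f xs b), ?_⟩
      rintro t ⟨x, rfl⟩
      by_cases hx : x ∈ K
      · exact min_le_of_left_le (hmin x hx)
      · exact min_le_of_right_le (hKlt x hx).le
  -- value facts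
  have hsupxs : ∀ a, f xs ys ≤ ⨆ y', f a y' := fun a =>
    le_trans (hs2 a) (le_ciSup (hbdd a) ys)
  have hsup_at_xs : (⨆ y', f xs y') ≤ f xs ys := ciSup_le (fun y' => hs1 y')
  have hinfv : ∀ b, (⨅ x', f x' b) ≤ f xs ys := fun b =>
    le_trans (ciInf_le (hbddb b) xs) (hs1 b)
  have hinf_at_ys : f xs ys ≤ ⨅ x', f x' ys := le_ciInf (fun x' => hs2 x')
  -- connected best-response sets
  have hconn_min : ∀ y, IsConnected {x | ∀ z, f x y ≤ f z y} := fun y =>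
    lemA _ (hcx y) (hinvex y) (hinc y)
  have hconn_max : ∀ x, IsConnected {y | ∀ z, f x z ≤ f x y} := fun x =>
    lemA_max _ (hcy x) (hincave x) (hdec x)
  -- glue set Z
  set T0 : Set (EuclideanSpace ℝ (Fin nx) × EuclideanSpace ℝ (Fin ny)) :=
    {x | ∀ z, f x ys ≤ f z ys} ×ˢ {ys} with hT0
  set T0' : Set (EuclideanSpace ℝ (Fin nx) × EuclideanSpace ℝ (Fin ny)) :=
    {xs} ×ˢ {y | ∀ z, f xs z ≤ f xs y} with hT0'
  have hxsmin : xs ∈ {x | ∀ z, f x ys ≤ f z ys} := fun z => hs2 z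
  have hysmax : ys ∈ {y | ∀ z, f xs z ≤ f xs y} := fun z => hs1 z
  have hp₀T0 : (xs, ys) ∈ T0 := ⟨hxsmin, rfl⟩
  have hp₀T0' : (xs, ys) ∈ T0' := ⟨rfl, hysmax⟩
  have hT0conn : IsPreconnected T0 :=
    ((hconn_min ys).prod isConnected_singleton).isPreconnected
  have hT0'conn : IsPreconnected T0' :=
    (isConnected_singleton.prod (hconn_max xs)).isPreconnected
  have hZconn : IsPreconnected (T0 ∪ T0') :=
    IsPreconnected.union (xs, ys) hp₀T0 hp₀T0' hT0conn hT0'conn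
  -- inclusions of the glue set
  have hT0sub : T0 ⊆ Mhi := by
    rintro ⟨x, y⟩ ⟨hx, hy⟩
    simp only [mem_singleton_iff] at hy
    subst hy
    rw [hMhi]
    refine ⟨fun a => hx a, fun b => ?_⟩
    exact le_trans (hinfv b) (le_trans hinf_at_ys (ciInf_le (hbddb ys) x))
  have hT0'sub : T0' ⊆ Mlo := by
    rintro ⟨x, y⟩ ⟨hx, hy⟩
    simp only [mem_singleton_iff] at hx
    subst hx
    rw [hMlo]
    refine ⟨fun b => hy b, fun a => ?_⟩
    show f xs y ≤ _
    exact le_trans (hs1 y) (hsupxs a)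
  -- through every point of Mlo ∪ Mhi there is a preconnected subset containing (xs, ys)
  have key : ∀ p ∈ Mlo ∪ Mhi,
      ∃ C : Set (EuclideanSpace ℝ (Fin nx) × EuclideanSpace ℝ (Fin ny)),
      IsPreconnected C ∧ C ⊆ Mlo ∪ Mhi ∧ p ∈ C ∧ (xs, ys) ∈ C := by
    intro p hp
    rcases hp with hp | hp
    · rw [hMlo] at hp
      obtain ⟨hp1, hp2⟩ := hp
      have hple : f p.1 p.2 ≤ f xs ys := le_trans (hp2 xs) hsup_at_xs
      have hpys : f p.1 ys = f xs ys := le_antisymm (le_trans (hp1 ys) hple) (hs2 p.1)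
      set Tp := ({p.1} ×ˢ {y | ∀ z, f p.1 z ≤ f p.1 y}) with hTp
      have hTpconn : IsPreconnected Tp :=
        (isConnected_singleton.prod (hconn_max p.1)).isPreconnected
      have hysAmax : ys ∈ {y | ∀ z, f p.1 z ≤ f p.1 y} := by
        intro z
        calc f p.1 z ≤ f p.1 p.2 := hp1 z
        _ ≤ f xs ys := hple
        _ = f p.1 ys := hpys.symm
      have hTpsub : Tp ⊆ Mlo := by
        rintro ⟨x, y⟩ ⟨hx, hy⟩
        simp only [mem_singleton_iff] at hx
        subst hx
        rw [hMlo]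
        refine ⟨fun b => hy b, fun a => ?_⟩
        show f p.1 y ≤ _
        exact le_trans (hp1 y) (le_trans hple (hsupxs a))
      have hsh1 : (p.1, ys) ∈ Tp := ⟨rfl, hysAmax⟩
      have hsh2 : (p.1, ys) ∈ T0 := ⟨fun z => le_trans (le_of_eq hpys) (hs2 z), rfl⟩
      refine ⟨Tp ∪ (T0 ∪ T0'), ?_, ?_, ?_, ?_⟩
      · exact IsPreconnected.union (p.1, ys) hsh1 (Or.inl hsh2) hTpconn hZconn
      · rintro q (hq | hq | hq)
        · exact Or.inl (hTpsub hq)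
        · exact Or.inr (hT0sub hq)
        · exact Or.inl (hT0'sub hq)
      · exact Or.inl ⟨rfl, hp1⟩
      · exact Or.inr (Or.inl hp₀T0)
    · rw [hMhi] at hp
      obtain ⟨hq1, hq2⟩ := hp
      have hqge : f xs ys ≤ f p.1 p.2 := le_trans hinf_at_ys (hq2 ys)
      have hqxs : f xs p.2 = f xs ys := le_antisymm (hs1 p.2) (le_trans hqge (hq1 xs))
      set Tp := ({x | ∀ z, f x p.2 ≤ f z p.2} ×ˢ {p.2}) with hTp
      have hTpconn : IsPreconnected Tp :=
        ((hconn_min p.2).prod isConnected_singleton).isPreconnected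
      have hxsAmin : xs ∈ {x | ∀ z, f x p.2 ≤ f z p.2} := by
        intro z
        calc f xs p.2 ≤ f xs ys := hs1 p.2
        _ ≤ f p.1 p.2 := hqge
        _ ≤ f z p.2 := hq1 z
      have hTpsub : Tp ⊆ Mhi := by
        rintro ⟨x, y⟩ ⟨hx, hy⟩
        simp only [mem_singleton_iff] at hy
        subst hy
        rw [hMhi]
        refine ⟨fun a => hx a, fun b => ?_⟩
        show _ ≤ f x p.2
        exact le_trans (hinfv b) (le_trans hqge (hq1 x))
      have hsh1 : (xs, p.2) ∈ Tp := ⟨hxsAmin, rfl⟩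
      have hp2max : p.2 ∈ {y | ∀ z, f xs z ≤ f xs y} := fun z =>
        le_trans (hs1 z) (le_of_eq hqxs.symm)
      have hsh2 : (xs, p.2) ∈ T0' := ⟨rfl, hp2max⟩
      refine ⟨Tp ∪ (T0 ∪ T0'), ?_, ?_, ?_, ?_⟩
      · exact IsPreconnected.union (xs, p.2) hsh1 (Or.inr hsh2) hTpconn hZconn
      · rintro q (hq | hq | hq)
        · exact Or.inr (hTpsub hq)
        · exact Or.inr (hT0sub hq)
        · exact Or.inl (hT0'sub hq)
      · exact Or.inl ⟨hq1, rfl⟩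
      · exact Or.inr (Or.inl hp₀T0)
  choose! C hC1 hC2 hC3 hC4 using key
  have hmem : (xs, ys) ∈ Mlo ∪ Mhi := Or.inr (hT0sub hp₀T0)
  refine ⟨⟨(xs, ys), hmem⟩, ?_⟩
  have hSeq : Mlo ∪ Mhi = ⋃₀ (C '' (Mlo ∪ Mhi)) := by
    apply Subset.antisymm
    · intro p hp
      exact ⟨C p, ⟨p, hp, rfl⟩, hC3 p hp⟩
    · rintro q ⟨_, ⟨p, hp, rfl⟩, hq⟩
      exact hC2 p hp hq
  rw [hSeq]
  exact isPreconnected_sUnion (xs, ys) _ (by rintro _ ⟨p, hp, rfl⟩; exact hC4 p hp)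
    (by rintro _ ⟨p, hp, rfl⟩; exact hC1 p hp)
end

section
/- Under the assumptions of the invex-incave minimax setting (f ∈ C¹, f(·,y) invex and increasing at infinity, f(x,·) incave and decreasing at infinity), if for every minimax point (x, y) the best-response map x' ↦ BR_y(x') = argmax_{y'} f(x', y') is locally inner Lipschitz continuous at x for y, and symmetrically for maximin points, then every minimax point and every maximin point is a saddle point, i.e., E = M̲ = M̄. -/
/-- If a continuous function exceeds its values outside a compact set, it attains a
global maximum. -/
lemma aux_exists_max {Y : Type*} [TopologicalSpace Y] {φ : Y → ℝ} (hφ : Continuous φ)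
    {K : Set Y} (hK : IsCompact K) (y₀ : Y) (h : ∀ z ∉ K, φ z < φ y₀) :
    ∃ ym, ∀ y, φ y ≤ φ ym := by
  obtain ⟨ym, hmem, hm⟩ := (hK.union isCompact_singleton).exists_isMaxOn
    ⟨y₀, Or.inr rfl⟩ hφ.continuousOn
  refine ⟨ym, fun y => ?_⟩
  by_cases hy : y ∈ K ∪ {y₀}
  · exact hm hy
  · exact le_of_lt (lt_of_lt_of_le (h y fun hK' => hy (Or.inl hK')) (hm (Or.inr rfl)))

set_option maxHeartbeats 1000000 in
/-- Key lemma: at a minimax point with a locally inner Lipschitz best-response map,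
the partial derivative in `x` vanishes. -/
lemma aux_key {X Y : Type*} [NormedAddCommGroup X] [NormedSpace ℝ X]
    [NormedAddCommGroup Y] [NormedSpace ℝ Y] [Nonempty Y]
    (f : X → Y → ℝ) (hf : ContDiff ℝ 1 fun p : X × Y => f p.1 p.2)
    (x₀ : X) (y₀ : Y)
    (hmax : ∀ b, f x₀ b ≤ f x₀ y₀)
    (hmin : ∀ a, f x₀ y₀ ≤ ⨆ y', f a y')
    (hne : ∀ x, {y | ∀ y', f x y' ≤ f x y}.Nonempty)
    {κ : ℝ} (hκ : 0 ≤ κ) {N : Set X} (hN : N ∈ nhds x₀)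
    (hLip : ∀ x ∈ N, Metric.infDist y₀ {y | ∀ y', f x y' ≤ f x y} ≤ κ * ‖x - x₀‖) :
    fderiv ℝ (fun x' => f x' y₀) x₀ = 0 := by
  by_contra hg
  set g := fderiv ℝ (fun x' => f x' y₀) x₀ with hgdef
  obtain ⟨v, hv⟩ : ∃ v, 0 < g v := by
    obtain ⟨v0, hv0⟩ : ∃ v0, g v0 ≠ 0 := by
      by_contra h; push_neg at h
      exact hg (ContinuousLinearMap.ext fun w => by simp [h w])
    rcases hv0.lt_or_gt with h | h
    · exact ⟨-v0, by simpa using h⟩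
    · exact ⟨v0, h⟩
  have hvne : v ≠ 0 := fun h => by simp [h] at hv
  have hvpos : (0:ℝ) < ‖v‖ := norm_pos_iff.mpr hvne
  set D := fderiv ℝ (fun p : X × Y => f p.1 p.2) (x₀, y₀) with hDdef
  have hD : HasStrictFDerivAt (fun p : X × Y => f p.1 p.2) D (x₀, y₀) :=
    (hf.contDiffAt).hasStrictFDerivAt one_ne_zero
  have hL : HasFDerivAt (fun x => f x y₀)
      (D.comp ((ContinuousLinearMap.id ℝ X).prod 0)) x₀ :=
    HasFDerivAt.comp (f := fun x : X => (id x, y₀)) x₀ hD.hasFDerivAt ((hasFDerivAt_id (𝕜 := ℝ) x₀).prodMk (hasFDerivAt_const y₀ x₀))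
  have hgv : g v = D (v, 0) := by
    rw [hgdef, hL.fderiv]
    simp
  set ε := g v / (2 * ‖v‖) with hεdef
  have hεpos : 0 < ε := div_pos hv (by positivity)
  have hlo := hD.isLittleO.def hεpos
  rw [Metric.eventually_nhds_iff] at hlo
  obtain ⟨δ, hδpos, hδ⟩ := hlo
  obtain ⟨δ2, hδ2pos, hball⟩ := Metric.mem_nhds_iff.mp hN
  set C := κ * ‖v‖ + ‖v‖ + 1 with hCdef
  have hCpos : 0 < C := by positivity
  set t := min δ δ2 / (2 * C) with htdef
  have htpos : 0 < t := by positivity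
  have htC : t * C < min δ δ2 := by
    rw [htdef]
    rw [div_mul_eq_mul_div, mul_comm]
    rw [div_lt_iff₀ (by positivity)]
    nlinarith [lt_min hδpos hδ2pos]
  have htv : t * ‖v‖ ≤ t * C := by
    have h1 : ‖v‖ ≤ C := by
      rw [hCdef]; have := mul_nonneg hκ hvpos.le; linarith
    exact mul_le_mul_of_nonneg_left h1 htpos.le
  have htκ : κ * (t * ‖v‖) + t ≤ t * C := by
    have h1 : κ * ‖v‖ + 1 ≤ C := by rw [hCdef]; linarith
    have h2 := mul_le_mul_of_nonneg_left h1 htpos.le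
    linarith [h2, mul_add t (κ * ‖v‖) 1, mul_assoc t κ ‖v‖]
    
  set x₁ := x₀ - t • v with hx₁def
  have hx₁ : ‖x₁ - x₀‖ = t * ‖v‖ := by
    rw [hx₁def]
    simp [norm_smul, abs_of_pos htpos]
  have hx₁N : x₁ ∈ N := by
    apply hball
    simp only [Metric.mem_ball, dist_eq_norm]
    calc ‖x₁ - x₀‖ = t * ‖v‖ := hx₁
      _ ≤ t * C := htv
      _ < min δ δ2 := htC
      _ ≤ δ2 := min_le_right _ _
  have hinf : Metric.infDist y₀ {y | ∀ y', f x₁ y' ≤ f x₁ y} < κ * (t * ‖v‖) + t := by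
    calc Metric.infDist y₀ {y | ∀ y', f x₁ y' ≤ f x₁ y} ≤ κ * ‖x₁ - x₀‖ := hLip x₁ hx₁N
      _ = κ * (t * ‖v‖) := by rw [hx₁]
      _ < κ * (t * ‖v‖) + t := by linarith
  obtain ⟨y₁, hy₁S, hy₁d⟩ := (Metric.infDist_lt_iff (hne x₁)).mp hinf
  have hy₁δ : dist y₀ y₁ < δ := by
    calc dist y₀ y₁ < κ * (t * ‖v‖) + t := hy₁d
      _ ≤ t * C := htκ
      _ < min δ δ2 := htC
      _ ≤ δ := min_le_left _ _
  have htvδ : t * ‖v‖ < δ := lt_of_le_of_lt htv (lt_of_lt_of_le htC (min_le_left _ _))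
  -- apply the strict derivative estimate at p = ((x₁,y₁),(x₀,y₁))
  have hdist : dist (((x₁, y₁), (x₀, y₁)) : (X × Y) × (X × Y)) ((x₀, y₀), (x₀, y₀)) < δ := by
    rw [Prod.dist_eq]
    apply max_lt <;> rw [Prod.dist_eq] <;> apply max_lt
    · rwa [dist_eq_norm, hx₁]
    · rwa [dist_comm]
    · simpa using hδpos
    · rwa [dist_comm]
  have hest := hδ hdist
  simp only at hest
  have hsub : ((x₁, y₁) : X × Y) - (x₀, y₁) = (-t) • ((v, 0) : X × Y) := by
    rw [Prod.mk_sub_mk]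
    rw [hx₁def]
    simp [Prod.smul_mk, neg_smul, sub_eq_iff_eq_add]
  have hnorm : ‖((x₁, y₁) : X × Y) - (x₀, y₁)‖ = t * ‖v‖ := by
    rw [hsub, norm_smul]
    simp [Prod.norm_def, abs_of_pos htpos]
  have hDval : D (((x₁, y₁) : X × Y) - (x₀, y₁)) = -(t * g v) := by
    rw [hsub, map_smul, hgv]
    simp [neg_smul, smul_eq_mul]
  rw [hDval, hnorm] at hest
  have hεt : ε * (t * ‖v‖) = t * g v / 2 := by
    rw [hεdef]
    field_simp
  have hkey : f x₁ y₁ ≤ f x₀ y₁ - t * g v / 2 := by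
    have := abs_le.mp (by simpa using hest)
    have h1 := this.2
    rw [hεt] at h1
    linarith
  have hchain1 : f x₀ y₀ ≤ f x₁ y₁ := by
    calc f x₀ y₀ ≤ ⨆ y', f x₁ y' := hmin x₁
      _ ≤ f x₁ y₁ := ciSup_le hy₁S
  have hchain2 : f x₀ y₁ ≤ f x₀ y₀ := hmax y₁
  nlinarith

/-- Under local inner Lipschitz continuity of the best response maps, every minimax point
and every maximin point of an invex-incave minimax problem is a saddle point:
`E = M̲ = M̄`. -/
theorem minimax_eq_saddle_of_innerLipschitz {nx ny : ℕ}
    (f : EuclideanSpace ℝ (Fin nx) → EuclideanSpace ℝ (Fin ny) → ℝ)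
    (hf : ContDiff ℝ 1 (fun p : EuclideanSpace ℝ (Fin nx) × EuclideanSpace ℝ (Fin ny) =>
      f p.1 p.2))
    (hinvex : ∀ y x, fderiv ℝ (fun x' => f x' y) x = 0 → ∀ x', f x y ≤ f x' y)
    (hincave : ∀ x y, fderiv ℝ (fun y' => f x y') y = 0 → ∀ y', f x y' ≤ f x y)
    (hinc : ∀ y x, ∃ K : Set (EuclideanSpace ℝ (Fin nx)),
      IsCompact K ∧ ∀ z ∉ K, f x y < f z y)
    (hdec : ∀ x y, ∃ K : Set (EuclideanSpace ℝ (Fin ny)),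
      IsCompact K ∧ ∀ z ∉ K, f x z < f x y)
    (Mlo Mhi E : Set (EuclideanSpace ℝ (Fin nx) × EuclideanSpace ℝ (Fin ny)))
    (hMlo : Mlo = {p | (∀ b, f p.1 b ≤ f p.1 p.2) ∧ ∀ a, f p.1 p.2 ≤ ⨆ y', f a y'})
    (hMhi : Mhi = {p | (∀ a, f p.1 p.2 ≤ f a p.2) ∧ ∀ b, (⨅ x', f x' b) ≤ f p.1 p.2})
    (hE : E = {p | (∀ b, f p.1 b ≤ f p.1 p.2) ∧ ∀ a, f p.1 p.2 ≤ f a p.2})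
    -- local inner Lipschitz continuity of BR_y at every minimax point:
    (hLipY : ∀ p ∈ Mlo, ∃ κ : ℝ, 0 ≤ κ ∧ ∃ N ∈ nhds p.1, ∀ x ∈ N,
      Metric.infDist p.2 {y | ∀ y', f x y' ≤ f x y} ≤ κ * ‖x - p.1‖)
    -- local inner Lipschitz continuity of BR_x at every maximin point:
    (hLipX : ∀ p ∈ Mhi, ∃ κ : ℝ, 0 ≤ κ ∧ ∃ N ∈ nhds p.2, ∀ y ∈ N,
      Metric.infDist p.1 {x | ∀ x', f x y ≤ f x' y} ≤ κ * ‖y - p.2‖) :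
    E = Mlo ∧ E = Mhi := by
  -- existence of global maximizers in `y` and global minimizers in `x`
  have hneY : ∀ x, {y | ∀ y', f x y' ≤ f x y}.Nonempty := by
    intro x
    obtain ⟨K, hK, hKlt⟩ := hdec x 0
    obtain ⟨ym, hym⟩ := aux_exists_max (hf.continuous.comp (Continuous.prodMk_right x)) hK 0 hKlt
    exact ⟨ym, hym⟩
  have hneX : ∀ y, {x | ∀ x', f x y ≤ f x' y}.Nonempty := by
    intro y
    obtain ⟨K, hK, hKlt⟩ := hinc y 0
    obtain ⟨xm, hxm⟩ := aux_exists_max (φ := fun x => -(f x y))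
      (hf.continuous.comp (continuous_id.prodMk continuous_const)).neg hK 0
      (fun z hz => neg_lt_neg (hKlt z hz))
    exact ⟨xm, fun x' => by have := hxm x'; linarith⟩
  have hbddY : ∀ a, BddAbove (Set.range fun y' => f a y') := by
    intro a
    obtain ⟨ym, hym⟩ := hneY a
    exact ⟨f a ym, by rintro _ ⟨y, rfl⟩; exact hym y⟩
  have hbddX : ∀ b, BddBelow (Set.range fun x' => f x' b) := by
    intro b
    obtain ⟨xm, hxm⟩ := hneX b
    exact ⟨f xm b, by rintro _ ⟨x, rfl⟩; exact hxm x⟩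
  subst hMlo hMhi hE
  constructor
  · apply Set.Subset.antisymm
    · rintro p ⟨h1, h2⟩
      exact ⟨h1, fun a => le_trans (h2 a) (le_ciSup (hbddY a) p.2)⟩
    · rintro p hp
      have h1 := hp.1
      have h2 := hp.2
      obtain ⟨κ, hκ, N, hN, hLip⟩ := hLipY p hp
      have h0 := aux_key f hf p.1 p.2 h1 h2 hneY hκ hN hLip
      exact ⟨h1, hinvex p.2 p.1 h0⟩
  · apply Set.Subset.antisymm
    · rintro p ⟨h1, h2⟩
      exact ⟨h2, fun b => le_trans (ciInf_le (hbddX b) p.1) (h1 b)⟩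
    · rintro p hp
      have h1 := hp.1
      have h2 := hp.2
      -- apply the key lemma to `g y x := -f x y`
      set g : EuclideanSpace ℝ (Fin ny) → EuclideanSpace ℝ (Fin nx) → ℝ :=
        fun y x => -f x y with hgdef
      have hg : ContDiff ℝ 1 fun p : EuclideanSpace ℝ (Fin ny) × EuclideanSpace ℝ (Fin nx) =>
          g p.1 p.2 := (hf.comp (contDiff_snd.prodMk contDiff_fst)).neg
      have hmax' : ∀ b, g p.2 b ≤ g p.2 p.1 := fun b => neg_le_neg (h1 b)
      have hne' : ∀ y, {x | ∀ x', g y x' ≤ g y x}.Nonempty := by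
        intro y
        obtain ⟨xm, hxm⟩ := hneX y
        exact ⟨xm, fun x' => neg_le_neg (hxm x')⟩
      have hmin' : ∀ a, g p.2 p.1 ≤ ⨆ x', g a x' := by
        intro a
        obtain ⟨xm, hxm⟩ := hneX a
        have hinfeq : (⨅ x', f x' a) = f xm a :=
          le_antisymm (ciInf_le (hbddX a) xm) (le_ciInf hxm)
        have hb : BddAbove (Set.range fun x' => g a x') :=
          ⟨g a xm, by rintro _ ⟨x, rfl⟩; exact neg_le_neg (hxm x)⟩
        calc g p.2 p.1 = -(f p.1 p.2) := rfl
          _ ≤ -(⨅ x', f x' a) := neg_le_neg (h2 a)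
          _ = g a xm := by rw [hinfeq]
          _ ≤ ⨆ x', g a x' := le_ciSup hb xm
      obtain ⟨κ, hκ, N, hN, hLip⟩ := hLipX p hp
      have hLip' : ∀ y ∈ N, Metric.infDist p.1 {x | ∀ x', g y x' ≤ g y x} ≤ κ * ‖y - p.2‖ := by
        intro y hy
        have hseteq : {x | ∀ x', g y x' ≤ g y x} = {x | ∀ x', f x y ≤ f x' y} := by
          ext x
          simp only [hgdef, Set.mem_setOf_eq, neg_le_neg_iff]
        rw [hseteq]
        exact hLip y hy
      have h0 := aux_key g hg p.2 p.1 hmax' hmin' hne' hκ hN hLip'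
      have h0' : fderiv ℝ (fun y' => f p.1 y') p.2 = 0 := by
        have : fderiv ℝ (fun y' => -f p.1 y') p.2 = 0 := h0
        rw [fderiv_fun_neg] at this
        exact neg_eq_zero.mp this
      exact ⟨hincave p.1 p.2 h0', h1⟩
end
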